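/- arXiv:0706.2421 — 5 statements merged into one kernel-verified Lean document; each statement's English description precedes it below -/
import Mathlib

section
/- Fix an integer n ≥ 3 and define φₙ : ℕ+ → ℕ by φₙ(m) = 2^m − 1 for 1 ≤ m ≤ n−1 and φₙ(n+k) = ∑_{j=1}^{n-1} φₙ(n+k−j) for all k ≥ 0. Then for every positive integer m, ∑_{d | m} μ(m/d) φₙ(d) ≡ 0 (mod m). -/
namespace Stmt5
open Finset

def okw (k q : ℕ) (S : Finset ℕ) : Prop :=
  ∀ i : ℕ, i + k ≤ q → ∃ j : ℕ, j < k ∧ i + j ∈ S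

instance (k q : ℕ) : DecidablePred (okw k q) := fun S => by
  unfold okw
  have : (∀ i : ℕ, i + k ≤ q → ∃ j : ℕ, j < k ∧ i + j ∈ S) ↔
      (∀ i < q + 1, i + k ≤ q → ∃ j : ℕ, j < k ∧ i + j ∈ S) := by
    constructor
    · intro h i _ hik; exact h i hik
    · intro h i hik; exact h i (by omega) hik
  exact decidable_of_iff' _ this

def fw (k q : ℕ) : Finset (Finset ℕ) :=
  (Finset.range q).powerset.filter (okw k q)

def fcount (k q : ℕ) : ℕ := (fw k q).card

lemma mem_fw {k q : ℕ} {S : Finset ℕ} :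
    S ∈ fw k q ↔ S ⊆ Finset.range q ∧ okw k q S := by
  simp [fw, Finset.mem_filter, Finset.mem_powerset]


lemma fcount_small {k q : ℕ} (h : q < k) : fcount k q = 2 ^ q := by
  have : fw k q = (Finset.range q).powerset := by
    apply Finset.filter_true_of_mem
    intro S _ i hik
    omega
  rw [fcount, this, Finset.card_powerset, Finset.card_range]

noncomputable def mins (S : Finset ℕ) : ℕ := if h : S.Nonempty then S.min' h else 0

lemma mins_mem {S : Finset ℕ} (h : S.Nonempty) : mins S ∈ S := by
  rw [mins, dif_pos h]; exact S.min'_mem h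

lemma mins_le {S : Finset ℕ} {a : ℕ} (ha : a ∈ S) : mins S ≤ a := by
  rw [mins, dif_pos ⟨a, ha⟩]; exact S.min'_le a ha

lemma fw_nonempty_mem {k q : ℕ} {S : Finset ℕ} (hk : 0 < k) (h : k ≤ q) (hS : S ∈ fw k q) :
    S.Nonempty ∧ mins S < k := by
  obtain ⟨j, hj, hjS⟩ := (mem_fw.mp hS).2 0 (by omega)
  simp only [zero_add] at hjS
  refine ⟨⟨j, hjS⟩, lt_of_le_of_lt (mins_le hjS) hj⟩

lemma fcount_rec {k q : ℕ} (hk : 0 < k) (h : k ≤ q) :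
    fcount k q = ∑ a ∈ range k, fcount k (q - 1 - a) := by
  classical
  have hpart : (fw k q).card = ∑ a ∈ range k, ((fw k q).filter (fun S => mins S = a)).card := by
    apply card_eq_sum_card_fiberwise
    intro S hS
    exact mem_range.mpr (fw_nonempty_mem hk h hS).2
  rw [fcount, hpart]
  apply Finset.sum_congr rfl
  intro a ha
  rw [mem_range] at ha
  apply Finset.card_nbij' (fun S => (S.erase a).image (fun x => x - (a+1)))
      (fun T => insert a (T.image (fun x => x + (a+1))))
  · -- maps into fw k (q-1-a)
    intro S hS
    rw [Finset.mem_coe, Finset.mem_filter] at hS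
    obtain ⟨hS, hmin⟩ := hS
    rw [mem_fw] at hS; rw [Finset.mem_coe, mem_fw]
    obtain ⟨hsub, hok⟩ := hS
    have hgt : ∀ x ∈ S.erase a, a + 1 ≤ x := by
      intro x hx
      rw [Finset.mem_erase] at hx
      have := mins_le hx.2
      omega
    constructor
    · intro y hy
      rw [Finset.mem_image] at hy
      obtain ⟨x, hx, rfl⟩ := hy
      have h1 := hgt x hx
      have h2 : x < q := by
        have := hsub (Finset.mem_erase.mp hx).2
        rwa [Finset.mem_range] at this
      rw [Finset.mem_range]
      omega
    · intro i hi
      obtain ⟨j, hj, hjS⟩ := hok (i + a + 1) (by omega)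
      refine ⟨j, hj, ?_⟩
      rw [Finset.mem_image]
      refine ⟨i + a + 1 + j, ?_, by omega⟩
      rw [Finset.mem_erase]
      exact ⟨by omega, hjS⟩
  · -- reverse maps into fiber
    intro T hT
    rw [Finset.mem_coe, mem_fw] at hT
    obtain ⟨hsub, hok⟩ := hT
    have hTmem : ∀ x ∈ T.image (fun x => x + (a+1)), a + 1 ≤ x ∧ x < q := by
      intro x hx
      rw [Finset.mem_image] at hx
      obtain ⟨y, hy, rfl⟩ := hx
      have := hsub hy
      rw [Finset.mem_range] at this
      omega
    rw [Finset.mem_coe, Finset.mem_filter, mem_fw]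
    refine ⟨⟨?_, ?_⟩, ?_⟩
    · intro x hx
      rw [Finset.mem_insert] at hx
      rw [Finset.mem_range]
      rcases hx with rfl | hx
      · omega
      · exact (hTmem x hx).2
    · intro i hi
      rcases le_or_gt i a with hia | hia
      · exact ⟨a - i, by omega, by rw [Finset.mem_insert]; left; omega⟩
      · obtain ⟨j, hj, hjT⟩ := hok (i - (a+1)) (by omega)
        refine ⟨j, hj, ?_⟩
        rw [Finset.mem_insert]
        right
        rw [Finset.mem_image]
        exact ⟨i - (a+1) + j, hjT, by omega⟩
    · -- min = a
      have hamem : a ∈ insert a (T.image (fun x => x + (a+1))) := Finset.mem_insert_self _ _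
      have h1 := mins_le hamem
      have h2 : mins (insert a (T.image fun x => x + (a+1))) ∈ _ :=
        mins_mem ⟨a, hamem⟩
      rw [Finset.mem_insert] at h2
      rcases h2 with h2 | h2
      · exact h2
      · have := (hTmem _ h2).1; omega
  · -- left inverse
    intro S hS
    rw [Finset.mem_coe, Finset.mem_filter] at hS
    obtain ⟨hSfw, hmin⟩ := hS
    have hne := (fw_nonempty_mem hk h hSfw).1
    have hamem : a ∈ S := hmin ▸ mins_mem hne
    have hgt : ∀ x ∈ S.erase a, a + 1 ≤ x := fun x hx => by
      rw [Finset.mem_erase] at hx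
      have h1 := mins_le hx.2
      have h2 := hx.1
      omega
    ext x
    simp only [Finset.mem_insert, Finset.mem_image]
    constructor
    · rintro (rfl | ⟨y, ⟨z, hz, rfl⟩, rfl⟩)
      · exact hamem
      · have hz1 := hgt z hz
        have hz2 : z - (a+1) + (a+1) = z := by omega
        rw [hz2]
        exact (Finset.mem_erase.mp hz).2
    · intro hx
      rcases eq_or_ne x a with rfl | hxa
      · left; rfl
      · right
        refine ⟨x - (a+1), ⟨x, Finset.mem_erase.mpr ⟨hxa, hx⟩, rfl⟩, ?_⟩
        have := hgt x (Finset.mem_erase.mpr ⟨hxa, hx⟩)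
        omega
  · -- right inverse
    intro T _
    ext x
    simp only [Finset.mem_image, Finset.mem_erase, Finset.mem_insert]
    constructor
    · rintro ⟨y, ⟨hya, (rfl | ⟨z, hz, rfl⟩)⟩, rfl⟩
      · exact absurd rfl hya
      · have : z + (a+1) - (a+1) = z := by omega
        rwa [this]
    · intro hx
      exact ⟨x + (a+1), ⟨by omega, Or.inr ⟨x, hx, rfl⟩⟩, by omega⟩

/-! ### cyclic model -/

def okc (k : ℕ) {m : ℕ} (f : ZMod m → Bool) : Prop :=
  ∀ i : ZMod m, ∃ j : ℕ, j < k ∧ f (i + (j : ZMod m)) = false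

instance (k m : ℕ) [NeZero m] : DecidablePred (okc k (m := m)) := fun f =>
  inferInstanceAs (Decidable (∀ i : ZMod m, ∃ j : ℕ, j < k ∧ f (i + (j : ZMod m)) = false))

def Xs (k m : ℕ) [NeZero m] : Finset (ZMod m → Bool) :=
  univ.filter (okc k)

lemma natCast_val_self {m : ℕ} [NeZero m] (x : ZMod m) : ((x.val : ℕ) : ZMod m) = x := by
  rw [ZMod.natCast_val, ZMod.cast_id]

/-- first index `t < m` with `g t = false` -/
noncomputable def nfirst (m : ℕ) (g : ℕ → Bool) : ℕ :=
  mins ((range m).filter (fun t => g t = false))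

lemma nfirst_spec {m : ℕ} {g : ℕ → Bool} (h : ∃ t, t < m ∧ g t = false) :
    nfirst m g < m ∧ g (nfirst m g) = false ∧ ∀ t < nfirst m g, g t = true := by
  unfold nfirst
  obtain ⟨t, ht, hgt⟩ := h
  have hne : ((range m).filter (fun t => g t = false)).Nonempty :=
    ⟨t, by simp [Finset.mem_filter, ht, hgt]⟩
  have hmem := mins_mem hne
  rw [Finset.mem_filter, Finset.mem_range] at hmem
  refine ⟨hmem.1, hmem.2, fun t' ht' => ?_⟩
  by_contra hc
  have : g t' = false := by revert hc; cases g t' <;> simp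
  have : t' ∈ (range m).filter (fun t => g t = false) := by
    rw [Finset.mem_filter, Finset.mem_range]
    exact ⟨by omega, this⟩
  have := mins_le this
  omega

lemma nfirst_unique {g : ℕ → Bool} {a b : ℕ}
    (ha : g a = false ∧ ∀ t < a, g t = true)
    (hb : g b = false ∧ ∀ t < b, g t = true) : a = b := by
  rcases lt_trichotomy a b with h | h | h
  · have := hb.2 a h; rw [ha.1] at this; exact absurd this (by simp)
  · exact h
  · have := ha.2 b h; rw [hb.1] at this; exact absurd this (by simp)

noncomputable def sfun {m : ℕ} (f : ZMod m → Bool) : ℕ :=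
  nfirst m (fun t => f ((t : ℕ) : ZMod m))

noncomputable def ufun {m : ℕ} (f : ZMod m → Bool) : ℕ :=
  nfirst m (fun t => f (((m - 1 - t : ℕ) : ZMod m)))

lemma exists_false_of_okc {k m : ℕ} [NeZero m] {f : ZMod m → Bool} (hk : 0 < k)
    (hf : okc k f) : ∃ t, t < m ∧ f ((t : ℕ) : ZMod m) = false := by
  obtain ⟨j, _, hj⟩ := hf 0
  rw [zero_add] at hj
  refine ⟨((j : ℕ) : ZMod m).val, ZMod.val_lt _, ?_⟩
  rwa [natCast_val_self]

lemma exists_ufalse_of_okc {k m : ℕ} [NeZero m] {f : ZMod m → Bool} (hk : 0 < k)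
    (hf : okc k f) : ∃ t, t < m ∧ f (((m - 1 - t : ℕ) : ZMod m)) = false := by
  obtain ⟨t, ht, hft⟩ := exists_false_of_okc hk hf
  exact ⟨m - 1 - t, by omega, by rwa [show m - 1 - (m - 1 - t) = t by omega]⟩

/-- the decoding map -/
def dec (m s u : ℕ) (S : Finset ℕ) : ZMod m → Bool := fun x =>
  if x.val < s then true
  else if x.val = s then false
  else if x.val < m - 1 - u then (if x.val - s - 1 ∈ S then false else true)
  else if x.val = m - 1 - u then false
  else true

/-- the encoding map -/
def enc (m s u : ℕ) (f : ZMod m → Bool) : Finset ℕ :=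
  (range (m - s - u - 2)).filter (fun t => f ((s + 1 + t : ℕ) : ZMod m) = false)

lemma dec_apply (m s u : ℕ) [NeZero m] (S : Finset ℕ) (w : ℕ) (hw : w < m) :
    dec m s u S ((w : ℕ) : ZMod m) =
      (if w < s then true
       else if w = s then false
       else if w < m - 1 - u then (if w - s - 1 ∈ S then false else true)
       else if w = m - 1 - u then false
       else true) := by
  unfold dec
  rw [ZMod.val_natCast_of_lt hw]

lemma cast_add_cast {m : ℕ} (v j : ℕ) :
    ((v : ℕ) : ZMod m) + ((j : ℕ) : ZMod m) = ((v + j : ℕ) : ZMod m) := by push_cast; ring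

lemma cast_wrap {m : ℕ} (w : ℕ) : ((m + w : ℕ) : ZMod m) = ((w : ℕ) : ZMod m) := by
  push_cast; simp

lemma sfun_spec {k m : ℕ} [NeZero m] {f : ZMod m → Bool} (hk : 0 < k) (hf : okc k f) :
    sfun f < m ∧ f ((sfun f : ℕ) : ZMod m) = false ∧
      ∀ t < sfun f, f ((t : ℕ) : ZMod m) = true :=
  nfirst_spec (exists_false_of_okc hk hf)

lemma ufun_spec {k m : ℕ} [NeZero m] {f : ZMod m → Bool} (hk : 0 < k) (hf : okc k f) :
    ufun f < m ∧ f (((m - 1 - ufun f : ℕ) : ZMod m)) = false ∧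
      ∀ t < ufun f, f (((m - 1 - t : ℕ) : ZMod m)) = true :=
  nfirst_spec (exists_ufalse_of_okc hk hf)

lemma key_window {k m : ℕ} [NeZero m] {f : ZMod m → Bool} (hk : 0 < k) (hm : k + 1 ≤ m)
    (hf : okc k f) : sfun f + ufun f + 1 ≤ k := by
  obtain ⟨hs1, hs2, hs3⟩ := sfun_spec hk hf
  obtain ⟨hu1, hu2, hu3⟩ := ufun_spec hk hf
  set s := sfun f
  set u := ufun f
  obtain ⟨j, hj, hjf⟩ := hf (((m - u : ℕ) : ZMod m))
  rw [cast_add_cast] at hjf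
  rcases lt_or_ge j u with hju | hju
  · exfalso
    have he : m - u + j = m - 1 - (u - 1 - j) := by omega
    rw [he, hu3 (u - 1 - j) (by omega)] at hjf
    simp at hjf
  · have he : m - u + j = m + (j - u) := by omega
    rw [he, cast_wrap] at hjf
    have : ¬ (j - u < s) := by
      intro hc
      rw [hs3 _ hc] at hjf
      simp at hjf
    omega

lemma enc_mem_fw {k m : ℕ} [NeZero m] {f : ZMod m → Bool} (hf : okc k f) (s u : ℕ) :
    enc m s u f ∈ fw k (m - s - u - 2) := by
  rw [mem_fw]
  refine ⟨Finset.filter_subset _ _, ?_⟩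
  intro i hik
  obtain ⟨j, hj, hjf⟩ := hf ((s + 1 + i : ℕ) : ZMod m)
  rw [cast_add_cast] at hjf
  refine ⟨j, hj, ?_⟩
  rw [enc, Finset.mem_filter, Finset.mem_range]
  refine ⟨by omega, ?_⟩
  rwa [show s + 1 + (i + j) = s + 1 + i + j by omega]

lemma dec_okc {k m : ℕ} [NeZero m] (hk : 0 < k) (hm : k + 1 ≤ m) {s u : ℕ}
    (hsu : s + u + 1 ≤ k) {S : Finset ℕ} (hS : S ∈ fw k (m - s - u - 2)) :
    okc k (dec m s u S) := by
  obtain ⟨hSsub, hSok⟩ := mem_fw.mp hS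
  set L := m - s - u - 2 with hL
  intro i
  obtain ⟨v, hv, rfl⟩ : ∃ v, v < m ∧ i = ((v : ℕ) : ZMod m) :=
    ⟨i.val, ZMod.val_lt i, (natCast_val_self i).symm⟩
  rcases le_or_gt v s with hvs | hvs
  · refine ⟨s - v, by omega, ?_⟩
    rw [cast_add_cast, show v + (s - v) = s by omega,
      dec_apply m s u S s (by omega), if_neg (by omega), if_pos rfl]
  rcases lt_or_ge v (m - 1 - u) with hvu | hvu
  · rcases le_or_gt (v - s - 1 + k) L with hik | hik
    · obtain ⟨j, hj, hjS⟩ := hSok (v - s - 1) hik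
      refine ⟨j, hj, ?_⟩
      rw [cast_add_cast, dec_apply m s u S (v + j) (by omega),
        if_neg (by omega), if_neg (by omega), if_pos (by omega),
        if_pos (by rwa [show v + j - s - 1 = v - s - 1 + j by omega])]
    · refine ⟨m - 1 - u - v, by omega, ?_⟩
      rw [cast_add_cast, show v + (m - 1 - u - v) = m - 1 - u by omega,
        dec_apply m s u S (m - 1 - u) (by omega),
        if_neg (by omega), if_neg (by omega), if_neg (by omega), if_pos rfl]
  rcases eq_or_lt_of_le hvu with hveq | hvgt
  · refine ⟨0, hk, ?_⟩
    rw [cast_add_cast, Nat.add_zero, dec_apply m s u S v hv,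
      if_neg (by omega), if_neg (by omega), if_neg (by omega), if_pos hveq.symm]
  · refine ⟨m - v + s, by omega, ?_⟩
    rw [cast_add_cast, show v + (m - v + s) = m + s by omega, cast_wrap,
      dec_apply m s u S s (by omega), if_neg (by omega), if_pos rfl]

lemma card_Xs_eq {k m : ℕ} [NeZero m] (hk : 0 < k) (hm : k + 1 ≤ m) :
    (Xs k m).card = ∑ p ∈ ((range k ×ˢ range k).filter (fun p => p.1 + p.2 + 1 ≤ k)),
      fcount k (m - p.1 - p.2 - 2) := by
  classical
  simp only [fcount]
  rw [← Finset.card_sigma]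
  apply Finset.card_nbij' (fun f => ⟨(sfun f, ufun f), enc m (sfun f) (ufun f) f⟩)
      (fun q => dec m q.1.1 q.1.2 q.2)
  · -- forward maps into sigma
    intro f hf
    simp only [Finset.mem_coe, Xs, Finset.mem_filter] at hf
    have hok := hf.2
    have hwin := key_window hk hm hok
    rw [Finset.mem_coe, Finset.mem_sigma]
    dsimp only
    constructor
    · rw [Finset.mem_filter, Finset.mem_product, Finset.mem_range, Finset.mem_range]
      exact ⟨⟨by omega, by omega⟩, hwin⟩
    · exact enc_mem_fw hok _ _
  · -- backward maps into Xs
    rintro ⟨⟨s, u⟩, S⟩ hq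
    rw [Finset.mem_coe, Finset.mem_sigma, Finset.mem_filter, Finset.mem_product] at hq
    dsimp only at hq
    rw [Finset.mem_coe, Xs, Finset.mem_filter]
    exact ⟨Finset.mem_univ _, dec_okc hk hm hq.1.2 hq.2⟩
  · -- left inverse : dec (enc f) = f
    intro f hf; dsimp only
    simp only [Finset.mem_coe, Xs, Finset.mem_filter] at hf
    have hok := hf.2
    obtain ⟨hs1, hs2, hs3⟩ := sfun_spec hk hok
    obtain ⟨hu1, hu2, hu3⟩ := ufun_spec hk hok
    have hwin := key_window hk hm hok
    set s := sfun f
    set u := ufun f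
    set L := m - s - u - 2 with hL
    funext x
    obtain ⟨v, hv, rfl⟩ : ∃ v, v < m ∧ x = ((v : ℕ) : ZMod m) :=
      ⟨x.val, ZMod.val_lt x, (natCast_val_self x).symm⟩
    rw [dec_apply m s u _ v hv]
    by_cases h1 : v < s
    · rw [if_pos h1]; exact (hs3 v h1).symm
    rw [if_neg h1]
    by_cases h2 : v = s
    · rw [if_pos h2, h2]; exact hs2.symm
    rw [if_neg h2]
    by_cases h3 : v < m - 1 - u
    · rw [if_pos h3]
      have hiff : (v - s - 1 ∈ enc m s u f) ↔ f ((v : ℕ) : ZMod m) = false := by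
        rw [enc, Finset.mem_filter, Finset.mem_range]
        rw [show s + 1 + (v - s - 1) = v by omega]
        constructor
        · exact fun h => h.2
        · exact fun h => ⟨by omega, h⟩
      cases hfv : f ((v : ℕ) : ZMod m)
      · rw [if_pos (hiff.mpr hfv)]
      · rw [if_neg (fun hc => by rw [hiff.mp hc] at hfv; exact Bool.noConfusion hfv)]
    rw [if_neg h3]
    by_cases h4 : v = m - 1 - u
    · rw [if_pos h4, h4]; exact hu2.symm
    · rw [if_neg h4]
      have ht : m - 1 - v < u := by omega
      have := hu3 _ ht
      rw [show m - 1 - (m - 1 - v) = v by omega] at this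
      exact this.symm
  · -- right inverse
    rintro ⟨⟨s, u⟩, S⟩ hq
    rw [Finset.mem_coe, Finset.mem_sigma, Finset.mem_filter, Finset.mem_product, Finset.mem_range,
      Finset.mem_range] at hq
    dsimp only at hq ⊢
    obtain ⟨⟨⟨hsk, huk⟩, hsu⟩, hS⟩ := hq
    obtain ⟨hSsub, hSok⟩ := mem_fw.mp hS
    set L := m - s - u - 2 with hL
    set g := dec m s u S with hg
    have hsm : s < m := by omega
    have hum : u < m := by omega
    have hgs : ∀ t, t < m → (g ((t : ℕ) : ZMod m) = false ↔
        (t = s ∨ t = m - 1 - u ∨ (s < t ∧ t < m - 1 - u ∧ t - s - 1 ∈ S))) := by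
      intro t ht
      rw [hg, dec_apply m s u S t ht]
      by_cases cS : t - s - 1 ∈ S
      · split_ifs <;> simp [cS] <;> omega
      · split_ifs <;> simp [cS] <;> omega
    have hspec_s : g ((s : ℕ) : ZMod m) = false ∧
        ∀ t < s, g ((t : ℕ) : ZMod m) = true := by
      constructor
      · rw [hgs s hsm]; left; rfl
      · intro t hts
        have htm : t < m := by omega
        by_contra hc
        have hfalse : g ((t : ℕ) : ZMod m) = false := by
          revert hc; cases (g ((t : ℕ) : ZMod m)) <;> simp
        rw [hgs t htm] at hfalse
        rcases hfalse with h | h | h <;> omega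
    have hspec_u : g (((m - 1 - u : ℕ)) : ZMod m) = false ∧
        ∀ t < u, g (((m - 1 - t : ℕ)) : ZMod m) = true := by
      constructor
      · rw [hgs (m - 1 - u) (by omega)]; right; left; rfl
      · intro t htu
        by_contra hc
        have hfalse : g (((m - 1 - t : ℕ)) : ZMod m) = false := by
          revert hc; cases (g (((m - 1 - t : ℕ)) : ZMod m)) <;> simp
        rw [hgs (m - 1 - t) (by omega)] at hfalse
        rcases hfalse with h | h | h <;> omega
    have hsfun : sfun g = s := by
      have hspec := nfirst_spec (m := m) (g := fun t => g ((t : ℕ) : ZMod m))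
        ⟨s, hsm, hspec_s.1⟩
      exact nfirst_unique ⟨hspec.2.1, hspec.2.2⟩ hspec_s
    have hufun : ufun g = u := by
      have hspec := nfirst_spec (m := m) (g := fun t => g (((m - 1 - t : ℕ)) : ZMod m))
        ⟨u, hum, hspec_u.1⟩
      exact nfirst_unique ⟨hspec.2.1, hspec.2.2⟩ hspec_u
    have hencg : enc m s u g = S := by
      ext t
      rw [enc, Finset.mem_filter, Finset.mem_range]
      constructor
      · rintro ⟨htL, hfalse⟩
        rw [hgs (s + 1 + t) (by omega)] at hfalse
        rcases hfalse with h | h | ⟨hx1, hx2, hx3⟩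
        · omega
        · omega
        · rwa [show s + 1 + t - s - 1 = t by omega] at hx3
      · intro htS
        have htL : t < L := by
          have := hSsub htS
          rwa [Finset.mem_range] at this
        refine ⟨htL, ?_⟩
        rw [hgs (s + 1 + t) (by omega)]
        right; right
        refine ⟨by omega, by omega, ?_⟩
        rwa [show s + 1 + t - s - 1 = t by omega]
    rw [hsfun, hufun, hencg]

lemma card_Xs_small {k m : ℕ} [NeZero m] (h1 : 1 ≤ m) (h2 : m ≤ k) :
    (Xs k m).card = 2 ^ m - 1 := by
  classical
  have hXs : Xs k m = univ \ {fun _ => true} := by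
    ext f
    simp only [Xs, Finset.mem_filter, Finset.mem_univ, true_and, Finset.mem_sdiff,
      Finset.mem_singleton]
    constructor
    · intro hok hc
      obtain ⟨j, _, hj⟩ := hok 0
      rw [hc] at hj
      exact Bool.noConfusion hj
    · intro hne i
      have hex : ∃ x : ZMod m, f x = false := by
        by_contra hc
        push_neg at hc
        apply hne
        funext x
        have := hc x
        revert this
        cases f x <;> simp
      obtain ⟨x, hx⟩ := hex
      refine ⟨(x - i).val, lt_of_lt_of_le (ZMod.val_lt _) h2, ?_⟩
      rw [natCast_val_self, add_sub_cancel]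
      exact hx
  rw [hXs, Finset.card_sdiff_of_subset (by simp), Finset.card_singleton, Finset.card_univ]
  rw [Fintype.card_fun, ZMod.card, Fintype.card_bool]

/-! ### shift-periods -/

def fixedby {m : ℕ} (t : ℕ) (f : ZMod m → Bool) : Prop :=
  ∀ i : ZMod m, f (i + ((t : ℕ) : ZMod m)) = f i

instance (t m : ℕ) [NeZero m] : DecidablePred (fixedby t (m := m)) := fun f =>
  inferInstanceAs (Decidable (∀ i : ZMod m, f (i + ((t : ℕ) : ZMod m)) = f i))

lemma fixedby_self {m : ℕ} (f : ZMod m → Bool) : fixedby m f := by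
  intro i
  rw [ZMod.natCast_self, add_zero]

lemma fixedby_mul {m : ℕ} {a : ℕ} {f : ZMod m → Bool} (ha : fixedby a f) (c : ℕ) :
    fixedby (a * c) f := by
  induction c with
  | zero => intro i; simp
  | succ c ih =>
      intro i
      have h1 : ((a * (c+1) : ℕ) : ZMod m) = ((a * c : ℕ) : ZMod m) + ((a : ℕ) : ZMod m) := by
        push_cast; ring
      rw [h1, ← add_assoc, ha (i + ((a * c : ℕ) : ZMod m)), ih i]

lemma fixedby_mod {m : ℕ} {a b : ℕ} {f : ZMod m → Bool} (ha : fixedby a f)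
    (hb : fixedby b f) : fixedby (a % b) f := by
  intro i
  have h1 := fixedby_mul hb (a / b) (i + ((a % b : ℕ) : ZMod m))
  have h2 : (i + ((a % b : ℕ) : ZMod m)) + ((b * (a / b) : ℕ) : ZMod m) = i + ((a : ℕ) : ZMod m) := by
    rw [add_assoc, cast_add_cast, Nat.mod_add_div]
  rw [h2] at h1
  rw [← h1, ha i]

lemma fixedby_gcd {m : ℕ} {f : ZMod m → Bool} :
    ∀ {a b : ℕ}, fixedby a f → fixedby b f → fixedby (Nat.gcd a b) f := by
  intro a b
  induction a, b using Nat.gcd.induction with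
  | H0 b => intro _ hb; rwa [Nat.gcd_zero_left]
  | H1 a b ha ih =>
      intro haf hbf
      rw [Nat.gcd_rec]
      exact ih (fixedby_mod hbf haf) haf

def perS {m : ℕ} [NeZero m] (f : ZMod m → Bool) : Finset ℕ :=
  (Finset.Icc 1 m).filter (fun t => fixedby t f)

noncomputable def per {m : ℕ} [NeZero m] (f : ZMod m → Bool) : ℕ := mins (perS f)

lemma per_spec {m : ℕ} [NeZero m] (f : ZMod m → Bool) :
    1 ≤ per f ∧ per f ≤ m ∧ fixedby (per f) f := by
  have hmem : m ∈ perS f := by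
    rw [perS, Finset.mem_filter, Finset.mem_Icc]
    exact ⟨⟨Nat.one_le_iff_ne_zero.mpr (NeZero.ne m), le_refl m⟩, fixedby_self f⟩
  have h := mins_mem ⟨m, hmem⟩
  rw [perS, Finset.mem_filter, Finset.mem_Icc] at h
  exact ⟨h.1.1, h.1.2, h.2⟩

lemma per_dvd {m : ℕ} [NeZero m] {f : ZMod m → Bool} {t : ℕ} (ht : 1 ≤ t)
    (hf : fixedby t f) : per f ∣ t := by
  obtain ⟨hp1, hp2, hp3⟩ := per_spec f
  set g := Nat.gcd (per f) t with hgdef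
  have hgf : fixedby g f := fixedby_gcd hp3 hf
  have hg1 : 1 ≤ g := Nat.gcd_pos_of_pos_left t (by omega)
  have hg2 : g ≤ per f := Nat.gcd_le_left t (by omega)
  have hmem : g ∈ perS f := by
    rw [perS, Finset.mem_filter, Finset.mem_Icc]
    exact ⟨⟨hg1, by omega⟩, hgf⟩
  have := mins_le hmem
  have hgp : g = per f := by
    have : per f ≤ g := this
    omega
  rw [← hgp]
  exact Nat.gcd_dvd_right _ _

lemma dvd_fixedby {m : ℕ} [NeZero m] {f : ZMod m → Bool} {t : ℕ}
    (h : per f ∣ t) : fixedby t f := by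
  obtain ⟨c, rfl⟩ := h
  exact fixedby_mul (per_spec f).2.2 c

lemma per_dvd_self {m : ℕ} [NeZero m] (f : ZMod m → Bool) : per f ∣ m :=
  per_dvd (Nat.one_le_iff_ne_zero.mpr (NeZero.ne m)) (fixedby_self f)

/-! ### fixed functions count -/

lemma card_Xs_fixed {k m d : ℕ} [NeZero m] [NeZero d] (hdm : d ∣ m) :
    (Xs k d).card = ((Xs k m).filter (fun f => fixedby d f)).card := by
  classical
  set π := ZMod.castHom hdm (ZMod d) with hπ
  have hπn : ∀ a : ℕ, π ((a : ℕ) : ZMod m) = ((a : ℕ) : ZMod d) := fun a => map_natCast π a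
  have hπv : ∀ x : ZMod m, π x = ((x.val : ℕ) : ZMod d) := by
    intro x
    rw [← hπn x.val, natCast_val_self]
  have hπs : ∀ y : ZMod d, π ((y.val : ℕ) : ZMod m) = y := by
    intro y
    rw [hπn, natCast_val_self]
  have fix_factor : ∀ f : ZMod m → Bool, fixedby d f →
      (fun x => f (((π x).val : ℕ) : ZMod m)) = f := by
    intro f hfix
    funext x
    have h1 : (π x).val = x.val % d := by
      rw [hπv, ZMod.val_natCast]
    have h2 := fixedby_mul hfix (x.val / d) (((x.val % d : ℕ)) : ZMod m)
    rw [cast_add_cast, Nat.mod_add_div, natCast_val_self] at h2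
    rw [h1, h2]
  apply Finset.card_nbij' (fun g => (fun x => g (π x)))
      (fun f => (fun y => f ((y.val : ℕ) : ZMod m)))
  · -- Φ maps into fixed points of Xs k m
    intro g hg
    simp only [Finset.mem_coe, Xs, Finset.mem_filter] at hg
    rw [Finset.mem_coe, Finset.mem_filter, Xs, Finset.mem_filter]
    refine ⟨⟨Finset.mem_univ _, ?_⟩, ?_⟩
    · intro i
      obtain ⟨j, hj, hjg⟩ := hg.2 (π i)
      exact ⟨j, hj, by show g (π (i + _)) = false; rw [map_add, hπn]; exact hjg⟩
    · intro i
      show g (π (i + _)) = g (π i)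
      rw [map_add, hπn, ZMod.natCast_self, add_zero]
  · -- Ψ maps back
    intro f hf
    rw [Finset.mem_coe, Finset.mem_filter, Xs, Finset.mem_filter] at hf
    obtain ⟨⟨_, hok⟩, hfix⟩ := hf
    rw [Finset.mem_coe, Xs, Finset.mem_filter]
    refine ⟨Finset.mem_univ _, ?_⟩
    intro y
    obtain ⟨j, hj, hjf⟩ := hok ((y.val : ℕ) : ZMod m)
    refine ⟨j, hj, ?_⟩
    have := congrFun (fix_factor f hfix) (((y.val : ℕ) : ZMod m) + ((j : ℕ) : ZMod m))
    rw [← this] at hjf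
    rw [map_add, hπs, hπn] at hjf
    exact hjf
  · -- left inverse
    intro g _
    funext y
    show g (π ((y.val : ℕ) : ZMod m)) = g y
    rw [hπs]
  · -- right inverse
    intro f hf
    rw [Finset.mem_coe, Finset.mem_filter] at hf
    have := fix_factor f hf.2
    convert this using 2

/-! ### orbits -/

def shz {m : ℕ} (t : ZMod m) (f : ZMod m → Bool) : ZMod m → Bool := fun i => f (i + t)

lemma shz_shz {m : ℕ} (a b : ZMod m) (f : ZMod m → Bool) :
    shz a (shz b f) = shz (a + b) f := by
  funext i
  simp only [shz, add_assoc]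

lemma shz_zero {m : ℕ} (f : ZMod m → Bool) : shz 0 f = f := by
  funext i
  simp [shz]

lemma okc_shz {k m : ℕ} {f : ZMod m → Bool} (hf : okc k f) (t : ZMod m) :
    okc k (shz t f) := by
  intro i
  obtain ⟨j, hj, hjf⟩ := hf (i + t)
  refine ⟨j, hj, ?_⟩
  show f (i + ((j : ℕ) : ZMod m) + t) = false
  rw [add_right_comm]
  exact hjf

lemma fixedby_shz {m : ℕ} {s : ℕ} {f : ZMod m → Bool} (hf : fixedby s f) (t : ZMod m) :
    fixedby s (shz t f) := by
  intro i
  show f (i + ((s : ℕ) : ZMod m) + t) = f (i + t)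
  rw [add_right_comm]
  exact hf (i + t)

lemma per_shz {m : ℕ} [NeZero m] (f : ZMod m → Bool) (t : ZMod m) :
    per (shz t f) = per f := by
  have h : ∀ (t : ZMod m) (g : ZMod m → Bool), perS g ⊆ perS (shz t g) := by
    intro t g s hs
    rw [perS, Finset.mem_filter] at hs ⊢
    exact ⟨hs.1, fixedby_shz hs.2 t⟩
  have h2 : perS (shz t f) = perS f := by
    apply Finset.Subset.antisymm
    · have := h (-t) (shz t f)
      rwa [shz_shz, neg_add_cancel, shz_zero] at this
    · exact h t f
  rw [per, h2, per]

lemma rot_equiv (m : ℕ) :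
    Equivalence (fun f g : ZMod m → Bool => ∃ t : ZMod m, shz t f = g) := by
  constructor
  · exact fun f => ⟨0, shz_zero f⟩
  · rintro f g ⟨t, rfl⟩
    exact ⟨-t, by rw [shz_shz, neg_add_cancel, shz_zero]⟩
  · rintro f g h ⟨t, rfl⟩ ⟨s, rfl⟩
    exact ⟨s + t, (shz_shz s t f).symm⟩

def rotSetoid (m : ℕ) : Setoid (ZMod m → Bool) :=
  ⟨fun f g => ∃ t : ZMod m, shz t f = g, rot_equiv m⟩

instance (m : ℕ) [NeZero m] : DecidableRel (rotSetoid m).r := fun f g =>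
  inferInstanceAs (Decidable (∃ t : ZMod m, shz t f = g))

lemma dvd_card_exact (k m : ℕ) [NeZero m] :
    m ∣ ((Xs k m).filter (fun f => per f = m)).card := by
  classical
  set sd := rotSetoid m with hsd
  set A := (Xs k m).filter (fun f => per f = m) with hA
  have hcard : A.card = ∑ c ∈ (univ : Finset (Quotient sd)),
      (A.filter (fun f => Quotient.mk sd f = c)).card :=
    card_eq_sum_card_fiberwise (fun f _ => mem_univ _)
  rw [hcard]
  apply Finset.dvd_sum
  intro c _
  rcases (A.filter (fun f => Quotient.mk sd f = c)).eq_empty_or_nonempty with he | hne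
  · rw [he]; simp
  obtain ⟨f₀, hf₀⟩ := hne
  rw [Finset.mem_filter] at hf₀
  obtain ⟨hf₀A, hf₀c⟩ := hf₀
  rw [hA, Finset.mem_filter, Xs, Finset.mem_filter] at hf₀A
  obtain ⟨⟨-, hok₀⟩, hper₀⟩ := hf₀A
  have himg : A.filter (fun f => Quotient.mk sd f = c)
      = Finset.image (fun t : ZMod m => shz t f₀) univ := by
    ext g
    rw [Finset.mem_filter, Finset.mem_image]
    constructor
    · rintro ⟨hgA, hgc⟩
      have : Quotient.mk sd f₀ = Quotient.mk sd g := by rw [hf₀c, hgc]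
      obtain ⟨t, ht⟩ := Quotient.exact this
      exact ⟨t, Finset.mem_univ t, ht⟩
    · rintro ⟨t, -, rfl⟩
      refine ⟨?_, ?_⟩
      · rw [hA, Finset.mem_filter, Xs, Finset.mem_filter]
        exact ⟨⟨Finset.mem_univ _, okc_shz hok₀ t⟩, by rw [per_shz, hper₀]⟩
      · rw [← hf₀c]
        have hr : ∃ t' : ZMod m, shz t' f₀ = shz t f₀ := ⟨t, rfl⟩
        exact (Quotient.sound hr).symm
  rw [himg]
  have hinj : Function.Injective (fun t : ZMod m => shz t f₀) := by
    intro a b hab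
    dsimp only at hab
    have h1 : shz (-b + a) f₀ = f₀ := by
      have := congrArg (shz (-b)) hab
      rwa [shz_shz, shz_shz, neg_add_cancel, shz_zero] at this
    by_contra hne
    have hc : (-b + a) ≠ 0 := by
      intro h0
      apply hne
      have := congrArg (b + ·) h0
      simpa [← add_assoc] using this
    have hfix : fixedby ((-b + a).val) f₀ := by
      intro i
      rw [natCast_val_self]
      exact congrFun h1 i
    have hv0 : (-b + a).val ≠ 0 := fun h => hc ((ZMod.val_eq_zero _).mp h)
    have := per_dvd (t := (-b + a).val) (by omega) hfix
    rw [hper₀] at this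
    have := Nat.le_of_dvd (by omega) this
    have := ZMod.val_lt (-b + a)
    omega
  rw [Finset.card_image_of_injective _ hinj, Finset.card_univ, ZMod.card]

/-! ### counting function and Möbius -/

noncomputable def ccount (k m : ℕ) : ℕ :=
  if h : m = 0 then 0 else (letI : NeZero m := ⟨h⟩; (Xs k m).card)

lemma ccount_eq {k m : ℕ} [NeZero m] : ccount k m = (Xs k m).card := by
  rw [ccount, dif_neg (NeZero.ne m)]

lemma sum_per {k m d : ℕ} [NeZero m] (hd : d ∣ m) (hd0 : d ≠ 0) :
    (ccount k d : ℤ) = ∑ e ∈ d.divisors, (((Xs k m).filter (fun f => per f = e)).card : ℤ) := by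
  classical
  haveI : NeZero d := ⟨hd0⟩
  rw [ccount_eq, card_Xs_fixed hd]
  have h1 : ((Xs k m).filter (fun f => fixedby d f)).card
      = ∑ e ∈ d.divisors, (((Xs k m).filter (fun f => fixedby d f)).filter
          (fun f => per f = e)).card := by
    apply card_eq_sum_card_fiberwise
    intro f hf
    rw [Finset.mem_coe, Finset.mem_filter] at hf
    rw [Finset.mem_coe, Nat.mem_divisors]
    exact ⟨per_dvd (Nat.one_le_iff_ne_zero.mpr hd0) hf.2, hd0⟩
  rw [h1]
  push_cast
  apply Finset.sum_congr rfl
  intro e he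
  rw [Nat.mem_divisors] at he
  congr 1
  rw [Finset.filter_filter]
  congr 1
  ext f
  simp only [Finset.mem_filter]
  constructor
  · exact fun h => ⟨h.1, h.2.2⟩
  · intro h
    refine ⟨h.1, ?_, h.2⟩
    apply dvd_fixedby
    rw [h.2]
    exact he.1

lemma moebius_dvd (k m : ℕ) (hm : 1 ≤ m) :
    (m : ℤ) ∣ ∑ d ∈ m.divisors, (ArithmeticFunction.moebius (m / d)) * (ccount k d : ℤ) := by
  classical
  haveI : NeZero m := ⟨by omega⟩
  set G : ℕ → ℤ := fun e => (((Xs k m).filter (fun f => per f = e)).card : ℤ) with hG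
  have hsum : ∀ n > 0, n ∈ {d : ℕ | d ∣ m} → ∑ i ∈ n.divisors, G i = (ccount k n : ℤ) := by
    intro n hn hnm
    exact (sum_per hnm (by omega)).symm
  have hinv := (ArithmeticFunction.sum_eq_iff_sum_mul_moebius_eq_on {d : ℕ | d ∣ m}
      (fun a b hab hbm => dvd_trans hab hbm)).mp hsum m (by omega) (dvd_refl m)
  simp only [Int.cast_id] at hinv
  have hrw : ∑ x ∈ m.divisorsAntidiagonal,
      (ArithmeticFunction.moebius x.fst : ℤ) * (ccount k x.snd : ℤ)
      = ∑ d ∈ m.divisors, (ArithmeticFunction.moebius (m / d)) * (ccount k d : ℤ) :=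
    Nat.sum_divisorsAntidiagonal' (f := fun a b => (ArithmeticFunction.moebius a : ℤ) * (ccount k b : ℤ))
  rw [← hrw, hinv, hG]
  exact Int.natCast_dvd_natCast.mpr (dvd_card_exact k m)

/-! ### integer-level algebra -/

def Fz (k : ℕ) : ℤ → ℤ := fun q => if q < 0 then 0 else (fcount k q.toNat : ℤ)

lemma Fz_neg {k : ℕ} {q : ℤ} (h : q < 0) : Fz k q = 0 := by rw [Fz, if_pos h]

lemma Fz_nonneg {k : ℕ} {q : ℤ} (h : 0 ≤ q) : Fz k q = (fcount k q.toNat : ℤ) := by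
  rw [Fz, if_neg (by omega)]

lemma geom1 (t : ℕ) : ∑ j ∈ Finset.Icc 1 t, (2:ℤ)^(t - j) = 2^t - 1 := by
  induction t with
  | zero => simp
  | succ t ih =>
      rw [Finset.sum_Icc_succ_top (by omega)]
      have h1 : ∀ j ∈ Finset.Icc 1 t, (2:ℤ)^(t + 1 - j) = 2 * 2^(t - j) := by
        intro j hj
        rw [Finset.mem_Icc] at hj
        rw [show t + 1 - j = (t - j) + 1 by omega, pow_succ]
        ring
      rw [Finset.sum_congr rfl h1, ← Finset.mul_sum, ih]
      simp [pow_succ]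
      ring

lemma geom2 (t : ℕ) : ∑ j ∈ Finset.Icc 1 t, (j : ℤ) * 2^(t - j) = 2^(t+1) - (t : ℤ) - 2 := by
  induction t with
  | zero => simp
  | succ t ih =>
      rw [Finset.sum_Icc_succ_top (by omega)]
      have h1 : ∀ j ∈ Finset.Icc 1 t, (j:ℤ) * 2^(t + 1 - j) = 2 * ((j:ℤ) * 2^(t - j)) := by
        intro j hj
        rw [Finset.mem_Icc] at hj
        rw [show t + 1 - j = (t - j) + 1 by omega, pow_succ]
        ring
      rw [Finset.sum_congr rfl h1, ← Finset.mul_sum, ih]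
      push_cast
      simp [pow_succ]
      ring

lemma Fz_rec (k : ℕ) (hk : 1 ≤ k) (q : ℤ) :
    Fz k q - ∑ j ∈ Finset.Icc 1 k, Fz k (q - (j:ℤ))
      = if 0 ≤ q ∧ q ≤ (k:ℤ) - 1 then 1 else 0 := by
  rcases lt_or_ge q 0 with hq | hq
  · rw [Fz_neg hq, if_neg (by omega)]
    have : ∀ j ∈ Finset.Icc 1 k, Fz k (q - (j:ℤ)) = 0 := by
      intro j hj
      rw [Finset.mem_Icc] at hj
      exact Fz_neg (by omega)
    rw [Finset.sum_congr rfl this]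
    simp
  · obtain ⟨qn, rfl⟩ : ∃ qn : ℕ, q = (qn : ℤ) := ⟨q.toNat, by omega⟩
    rcases le_or_gt k qn with hkq | hkq
    · -- big case : recurrence
      rw [if_neg (by omega), Fz_nonneg hq, Int.toNat_natCast, fcount_rec hk hkq]
      have h1 : ∀ j ∈ Finset.Icc 1 k, Fz k ((qn:ℤ) - (j:ℤ)) = (fcount k (qn - j) : ℤ) := by
        intro j hj
        rw [Finset.mem_Icc] at hj
        rw [Fz_nonneg (by omega)]
        congr 2
        omega
      rw [Finset.sum_congr rfl h1]
      have h2 : ∑ j ∈ Finset.Icc 1 k, (fcount k (qn - j) : ℤ)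
          = ∑ a ∈ range k, (fcount k (qn - 1 - a) : ℤ) := by
        apply Finset.sum_nbij' (fun j => j - 1) (fun a => a + 1)
        · intro j hj; rw [Finset.mem_Icc] at hj; rw [Finset.mem_range]; omega
        · intro a ha; rw [Finset.mem_range] at ha; rw [Finset.mem_Icc]; omega
        · intro j hj; rw [Finset.mem_Icc] at hj; omega
        · intro a ha; omega
        · intro j hj
          rw [Finset.mem_Icc] at hj
          congr 2
          omega
      rw [h2]
      push_cast
      ring
    · -- small case
      rw [if_pos (by omega), Fz_nonneg hq, Int.toNat_natCast, fcount_small hkq]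
      have h1 : ∑ j ∈ Finset.Icc 1 k, Fz k ((qn:ℤ) - (j:ℤ))
          = ∑ j ∈ Finset.Icc 1 qn, Fz k ((qn:ℤ) - (j:ℤ)) := by
        symm
        apply Finset.sum_subset
        · intro j hj
          rw [Finset.mem_Icc] at hj ⊢
          omega
        · intro j hj hnj
          rw [Finset.mem_Icc] at hj hnj
          exact Fz_neg (by omega)
      have h2 : ∀ j ∈ Finset.Icc 1 qn, Fz k ((qn:ℤ) - (j:ℤ)) = (2:ℤ)^(qn - j) := by
        intro j hj
        rw [Finset.mem_Icc] at hj
        rw [Fz_nonneg (by omega), show ((qn:ℤ) - (j:ℤ)).toNat = qn - j by omega,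
          fcount_small (by omega)]
        push_cast
        rfl
      rw [h1, Finset.sum_congr rfl h2, geom1]
      push_cast
      ring

lemma sum_P {k : ℕ} (g : ℕ → ℤ) :
    ∑ p ∈ ((range k ×ˢ range k).filter (fun p => p.1 + p.2 + 1 ≤ k)), g (p.1 + p.2 + 1)
      = ∑ j ∈ Finset.Icc 1 k, (j:ℤ) * g j := by
  classical
  set P := (range k ×ˢ range k).filter (fun p : ℕ × ℕ => p.1 + p.2 + 1 ≤ k) with hP
  have hmaps : ∀ p ∈ P, p.1 + p.2 + 1 ∈ Finset.Icc 1 k := by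
    intro p hp
    rw [hP, Finset.mem_filter] at hp
    rw [Finset.mem_Icc]
    omega
  rw [← Finset.sum_fiberwise_of_maps_to hmaps (fun p => g (p.1 + p.2 + 1))]
  apply Finset.sum_congr rfl
  intro j hj
  rw [Finset.mem_Icc] at hj
  have hcard : (P.filter (fun p => p.1 + p.2 + 1 = j)).card = j := by
    have : (P.filter (fun p => p.1 + p.2 + 1 = j)).card = (range j).card := by
      apply Finset.card_nbij' (fun p => p.1) (fun a => (a, j - 1 - a))
      · intro p hp; dsimp only
        rw [Finset.mem_coe, Finset.mem_filter, hP, Finset.mem_filter] at hp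
        rw [Finset.mem_coe, Finset.mem_range]
        omega
      · intro a ha; dsimp only
        rw [Finset.mem_coe, Finset.mem_range] at ha
        rw [Finset.mem_coe, Finset.mem_filter, hP, Finset.mem_filter, Finset.mem_product,
          Finset.mem_range, Finset.mem_range]
        refine ⟨⟨⟨by omega, by omega⟩, by omega⟩, by omega⟩
      · intro p hp
        rw [Finset.mem_coe, Finset.mem_filter, hP, Finset.mem_filter] at hp
        have : p.2 = j - 1 - p.1 := by omega
        exact Prod.ext rfl this.symm
      · intro a ha
        rfl
    rw [this, Finset.card_range]
  have hterm : ∀ p ∈ P.filter (fun p => p.1 + p.2 + 1 = j), g (p.1 + p.2 + 1) = g j := by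
    intro p hp
    rw [Finset.mem_filter] at hp
    rw [hp.2]
  rw [Finset.sum_congr rfl hterm, Finset.sum_const, hcard, nsmul_eq_mul]

lemma ccount_formula {k m : ℕ} (hk : 1 ≤ k) (hm : 1 ≤ m) :
    (ccount k m : ℤ) = ∑ j ∈ Finset.Icc 1 k, (j:ℤ) * Fz k ((m:ℤ) - 1 - (j:ℤ))
      + (if m ≤ k then (m:ℤ) else 0) := by
  haveI : NeZero m := ⟨by omega⟩
  rcases le_or_gt m k with hmk | hmk
  · -- small case
    rw [ccount_eq, card_Xs_small hm hmk, if_pos hmk]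
    have h1 : ∑ j ∈ Finset.Icc 1 k, (j:ℤ) * Fz k ((m:ℤ) - 1 - (j:ℤ))
        = ∑ j ∈ Finset.Icc 1 (m-1), (j:ℤ) * Fz k ((m:ℤ) - 1 - (j:ℤ)) := by
      symm
      apply Finset.sum_subset
      · intro j hj
        rw [Finset.mem_Icc] at hj ⊢
        omega
      · intro j hj hnj
        rw [Finset.mem_Icc] at hj hnj
        rw [Fz_neg (by omega)]
        ring
    have h2 : ∀ j ∈ Finset.Icc 1 (m-1), (j:ℤ) * Fz k ((m:ℤ) - 1 - (j:ℤ))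
        = (j:ℤ) * 2^((m-1) - j) := by
      intro j hj
      rw [Finset.mem_Icc] at hj
      rw [Fz_nonneg (by omega), show ((m:ℤ) - 1 - (j:ℤ)).toNat = m - 1 - j by omega,
        fcount_small (by omega)]
      push_cast
      rfl
    rw [h1, Finset.sum_congr rfl h2, geom2 (m-1)]
    rw [Nat.cast_sub Nat.one_le_two_pow]
    rw [show m - 1 + 1 = m by omega, Nat.cast_sub hm]
    push_cast
    ring
  · -- big case
    rw [ccount_eq, card_Xs_eq hk hmk, if_neg (by omega), add_zero]
    rw [Nat.cast_sum]
    have h1 : ∀ p ∈ ((range k ×ˢ range k).filter (fun p : ℕ × ℕ => p.1 + p.2 + 1 ≤ k)),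
        (fcount k (m - p.1 - p.2 - 2) : ℤ)
          = (fun j => (fcount k (m - j - 1) : ℤ)) (p.1 + p.2 + 1) := by
      intro p hp
      simp only []
      congr 2
      omega
    rw [Finset.sum_congr rfl h1, sum_P (fun j => (fcount k (m - j - 1) : ℤ))]
    apply Finset.sum_congr rfl
    intro j hj
    rw [Finset.mem_Icc] at hj
    rw [Fz_nonneg (by omega), show ((m:ℤ) - 1 - (j:ℤ)).toNat = m - j - 1 by omega]

lemma ccount_rec {k m : ℕ} (hk : 1 ≤ k) (hm : k + 1 ≤ m) :
    (ccount k m : ℤ) = ∑ i ∈ Finset.Icc 1 k, (ccount k (m - i) : ℤ) := by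
  have hL := ccount_formula hk (show 1 ≤ m by omega)
  rw [if_neg (by omega), add_zero] at hL
  have hR : ∀ i ∈ Finset.Icc 1 k, (ccount k (m - i) : ℤ)
      = ∑ j ∈ Finset.Icc 1 k, (j:ℤ) * Fz k ((m:ℤ) - (i:ℤ) - 1 - (j:ℤ))
        + (if m ≤ k + i then ((m:ℤ) - (i:ℤ)) else 0) := by
    intro i hi
    rw [Finset.mem_Icc] at hi
    rw [ccount_formula hk (show 1 ≤ m - i by omega)]
    congr 1
    · apply Finset.sum_congr rfl
      intro j hj
      congr 2
      rw [Nat.cast_sub (by omega)]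
    · have hc : (m - i ≤ k) ↔ (m ≤ k + i) := by omega
      simp only [hc]
      split_ifs with h
      · rw [Nat.cast_sub (by omega)]
      · rfl
  rw [Finset.sum_congr rfl hR, Finset.sum_add_distrib]
  have hswap : ∑ i ∈ Finset.Icc 1 k, ∑ j ∈ Finset.Icc 1 k,
        (j:ℤ) * Fz k ((m:ℤ) - (i:ℤ) - 1 - (j:ℤ))
      = ∑ j ∈ Finset.Icc 1 k, (j:ℤ) * ∑ i ∈ Finset.Icc 1 k,
        Fz k (((m:ℤ) - 1 - (j:ℤ)) - (i:ℤ)) := by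
    rw [Finset.sum_comm]
    apply Finset.sum_congr rfl
    intro j _
    rw [Finset.mul_sum]
    apply Finset.sum_congr rfl
    intro i _
    congr 2
    ring
  rw [hswap]
  have hFz : ∀ j ∈ Finset.Icc 1 k, (j:ℤ) * ∑ i ∈ Finset.Icc 1 k,
        Fz k (((m:ℤ) - 1 - (j:ℤ)) - (i:ℤ))
      = (j:ℤ) * Fz k ((m:ℤ) - 1 - (j:ℤ))
        - (if m ≤ k + j then (j:ℤ) else 0) := by
    intro j hj
    rw [Finset.mem_Icc] at hj
    have hrec := Fz_rec k hk ((m:ℤ) - 1 - (j:ℤ))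
    have h2 : ∑ i ∈ Finset.Icc 1 k, Fz k (((m:ℤ) - 1 - (j:ℤ)) - (i:ℤ))
        = Fz k ((m:ℤ) - 1 - (j:ℤ))
          - (if 0 ≤ (m:ℤ) - 1 - (j:ℤ) ∧ (m:ℤ) - 1 - (j:ℤ) ≤ (k:ℤ) - 1 then 1 else 0) := by
      omega
    rw [h2]
    have hc : (0 ≤ (m:ℤ) - 1 - (j:ℤ) ∧ (m:ℤ) - 1 - (j:ℤ) ≤ (k:ℤ) - 1) ↔ (m ≤ k + j) := by
      omega
    simp only [hc]
    split_ifs with h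
    · ring
    · ring
  rw [Finset.sum_congr rfl hFz, Finset.sum_sub_distrib, hL]
  have hbd : ∑ j ∈ Finset.Icc 1 k, (if m ≤ k + j then (j:ℤ) else 0)
      = ∑ i ∈ Finset.Icc 1 k, (if m ≤ k + i then ((m:ℤ) - (i:ℤ)) else 0) := by
    rw [← Finset.sum_filter, ← Finset.sum_filter]
    apply Finset.sum_nbij' (fun j => m - j) (fun i => m - i)
    · intro a ha
      rw [Finset.mem_filter, Finset.mem_Icc] at ha ⊢
      omega
    · intro a ha
      rw [Finset.mem_filter, Finset.mem_Icc] at ha ⊢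
      omega
    · intro a ha
      rw [Finset.mem_filter, Finset.mem_Icc] at ha
      omega
    · intro a ha
      rw [Finset.mem_filter, Finset.mem_Icc] at ha
      omega
    · intro a ha
      rw [Finset.mem_filter, Finset.mem_Icc] at ha
      rw [Nat.cast_sub (by omega)]
      omega
  rw [hbd]
  ring

lemma ccount_small {k m : ℕ} (h1 : 1 ≤ m) (h2 : m ≤ k) : (ccount k m : ℤ) = 2^m - 1 := by
  haveI : NeZero m := ⟨by omega⟩
  rw [ccount_eq, card_Xs_small h1 h2, Nat.cast_sub Nat.one_le_two_pow]
  push_cast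
  ring

end Stmt5

theorem stmt_5 (n : ℕ) (hn : 3 ≤ n) (φ : ℕ → ℤ)
    (hinit : ∀ m : ℕ, 1 ≤ m → m ≤ n - 1 → φ m = 2 ^ m - 1)
    (hrec : ∀ k : ℕ, φ (n + k) = ∑ j ∈ Finset.Icc 1 (n - 1), φ (n + k - j)) :
    ∀ m : ℕ, 1 ≤ m →
      (m : ℤ) ∣ ∑ d ∈ m.divisors, (ArithmeticFunction.moebius (m / d)) * φ d := by
  intro m hm
  set k := n - 1 with hk
  have hk1 : 1 ≤ k := by omega
  have hphi : ∀ M, 1 ≤ M → φ M = (Stmt5.ccount k M : ℤ) := by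
    intro M
    induction M using Nat.strong_induction_on with
    | _ M ih =>
      intro hM1
      rcases le_or_gt M k with hMk | hMk
      · rw [hinit M hM1 (by omega), Stmt5.ccount_small hM1 hMk]
      · have hrecM := hrec (M - n)
        rw [show n + (M - n) = M from by omega] at hrecM
        rw [hrecM, Stmt5.ccount_rec hk1 (by omega)]
        apply Finset.sum_congr rfl
        intro j hj
        rw [Finset.mem_Icc] at hj
        exact ih (M - j) (by omega) (by omega)
  have key := Stmt5.moebius_dvd k m hm
  have hsum : ∑ d ∈ m.divisors, (ArithmeticFunction.moebius (m / d)) * φ d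
      = ∑ d ∈ m.divisors, (ArithmeticFunction.moebius (m / d)) * (Stmt5.ccount k d : ℤ) := by
    apply Finset.sum_congr rfl
    intro d hd
    rw [hphi d (Nat.pos_of_mem_divisors hd)]
  rw [hsum]
  exact key
end

section
/- Let L(m) be the Lucas sequence defined by L(1) = 1, L(2) = 3, and L(m) = L(m−1) + L(m−2) for m ≥ 3. Then for every positive integer m, ∑_{d | m} μ(m/d) L(d) ≡ 0 (mod m). In particular, for every prime p, L(p) ≡ 1 (mod p). -/
open Polynomial

noncomputable section
abbrev fib2 : ℤ[X] := X^2 - X - 1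
abbrev R := AdjoinRoot fib2
abbrev al : R := AdjoinRoot.root fib2
abbrev be : R := 1 - al

lemma fib2_monic : (fib2).Monic := by
  unfold fib2; monicity!

lemma al_sq : al ^ 2 = al + 1 := by
  have h : (fib2).eval₂ (AdjoinRoot.of fib2) al = 0 := AdjoinRoot.eval₂_root _
  simp [fib2] at h
  linear_combination h

lemma al_mul_be : al * be = -1 := by
  unfold be; ring_nf; linear_combination -al_sq

def PB : PowerBasis ℤ R := AdjoinRoot.powerBasis' fib2_monic

lemma PB_dim : PB.dim = 2 := by
  simp only [PB, AdjoinRoot.powerBasis'_dim]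
  unfold fib2
  compute_degree!

def coord : R →ₗ[ℤ] ℤ := (Finsupp.lapply (⟨0, by rw [PB_dim]; norm_num⟩ : Fin PB.dim)).comp (PB.basis.repr : R →ₗ[ℤ] (Fin PB.dim →₀ ℤ))

lemma coord_one : coord 1 = 1 := by
  have h1 : (1 : R) = PB.basis ⟨0, by rw [PB_dim]; norm_num⟩ := by
    rw [PB.coe_basis]; simp
  rw [coord]
  simp only [LinearMap.comp_apply, LinearMap.coe_coe, Finsupp.lapply_apply]
  rw [h1]
  erw [Module.Basis.repr_self_apply]
  simp

lemma intCast_dvd_intCast_of_dvd {a b : ℤ} (h : (a : R) ∣ (b : R)) : a ∣ b := by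
  obtain ⟨w, hw⟩ := h
  refine ⟨coord w, ?_⟩
  have h2 : (b : R) = a • w := by rw [zsmul_eq_mul]; exact hw
  have h3 : (b : R) = b • (1 : R) := by rw [zsmul_eq_mul]; ring
  have := congrArg coord (h3.symm.trans h2)
  rw [map_zsmul, map_zsmul, coord_one, smul_eq_mul, smul_eq_mul, mul_one] at this
  exact this

def Luc : ℕ → ℤ
  | 0 => 2
  | 1 => 1
  | (n+2) => Luc (n+1) + Luc n

lemma be_sq : be ^ 2 = be + 1 := by
  unfold be; linear_combination al_sq

lemma luc_cast : ∀ n, ((Luc n : ℤ) : R) = al ^ n + be ^ n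
  | 0 => by norm_num [Luc]
  | 1 => by norm_num [Luc, be]
  | (n+2) => by
      have h1 := luc_cast (n+1)
      have h0 := luc_cast n
      show ((Luc (n+1) + Luc n : ℤ) : R) = _
      push_cast
      rw [h1, h0]
      have ha : al ^ (n+2) = al ^ (n+1) + al ^ n := by
        rw [show n+2 = n+2 by rfl, pow_add, pow_add, pow_one]
        linear_combination (al ^ n) * al_sq
      have hb : be ^ (n+2) = be ^ (n+1) + be ^ n := by
        rw [pow_add, pow_add, pow_one]
        linear_combination (be ^ n) * be_sq
      rw [ha, hb]; ring

lemma coord_intCast (z : ℤ) : coord ((z : ℤ) : R) = z := by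
  have h3 : ((z : ℤ) : R) = z • (1 : R) := by rw [zsmul_eq_mul]; ring
  rw [h3, map_zsmul, coord_one, smul_eq_mul, mul_one]

lemma intCast_injective_R : Function.Injective (Int.cast : ℤ → R) := by
  intro x y hxy
  have := congrArg coord hxy
  rwa [coord_intCast, coord_intCast] at this

lemma pair_pow (h : ℕ) (a b : R) :
    (a + b) ^ (2*h+1) = a ^ (2*h+1) + b ^ (2*h+1) +
      ∑ i ∈ Finset.Icc 1 h, ((2*h+1).choose i : R) *
        ((a*b) ^ i * (a ^ (2*h+1-2*i) + b ^ (2*h+1-2*i))) := by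
  set p := 2*h+1 with hp
  have hadd := add_pow a b p
  rw [hadd]
  have hsplit : ∑ k ∈ Finset.range (p+1), a ^ k * b ^ (p-k) * (p.choose k : R)
      = (a ^ p * b ^ 0 * (p.choose p : R)) + (a ^ 0 * b ^ p * (p.choose 0 : R))
        + ∑ k ∈ Finset.Ico 1 p, a ^ k * b ^ (p-k) * (p.choose k : R) := by
    rw [Finset.sum_range_succ]
    rw [Finset.range_eq_Ico, Finset.sum_eq_sum_Ico_succ_bot (by omega : 0 < p)]
    simp only [Nat.sub_self, Nat.sub_zero]
    ring
  rw [hsplit]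
  simp only [pow_zero, Nat.choose_self, Nat.choose_zero_right, Nat.cast_one, mul_one, one_mul]
  have hIco : Finset.Icc 1 h = Finset.Ico 1 (h+1) := by
    ext x; simp only [Finset.mem_Icc, Finset.mem_Ico]; omega
  rw [hIco]
  have hcons : ∑ k ∈ Finset.Ico 1 (h+1), (a ^ k * b ^ (p-k) * (p.choose k : R))
      + ∑ k ∈ Finset.Ico (h+1) p, (a ^ k * b ^ (p-k) * (p.choose k : R))
      = ∑ k ∈ Finset.Ico 1 p, (a ^ k * b ^ (p-k) * (p.choose k : R)) :=
    Finset.sum_Ico_consecutive _ (by omega) (by omega)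
  rw [← hcons]
  have hrefl : ∑ k ∈ Finset.Ico (h+1) p, (a ^ k * b ^ (p-k) * (p.choose k : R))
      = ∑ k ∈ Finset.Ico 1 (h+1), (a ^ (p-k) * b ^ k * (p.choose k : R)) := by
    refine Finset.sum_nbij' (fun k => p - k) (fun k => p - k) ?_ ?_ ?_ ?_ ?_
    · intro k hk; simp only [Finset.mem_Ico] at *; omega
    · intro k hk; simp only [Finset.mem_Ico] at *; omega
    · intro k hk; simp only [Finset.mem_Ico] at hk; show p - (p - k) = k; omega
    · intro k hk; simp only [Finset.mem_Ico] at hk; show p - (p - k) = k; omega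
    · intro k hk
      simp only [Finset.mem_Ico] at hk
      have h1 : p - (p - k) = k := by omega
      rw [h1, Nat.choose_symm (by omega : k ≤ p)]
  rw [hrefl, ← Finset.sum_add_distrib]
  congr 1
  apply Finset.sum_congr rfl
  intro k hk
  simp only [Finset.mem_Ico] at hk
  have h1 : p - k = k + (p - 2*k) := by omega
  rw [h1, pow_add, pow_add, mul_pow]
  ring

lemma luc_two (n : ℕ) : Luc (n*2) = Luc n ^ 2 - 2 * (-1 : ℤ)^n := by
  apply intCast_injective_R
  push_cast [luc_cast]
  rw [pow_mul]
  have h2 : (al^n + be^n)^2 = (al^n)^2 + (be^n)^2 + 2*((al*be)^n) := by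
    rw [mul_pow]; ring
  rw [h2, al_mul_be]
  ring

lemma luc_odd (h n : ℕ) :
    Luc (n*(2*h+1)) = Luc n ^ (2*h+1)
      - ∑ i ∈ Finset.Icc 1 h, ((2*h+1).choose i : ℤ) * (-1 : ℤ)^(n*i) * Luc (n*(2*h+1-2*i)) := by
  apply intCast_injective_R
  push_cast [luc_cast]
  have hp := pair_pow h (al^n) (be^n)
  simp only [← mul_pow, al_mul_be, ← pow_mul] at hp
  rw [hp]
  have hS : ∑ i ∈ Finset.Icc 1 h, ((2*h+1).choose i : R) *
        ((-1 : R)^(n*i) * (al ^ (n*(2*h+1-2*i)) + be ^ (n*(2*h+1-2*i))))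
      = ∑ i ∈ Finset.Icc 1 h, ((2*h+1).choose i : R) * (-1 : R)^(n*i) *
        (al ^ (n*(2*h+1-2*i)) + be ^ (n*(2*h+1-2*i))) :=
    Finset.sum_congr rfl (fun i _ => by ring)
  rw [hS]
  ring

lemma int_fermat (p : ℕ) (hp : p.Prime) (x : ℤ) : (p : ℤ) ∣ x ^ p - x := by
  haveI := Fact.mk hp
  rw [← ZMod.intCast_zmod_eq_zero_iff_dvd]
  push_cast
  rw [ZMod.pow_card, sub_self]

lemma pow_lift (p : ℕ) (hp : p.Prime) (k : ℕ) (hk : 1 ≤ k) (x y : ℤ)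
    (hxy : (p:ℤ)^k ∣ x - y) : (p:ℤ)^(k+1) ∣ x^p - y^p := by
  obtain ⟨t, ht⟩ := hxy
  have hx : x = y + (p:ℤ)^k * t := by linarith
  subst hx
  have hadd := add_pow y ((p:ℤ)^k * t) p
  rw [Finset.sum_range_succ] at hadd
  simp only [Nat.sub_self, pow_zero, Nat.choose_self, Nat.cast_one, mul_one] at hadd
  rw [hadd, add_sub_cancel_right]
  apply Finset.dvd_sum
  intro i hi
  rw [Finset.mem_range] at hi
  rcases eq_or_lt_of_le (Nat.succ_le_of_lt hi) with heq | hlt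
  · -- i = p - 1, i.e. i + 1 = p
    have hpi : p - i = 1 := by omega
    have hchoose : p.choose i = p := by
      have : i = p - 1 := by omega
      subst this
      rw [Nat.choose_symm (by omega), Nat.choose_one_right]
    rw [hpi, hchoose, pow_one]
    have : y ^ i * ((p:ℤ) ^ k * t) * (p : ℤ) = (p:ℤ)^(k+1) * (y ^ i * t) := by ring
    rw [this]
    exact Dvd.intro _ rfl
  · -- p - i ≥ 2
    have h2 : 2 ≤ p - i := by omega
    apply Dvd.dvd.mul_right
    apply Dvd.dvd.mul_left
    rw [mul_pow, ← pow_mul]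
    apply Dvd.dvd.mul_right
    apply pow_dvd_pow
    nlinarith

lemma key_odd (h : ℕ) (hp : (2*h+1).Prime) :
    ∀ j e : ℕ, ((2*h+1 : ℕ):ℤ)^(j+1) ∣ Luc ((2*h+1)^(j+1) * e) - Luc ((2*h+1)^j * e) := by
  set p := 2*h+1 with hpdef
  intro j
  induction j with
  | zero =>
    intro e
    simp only [zero_add, pow_one, pow_zero, one_mul]
    have hid := luc_odd h e
    rw [mul_comm p e, hid]
    have h1 : (p:ℤ) ∣ Luc e ^ p - Luc e := int_fermat p hp (Luc e)
    have h2 : (p:ℤ) ∣ ∑ i ∈ Finset.Icc 1 h, ((p.choose i : ℤ)) * (-1:ℤ)^(e*i) * Luc (e*(p-2*i)) := by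
      apply Finset.dvd_sum
      intro i hi
      rw [Finset.mem_Icc] at hi
      apply Dvd.dvd.mul_right
      apply Dvd.dvd.mul_right
      exact_mod_cast Int.natCast_dvd_natCast.mpr (hp.dvd_choose_self (by omega) (by omega))
    have heq : Luc e ^ p - (∑ i ∈ Finset.Icc 1 h, ((p.choose i : ℤ)) * (-1:ℤ)^(e*i) * Luc (e*(p-2*i))) - Luc e
        = (Luc e ^ p - Luc e) - ∑ i ∈ Finset.Icc 1 h, ((p.choose i : ℤ)) * (-1:ℤ)^(e*i) * Luc (e*(p-2*i)) := by
      ring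
    rw [heq]
    exact dvd_sub h1 h2
  | succ j ih =>
    intro e
    set n := p^(j+1) * e with hn
    set n' := p^j * e with hn'
    have hnn' : n = p * n' := by rw [hn, hn', pow_succ]; ring
    have hgoal1 : p^(j+1+1) * e = n * p := by rw [hn, pow_succ]; ring
    have hgoal2 : Luc n = Luc (n' * p) := by
      rw [hn, hn', pow_succ]; ring_nf
    rw [hgoal1, hgoal2, luc_odd h n, luc_odd h n']
    have hparity : ∀ i : ℕ, (-1:ℤ)^(n*i) = (-1:ℤ)^(n'*i) := by
      intro i
      rw [hnn', mul_assoc, pow_mul, Odd.neg_one_pow (hp.odd_of_ne_two (by omega))]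
    have hA : ((p:ℕ):ℤ)^(j+2) ∣ Luc n ^ p - Luc n' ^ p := by
      apply pow_lift p hp (j+1) (by omega)
      exact ih e
    have hB : ((p:ℕ):ℤ)^(j+2) ∣
        (∑ i ∈ Finset.Icc 1 h, ((p.choose i : ℤ)) * (-1:ℤ)^(n*i) * Luc (n*(p-2*i))
         - ∑ i ∈ Finset.Icc 1 h, ((p.choose i : ℤ)) * (-1:ℤ)^(n'*i) * Luc (n'*(p-2*i))) := by
      rw [← Finset.sum_sub_distrib]
      apply Finset.dvd_sum
      intro i hi
      rw [Finset.mem_Icc] at hi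
      have hterm : ((p.choose i : ℤ)) * (-1:ℤ)^(n*i) * Luc (n*(p-2*i))
          - ((p.choose i : ℤ)) * (-1:ℤ)^(n'*i) * Luc (n'*(p-2*i))
          = ((p.choose i : ℤ)) * (-1:ℤ)^(n'*i) * (Luc (n*(p-2*i)) - Luc (n'*(p-2*i))) := by
        rw [hparity i]; ring
      rw [hterm]
      have hd1 : ((p:ℕ):ℤ) ∣ (p.choose i : ℤ) :=
        Int.natCast_dvd_natCast.mpr (hp.dvd_choose_self (by omega) (by omega))
      have hd2 : ((p:ℕ):ℤ)^(j+1) ∣ Luc (n*(p-2*i)) - Luc (n'*(p-2*i)) := by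
        have e1 : n*(p-2*i) = p^(j+1) * (e*(p-2*i)) := by rw [hn]; ring
        have e2 : n'*(p-2*i) = p^j * (e*(p-2*i)) := by rw [hn']; ring
        rw [e1, e2]
        exact ih (e*(p-2*i))
      calc ((p:ℕ):ℤ)^(j+2) = ((p:ℕ):ℤ) * ((p:ℕ):ℤ)^(j+1) * 1 := by ring
        _ ∣ (p.choose i : ℤ) * (Luc (n*(p-2*i)) - Luc (n'*(p-2*i))) * (-1:ℤ)^(n'*i) := by
            apply mul_dvd_mul (mul_dvd_mul hd1 hd2)
            exact one_dvd _
        _ = ((p.choose i : ℤ)) * (-1:ℤ)^(n'*i) * (Luc (n*(p-2*i)) - Luc (n'*(p-2*i))) := by ring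
    have := dvd_sub hA hB
    convert this using 1
    · rfl
    ring

lemma key_two : ∀ j e : ℕ, (2:ℤ)^(j+1) ∣ Luc (2^(j+1) * e) - Luc (2^j * e) := by
  intro j
  induction j with
  | zero =>
    intro e
    simp only [zero_add, pow_one, pow_zero, one_mul]
    rw [mul_comm 2 e, luc_two e]
    have h1 : (2:ℤ) ∣ Luc e ^ 2 - Luc e := by
      have := int_fermat 2 Nat.prime_two (Luc e)
      exact_mod_cast this
    have heq : Luc e ^ 2 - 2*(-1:ℤ)^e - Luc e = (Luc e ^ 2 - Luc e) - 2*(-1:ℤ)^e := by ring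
    rw [heq]
    exact dvd_sub h1 (Dvd.intro _ rfl)
  | succ j ih =>
    intro e
    set n := 2^(j+1) * e with hn
    set n' := 2^j * e with hn'
    have hgoal1 : 2^(j+1+1) * e = n * 2 := by rw [hn, pow_succ]; ring
    have hgoal2 : Luc n = Luc (n' * 2) := by rw [hn, hn', pow_succ]; ring_nf
    rw [hgoal1, hgoal2, luc_two n, luc_two n']
    have hA : (2:ℤ)^(j+2) ∣ Luc n ^ 2 - Luc n' ^ 2 := by
      have hd1 : (2:ℤ)^(j+1) ∣ Luc n - Luc n' := ih e
      have hd2 : (2:ℤ) ∣ Luc n + Luc n' := by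
        have h2 : (2:ℤ) ∣ Luc n - Luc n' := dvd_trans (dvd_pow_self 2 (by omega)) hd1
        obtain ⟨c, hc⟩ := h2
        exact ⟨c + Luc n', by linarith⟩
      have : Luc n ^ 2 - Luc n' ^ 2 = (Luc n - Luc n') * (Luc n + Luc n') := by ring
      rw [this, pow_succ]
      exact mul_dvd_mul hd1 hd2
    have hB : (2:ℤ)^(j+2) ∣ (2*(-1:ℤ)^n - 2*(-1:ℤ)^n') := by
      have hne : (-1:ℤ)^n = 1 := by
        rw [hn]
        apply Even.neg_one_pow
        exact ⟨2^j * e, by rw [pow_succ]; ring⟩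
      rcases Nat.even_or_odd n' with hev | hod
      · rw [hne, Even.neg_one_pow hev, sub_self]
        exact dvd_zero _
      · have hj : j = 0 := by
          by_contra hj0
          have : 2 ∣ n' := by
            rw [hn']
            exact Dvd.dvd.mul_right (dvd_pow_self 2 hj0) e
          exact (Nat.not_even_iff_odd.mpr hod) (even_iff_two_dvd.mpr this)
        subst hj
        rw [hne, Odd.neg_one_pow hod]
        norm_num
    have heq : Luc n ^ 2 - 2*(-1:ℤ)^n - (Luc n' ^ 2 - 2*(-1:ℤ)^n')
        = (Luc n ^ 2 - Luc n' ^ 2) - (2*(-1:ℤ)^n - 2*(-1:ℤ)^n') := by ring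
    rw [heq]
    exact dvd_sub hA hB

lemma key (p : ℕ) (hp : p.Prime) (j e : ℕ) :
    ((p:ℕ):ℤ)^(j+1) ∣ Luc (p^(j+1) * e) - Luc (p^j * e) := by
  rcases hp.eq_two_or_odd' with h2 | hodd
  · subst h2; exact_mod_cast key_two j e
  · obtain ⟨h, hh⟩ := hodd
    subst hh
    exact key_odd h hp j e

open ArithmeticFunction in
lemma dvd_moebius_sum (m : ℕ) (hm : m ≠ 0) (p : ℕ) (hp : p.Prime) :
    ((p:ℕ):ℤ)^(m.factorization p) ∣
      ∑ d ∈ m.divisors, (moebius (m / d) : ℤ) * Luc d := by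
  set k := m.factorization p with hk
  rcases Nat.eq_zero_or_pos k with hk0 | hk1
  · rw [hk0, pow_zero]; exact one_dvd _
  set n := m / p^k with hn
  have hmn : p^k * n = m := Nat.ordProj_mul_ordCompl_eq_self m p
  have hpn : ¬ p ∣ n := Nat.not_dvd_ordCompl hp hm
  have hn0 : n ≠ 0 := (Nat.ordCompl_pos p hm).ne'
  have hpk0 : p^k ≠ 0 := pow_ne_zero _ hp.pos.ne'
  set S1 := n.divisors.image (fun t => p^k * t) with hS1
  set S2 := n.divisors.image (fun t => p^(k-1) * t) with hS2
  have hsub : S1 ∪ S2 ⊆ m.divisors := by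
    intro d hd
    rw [Finset.mem_union] at hd
    rw [Nat.mem_divisors]
    refine ⟨?_, hm⟩
    rcases hd with hd | hd <;> rw [Finset.mem_image] at hd <;> obtain ⟨t, ht, rfl⟩ := hd <;>
      rw [Nat.mem_divisors] at ht
    · exact Dvd.dvd.trans (mul_dvd_mul_left _ ht.1) (dvd_of_eq hmn)
    · exact Dvd.dvd.trans (mul_dvd_mul (pow_dvd_pow p (by omega)) ht.1) (dvd_of_eq hmn)
  have hzero : ∀ d ∈ m.divisors, d ∉ S1 ∪ S2 → (moebius (m / d) : ℤ) * Luc d = 0 := by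
    intro d hd hnot
    rw [Nat.mem_divisors] at hd
    obtain ⟨hdm, _⟩ := hd
    have hd0 : d ≠ 0 := by rintro rfl; rw [zero_dvd_iff] at hdm; exact hm hdm
    set v := d.factorization p with hv
    have hvk : v ≤ k := by
      rw [hv, hk]
      exact (hp.pow_dvd_iff_le_factorization hm).mp
        (dvd_trans (Nat.ordProj_dvd d p) hdm)
    rcases Nat.lt_or_ge v (k-1) with hlt | hge
    · have hmd0 : m / d ≠ 0 := (Nat.div_ne_zero_iff_of_dvd hdm).mpr ⟨hm, hd0⟩
      have h2 : 2 ≤ (m / d).factorization p := by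
        rw [Nat.factorization_div hdm]
        simp only [Finsupp.coe_tsub, Pi.sub_apply]
        omega
      have hsq : ¬ Squarefree (m / d) := by
        intro hsq
        have hpp : p * p ∣ m / d := by
          have := (hp.pow_dvd_iff_le_factorization hmd0).mpr h2
          rwa [pow_two] at this
        exact hp.ne_one (Nat.isUnit_iff.mp (hsq p hpp))
      rw [moebius_eq_zero_of_not_squarefree hsq]
      simp
    · exfalso
      apply hnot
      set t := d / p^v with htdef
      have hdt : p^v * t = d := Nat.ordProj_mul_ordCompl_eq_self d p
      have hpt : ¬ p ∣ t := Nat.not_dvd_ordCompl hp hd0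
      have htm : t ∣ m := dvd_trans (Nat.ordCompl_dvd d p) hdm
      have hcop : Nat.Coprime t (p^k) :=
        Nat.Coprime.pow_right _ (hp.coprime_iff_not_dvd.mpr hpt).symm
      have htn : t ∣ n := by
        apply hcop.dvd_of_dvd_mul_left
        rwa [hmn]
      have htdiv : t ∈ n.divisors := Nat.mem_divisors.mpr ⟨htn, hn0⟩
      rw [Finset.mem_union]
      rcases (by omega : v = k ∨ v = k - 1) with hveq | hveq
      · left; rw [hS1, Finset.mem_image]
        exact ⟨t, htdiv, by rw [← hdt, hveq]⟩
      · right; rw [hS2, Finset.mem_image]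
        exact ⟨t, htdiv, by rw [← hdt, hveq]⟩
  rw [← Finset.sum_subset hsub hzero]
  have hdisj : Disjoint S1 S2 := by
    rw [Finset.disjoint_left]
    intro d hd1 hd2
    rw [hS1, Finset.mem_image] at hd1
    rw [hS2, Finset.mem_image] at hd2
    obtain ⟨t, ht, rfl⟩ := hd1
    obtain ⟨t', ht', heq⟩ := hd2
    rw [Nat.mem_divisors] at ht ht'
    have hpt : ¬ p ∣ t := fun hd => hpn (hd.trans ht.1)
    have hpt' : ¬ p ∣ t' := fun hd => hpn (hd.trans ht'.1)
    have hkk : p^k = p^(k-1) * p := by rw [← pow_succ]; congr 1; omega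
    rw [hkk, mul_assoc] at heq
    have ht'' : t' = p * t := Nat.eq_of_mul_eq_mul_left
      (Nat.pos_of_ne_zero (pow_ne_zero _ hp.pos.ne')) heq
    exact hpt' ⟨t, ht''⟩
  rw [Finset.sum_union hdisj]
  have hinj1 : ∑ d ∈ S1, (moebius (m / d) : ℤ) * Luc d
      = ∑ t ∈ n.divisors, (moebius (n / t) : ℤ) * Luc (p^k * t) := by
    rw [hS1, Finset.sum_image (fun a _ b _ hab => Nat.eq_of_mul_eq_mul_left (Nat.pos_of_ne_zero hpk0) hab)]
    apply Finset.sum_congr rfl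
    intro t ht
    congr 2
    rw [← hmn, Nat.mul_div_mul_left _ _ (Nat.pos_of_ne_zero hpk0)]
  have hinj2 : ∑ d ∈ S2, (moebius (m / d) : ℤ) * Luc d
      = ∑ t ∈ n.divisors, -(moebius (n / t) : ℤ) * Luc (p^(k-1) * t) := by
    rw [hS2, Finset.sum_image (fun a _ b _ hab => Nat.eq_of_mul_eq_mul_left
      (Nat.pos_of_ne_zero (pow_ne_zero _ hp.pos.ne')) hab)]
    apply Finset.sum_congr rfl
    intro t ht
    rw [Nat.mem_divisors] at ht
    have hstep : m / (p^(k-1) * t) = p * (n / t) := by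
      have hkk2 : p^k = p^(k-1) * p := by rw [← pow_succ]; congr 1; omega
      have h1 : m = p^(k-1) * (p * n) := by rw [← hmn, hkk2]; ring
      rw [h1, Nat.mul_div_mul_left _ _ (Nat.pos_of_ne_zero (pow_ne_zero _ hp.pos.ne'))]
      rw [Nat.mul_div_assoc p ht.1]
    rw [hstep]
    have hcop2 : Nat.Coprime p (n / t) :=
      hp.coprime_iff_not_dvd.mpr (fun hd => hpn (hd.trans (Nat.div_dvd_of_dvd ht.1)))
    rw [isMultiplicative_moebius.map_mul_of_coprime hcop2, moebius_apply_prime hp]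
    push_cast
    ring
  rw [hinj1, hinj2, ← Finset.sum_add_distrib]
  apply Finset.dvd_sum
  intro t ht
  have hterm : (moebius (n / t) : ℤ) * Luc (p^k * t) + -(moebius (n / t) : ℤ) * Luc (p^(k-1) * t)
      = (moebius (n / t) : ℤ) * (Luc (p^k * t) - Luc (p^(k-1) * t)) := by ring
  rw [hterm]
  apply Dvd.dvd.mul_left
  have := key p hp (k-1) t
  rwa [show k - 1 + 1 = k by omega] at this

lemma luc_three : Luc 2 = 3 := by norm_num [Luc]

theorem stmt_6 (L : ℕ → ℤ) (h1 : L 1 = 1) (h2 : L 2 = 3)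
    (hrec : ∀ m : ℕ, 3 ≤ m → L m = L (m - 1) + L (m - 2)) :
    (∀ m : ℕ, 1 ≤ m →
      (m : ℤ) ∣ ∑ d ∈ m.divisors, (ArithmeticFunction.moebius (m / d)) * L d) ∧
    (∀ p : ℕ, p.Prime → L p ≡ 1 [ZMOD p]) := by
  have hLL : ∀ d : ℕ, L (d+1) = Luc (d+1) := by
    intro d
    induction d using Nat.strong_induction_on with
    | _ d ih =>
      match d with
      | 0 => simpa [Luc] using h1
      | 1 => rw [show (1:ℕ)+1 = 2 from rfl, h2]; norm_num [Luc]
      | (n+2) =>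
        rw [hrec (n+3) (by omega)]
        have e1 : n+3-1 = n+2 := rfl
        have e2 : n+3-2 = n+1 := rfl
        rw [e1, e2, ih (n+1) (by omega), ih n (by omega)]
        rfl
  have hLL' : ∀ d : ℕ, 1 ≤ d → L d = Luc d := by
    intro d hd
    obtain ⟨e, rfl⟩ := Nat.exists_eq_add_of_le hd
    rw [add_comm]
    exact hLL e
  constructor
  · intro m hm
    have hm0 : m ≠ 0 := by omega
    have hsum : ∑ d ∈ m.divisors, (ArithmeticFunction.moebius (m/d)) * L d
        = ∑ d ∈ m.divisors, (ArithmeticFunction.moebius (m/d) : ℤ) * Luc d :=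
      Finset.sum_congr rfl (fun d hd => by rw [hLL' d (Nat.pos_of_mem_divisors hd)])
    rw [hsum]
    set Z := ∑ d ∈ m.divisors, (ArithmeticFunction.moebius (m/d) : ℤ) * Luc d with hZ
    rw [Int.natCast_dvd]
    rw [Nat.dvd_iff_prime_pow_dvd_dvd]
    intro p k hp hpk
    have hp' : p.Prime := hp
    have hk : k ≤ m.factorization p := (hp'.pow_dvd_iff_le_factorization hm0).mp hpk
    have hdvd := dvd_moebius_sum m hm0 p hp'
    have h1' : p^(m.factorization p) ∣ Z.natAbs := by
      have h2' := Int.natAbs_dvd_natAbs.mpr hdvd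
      simpa [Int.natAbs_pow] using h2'
    exact dvd_trans (pow_dvd_pow p hk) h1'
  · intro p hp
    have hkey : (p:ℤ) ∣ Luc p - 1 := by
      have := key p hp 0 1
      simpa [Luc] using this
    rw [Int.ModEq]
    have hL : L p = Luc p := hLL' p hp.one_lt.le
    rw [hL]
    have : Luc p ≡ 1 [ZMOD (p:ℤ)] := by
      rw [Int.modEq_iff_dvd]
      simpa using (dvd_neg.mpr hkey)
    exact this
end
end

section
/- Fix n ≥ 3 and let fₙ : [1,n] → [1,n] be given by fₙ(x) = x + 1 for 1 ≤ x ≤ n−1 and fₙ(x) = −(n−1)x + n² − n + 1 for n−1 ≤ x ≤ n. Then for every 1 ≤ k ≤ n−1, the equation fₙ^k(x) = x has exactly 2^k − 1 solutions in [1, n]. -/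
section Aux
variable {n : ℕ} {f : ℝ → ℝ}

private lemma aux_inv (hn : 3 ≤ n)
    (h1 : ∀ x : ℝ, 1 ≤ x → x ≤ n - 1 → f x = x + 1)
    (h2 : ∀ x : ℝ, (n : ℝ) - 1 ≤ x → x ≤ n →
      f x = -((n : ℝ) - 1) * x + n ^ 2 - n + 1)
    {x : ℝ} (hx1 : 1 ≤ x) (hx2 : x ≤ n) : 1 ≤ f x ∧ f x ≤ n := by
  have hN : (3:ℝ) ≤ n := by exact_mod_cast hn
  rcases le_or_gt x ((n:ℝ) - 1) with h | h
  · rw [h1 x hx1 h]; constructor <;> nlinarith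
  · rw [h2 x h.le hx2]; constructor <;> nlinarith

private lemma aux_iter_inv (hn : 3 ≤ n)
    (h1 : ∀ x : ℝ, 1 ≤ x → x ≤ n - 1 → f x = x + 1)
    (h2 : ∀ x : ℝ, (n : ℝ) - 1 ≤ x → x ≤ n →
      f x = -((n : ℝ) - 1) * x + n ^ 2 - n + 1)
    {x : ℝ} (hx1 : 1 ≤ x) (hx2 : x ≤ n) (t : ℕ) :
    1 ≤ f^[t] x ∧ f^[t] x ≤ n := by
  induction t with
  | zero => exact ⟨hx1, hx2⟩
  | succ t ih =>
    rw [Function.iterate_succ_apply']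
    exact aux_inv hn h1 h2 ih.1 ih.2

/-- if the first k steps stay in the left branch, f^[k] x = x + k -/
private lemma aux_plusk (hn : 3 ≤ n)
    (h1 : ∀ x : ℝ, 1 ≤ x → x ≤ n - 1 → f x = x + 1)
    (h2 : ∀ x : ℝ, (n : ℝ) - 1 ≤ x → x ≤ n →
      f x = -((n : ℝ) - 1) * x + n ^ 2 - n + 1)
    {x : ℝ} (hx1 : 1 ≤ x) (hx2 : x ≤ n) (k : ℕ)
    (hL : ∀ t < k, f^[t] x ≤ (n:ℝ) - 1) : f^[k] x = x + k := by
  induction k with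
  | zero => simp
  | succ k ih =>
    have hik := ih (fun t ht => hL t (ht.trans (Nat.lt_succ_self k)))
    rw [Function.iterate_succ_apply', hik,
      h1 _ (by push_cast; have := (aux_iter_inv hn h1 h2 hx1 hx2 k).1; rw [hik] at this; linarith [this])
        (by have := hL k (Nat.lt_succ_self k); rw [hik] at this; exact this)]
    push_cast; ring

end Aux
section Aux2
variable {n : ℕ} {f : ℝ → ℝ}

private lemma aux_diff (hn : 3 ≤ n)
    (h1 : ∀ x : ℝ, 1 ≤ x → x ≤ n - 1 → f x = x + 1)
    (h2 : ∀ x : ℝ, (n : ℝ) - 1 ≤ x → x ≤ n →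
      f x = -((n : ℝ) - 1) * x + n ^ 2 - n + 1)
    {x y : ℝ} (hx1 : 1 ≤ x) (hx2 : x ≤ n) (hy1 : 1 ≤ y) (hy2 : y ≤ n) (k : ℕ)
    (hmatch : ∀ t < k, (f^[t] x ≤ (n:ℝ) - 1 ↔ f^[t] y ≤ (n:ℝ) - 1)) :
    ∃ c : ℝ, f^[k] x - f^[k] y = c * (x - y) ∧ 1 ≤ |c| ∧
      ((∃ t < k, ¬ f^[t] x ≤ (n:ℝ) - 1) → (n:ℝ) - 1 ≤ |c|) := by
  have hN : (3:ℝ) ≤ n := by exact_mod_cast hn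
  induction k with
  | zero => exact ⟨1, by simp⟩
  | succ k ih =>
    obtain ⟨c, hc, hc1, hc2⟩ := ih (fun t ht => hmatch t (ht.trans (Nat.lt_succ_self k)))
    have hxk := aux_iter_inv hn h1 h2 hx1 hx2 k
    have hyk := aux_iter_inv hn h1 h2 hy1 hy2 k
    by_cases hb : f^[k] x ≤ (n:ℝ) - 1
    · have hby : f^[k] y ≤ (n:ℝ) - 1 := (hmatch k (Nat.lt_succ_self k)).1 hb
      refine ⟨c, ?_, hc1, ?_⟩
      · rw [Function.iterate_succ_apply', Function.iterate_succ_apply',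
          h1 _ hxk.1 hb, h1 _ hyk.1 hby]
        linarith [hc]
      · rintro ⟨t, ht, hts⟩
        rcases Nat.lt_succ_iff_lt_or_eq.1 ht with h | h
        · exact hc2 ⟨t, h, hts⟩
        · exact absurd (h ▸ hb) hts
    · have hby : ¬ f^[k] y ≤ (n:ℝ) - 1 := fun h => hb ((hmatch k (Nat.lt_succ_self k)).2 h)
      refine ⟨-((n:ℝ) - 1) * c, ?_, ?_, ?_⟩
      · rw [Function.iterate_succ_apply', Function.iterate_succ_apply',
          h2 _ (le_of_not_ge hb) hxk.2, h2 _ (le_of_not_ge hby) hyk.2]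
        linear_combination (1 - (n:ℝ)) * hc
      · rw [abs_mul, abs_neg, abs_of_nonneg (by linarith : (0:ℝ) ≤ (n:ℝ)-1)]
        nlinarith [hc1, abs_nonneg c]
      · intro _
        rw [abs_mul, abs_neg, abs_of_nonneg (by linarith : (0:ℝ) ≤ (n:ℝ)-1)]
        nlinarith [hc1, abs_nonneg c]

end Aux2
section Aux3
variable {n : ℕ} {f : ℝ → ℝ}

private lemma aux_one (hn : 3 ≤ n)
    (h1 : ∀ x : ℝ, 1 ≤ x → x ≤ n - 1 → f x = x + 1)
    (j : ℕ) (hj : j ≤ n - 2) : f^[j] (1:ℝ) = 1 + j := by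
  induction j with
  | zero => simp
  | succ j ih =>
    have hj' : j ≤ n - 2 := by omega
    have hjr : (j:ℝ) ≤ (n:ℝ) - 2 := by
      have : (j:ℝ) + 2 ≤ (n:ℝ) := by exact_mod_cast (by omega : j + 2 ≤ n)
      linarith
    rw [Function.iterate_succ_apply', ih hj',
      h1 _ (by linarith [Nat.cast_nonneg (α := ℝ) j]) (by linarith)]
    push_cast; ring

private lemma aux_noboundary (hn : 3 ≤ n)
    (h1 : ∀ x : ℝ, 1 ≤ x → x ≤ n - 1 → f x = x + 1)
    (h2 : ∀ x : ℝ, (n : ℝ) - 1 ≤ x → x ≤ n →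
      f x = -((n : ℝ) - 1) * x + n ^ 2 - n + 1)
    {k t : ℕ} (hk1 : 1 ≤ k) (hkn : k ≤ n - 1) {x : ℝ}
    (hx1 : 1 ≤ x) (hx2 : x ≤ n) (hfix : f^[k] x = x) (ht : t < k) :
    f^[t] x ≠ (n:ℝ) - 1 := by
  have hN : (3:ℝ) ≤ n := by exact_mod_cast hn
  intro hb
  have hyfix : f^[k] ((n:ℝ) - 1) = (n:ℝ) - 1 := by
    rw [← hb, ← Function.iterate_add_apply, Nat.add_comm,
      Function.iterate_add_apply, hfix]
  have hf1 : f ((n:ℝ) - 1) = n := by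
    rw [h1 _ (by linarith) le_rfl]; ring
  rcases Nat.exists_eq_add_of_le hk1 with ⟨m, rfl⟩
  rw [Nat.add_comm, Function.iterate_add_apply, Function.iterate_one, hf1] at hyfix
  rcases Nat.eq_zero_or_pos m with rfl | hm
  · simp at hyfix; linarith
  · rcases Nat.exists_eq_add_of_le hm with ⟨p, rfl⟩
    have hfn : f (n:ℝ) = 1 := by
      rw [h2 _ (by linarith) le_rfl]; ring
    have hms : Nat.succ 0 + p = p + 1 := by omega
    rw [hms, Function.iterate_succ_apply, hfn] at hyfix
    have hp : p ≤ n - 2 := by omega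
    rw [aux_one hn h1 p hp] at hyfix
    have : (p:ℝ) + 2 = (n:ℝ) := by linarith
    have : p + 2 = n := by exact_mod_cast this
    omega

end Aux3
section Aux4
variable {n : ℕ} {f : ℝ → ℝ}

set_option maxHeartbeats 1000000 in
private lemma aux_interval (hn : 3 ≤ n)
    (h1 : ∀ x : ℝ, 1 ≤ x → x ≤ n - 1 → f x = x + 1)
    (h2 : ∀ x : ℝ, (n : ℝ) - 1 ≤ x → x ≤ n →
      f x = -((n : ℝ) - 1) * x + n ^ 2 - n + 1)
    (s : ℕ → Bool) :
    ∀ k : ℕ, k ≤ n - 1 →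
    ∃ (α β c d : ℝ) (j : ℕ),
      1 ≤ α ∧ α ≤ β ∧ β ≤ n ∧
      (∀ x, α ≤ x → x ≤ β → ∀ t < k,
        (s t = false → 1 ≤ f^[t] x ∧ f^[t] x ≤ (n:ℝ) - 1) ∧
        (s t = true → (n:ℝ) - 1 ≤ f^[t] x ∧ f^[t] x ≤ n)) ∧
      (∀ x, α ≤ x → x ≤ β → f^[k] x = c * x + d) ∧
      ((1 ≤ c ∧ c * α + d = 1 + j ∧ c * β + d = n) ∨
       (c ≤ -1 ∧ c * α + d = n ∧ c * β + d = 1 + j)) ∧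
      j ≤ k ∧ (∀ t, k - j ≤ t → t < k → s t = false) ∧
      ((∀ t < k, s t = false) ∨ (n:ℝ) - 1 ≤ |c|) := by
  have hN : (3:ℝ) ≤ n := by exact_mod_cast hn
  intro k
  induction k with
  | zero =>
    intro _
    refine ⟨1, n, 1, 0, 0, le_rfl, by linarith, le_rfl, ?_, ?_, ?_, ?_, ?_, ?_⟩
    · intro x _ _ t ht; omega
    · intro x _ _; simp
    · left; norm_num
    · omega
    · intro t ht1 ht2; omega
    · left; intro t ht; omega
  | succ k ih =>
    intro hk1
    obtain ⟨α, β, c, d, j, hα1, hαβ, hβn, hdom, haff, hor, hjk, htrail, hlast⟩ :=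
      ih (by omega)
    have hjn : (j:ℝ) + 2 ≤ n := by exact_mod_cast (by omega : j + 2 ≤ n)
    rcases hor with ⟨hc1, hgα, hgβ⟩ | ⟨hc1, hgα, hgβ⟩
    · -- increasing case
      have hc0 : (0:ℝ) < c := by linarith
      set w : ℝ := ((n:ℝ) - 1 - d) / c with hw_def
      have hw : c * w + d = (n:ℝ) - 1 := by
        rw [hw_def]; field_simp; ring
      have hαw : α ≤ w := by nlinarith
      have hwβ : w ≤ β := by nlinarith
      cases hsk : s k with
      | false =>
        refine ⟨α, w, c, d + 1, j + 1, hα1, hαw, by linarith, ?_, ?_, ?_, by omega, ?_, ?_⟩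
        · intro x hx1 hx2 t ht
          rcases Nat.lt_succ_iff_lt_or_eq.1 ht with h | h
          · exact hdom x hx1 (hx2.trans hwβ) t h
          · subst h
            constructor
            · intro _
              rw [haff x hx1 (hx2.trans hwβ)]
              constructor <;> nlinarith
            · intro hcon; rw [hsk] at hcon; simp at hcon
        · intro x hx1 hx2
          rw [Function.iterate_succ_apply', haff x hx1 (hx2.trans hwβ),
            h1 _ (by nlinarith) (by nlinarith)]
          ring
        · left
          refine ⟨hc1, ?_, by linarith⟩
          push_cast; linarith
        · intro t ht1 ht2
          rcases Nat.lt_succ_iff_lt_or_eq.1 ht2 with h | h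
          · exact htrail t (by omega) h
          · subst h; exact hsk
        · rcases hlast with hall | habs
          · left; intro t ht
            rcases Nat.lt_succ_iff_lt_or_eq.1 ht with h | h
            · exact hall t h
            · subst h; exact hsk
          · right; exact habs
      | true =>
        refine ⟨w, β, -((n:ℝ)-1) * c, -((n:ℝ)-1) * d + (n:ℝ)^2 - n + 1, 0,
          by linarith, hwβ, hβn, ?_, ?_, ?_, by omega, by omega, ?_⟩
        · intro x hx1 hx2 t ht
          rcases Nat.lt_succ_iff_lt_or_eq.1 ht with h | h
          · exact hdom x (hαw.trans hx1) hx2 t h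
          · subst h
            constructor
            · intro hcon; rw [hsk] at hcon; simp at hcon
            · intro _
              rw [haff x (hαw.trans hx1) hx2]
              constructor <;> nlinarith
        · intro x hx1 hx2
          rw [Function.iterate_succ_apply', haff x (hαw.trans hx1) hx2,
            h2 _ (by nlinarith) (by nlinarith)]
          ring
        · right
          refine ⟨by nlinarith, ?_, ?_⟩
          · push_cast; linear_combination ((1:ℝ) - n) * hw
          · push_cast; linear_combination ((1:ℝ) - n) * hgβ
        · right
          have habs : |(-((n:ℝ)-1) * c)| = ((n:ℝ)-1) * c := by
            rw [abs_of_nonpos (by nlinarith)]; ring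
          rw [habs]; nlinarith
    · -- decreasing case
      have hc0 : c < 0 := by linarith
      set w : ℝ := ((n:ℝ) - 1 - d) / c with hw_def
      have hw : c * w + d = (n:ℝ) - 1 := by
        rw [hw_def]; field_simp [hc0.ne]; ring
      have hαw : α ≤ w := by nlinarith
      have hwβ : w ≤ β := by nlinarith
      cases hsk : s k with
      | false =>
        refine ⟨w, β, c, d + 1, j + 1, by linarith, hwβ, hβn, ?_, ?_, ?_, by omega, ?_, ?_⟩
        · intro x hx1 hx2 t ht
          rcases Nat.lt_succ_iff_lt_or_eq.1 ht with h | h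
          · exact hdom x (hαw.trans hx1) hx2 t h
          · subst h
            constructor
            · intro _
              rw [haff x (hαw.trans hx1) hx2]
              constructor <;> nlinarith
            · intro hcon; rw [hsk] at hcon; simp at hcon
        · intro x hx1 hx2
          rw [Function.iterate_succ_apply', haff x (hαw.trans hx1) hx2,
            h1 _ (by nlinarith) (by nlinarith)]
          ring
        · right
          refine ⟨hc1, by linarith, ?_⟩
          push_cast; linarith
        · intro t ht1 ht2
          rcases Nat.lt_succ_iff_lt_or_eq.1 ht2 with h | h
          · exact htrail t (by omega) h
          · subst h; exact hsk
        · rcases hlast with hall | habs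
          · left; intro t ht
            rcases Nat.lt_succ_iff_lt_or_eq.1 ht with h | h
            · exact hall t h
            · subst h; exact hsk
          · right; exact habs
      | true =>
        refine ⟨α, w, -((n:ℝ)-1) * c, -((n:ℝ)-1) * d + (n:ℝ)^2 - n + 1, 0,
          hα1, hαw, by linarith, ?_, ?_, ?_, by omega, by omega, ?_⟩
        · intro x hx1 hx2 t ht
          rcases Nat.lt_succ_iff_lt_or_eq.1 ht with h | h
          · exact hdom x hx1 (hx2.trans hwβ) t h
          · subst h
            constructor
            · intro hcon; rw [hsk] at hcon; simp at hcon
            · intro _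
              rw [haff x hx1 (hx2.trans hwβ)]
              constructor <;> nlinarith
        · intro x hx1 hx2
          rw [Function.iterate_succ_apply', haff x hx1 (hx2.trans hwβ),
            h2 _ (by nlinarith) (by nlinarith)]
          ring
        · left
          refine ⟨by nlinarith, ?_, ?_⟩
          · push_cast; linear_combination ((1:ℝ) - n) * hgα
          · push_cast; linear_combination ((1:ℝ) - n) * hw
        · right
          have habs : |(-((n:ℝ)-1) * c)| = -(((n:ℝ)-1) * c) := by
            rw [abs_of_nonneg (by nlinarith)]; ring
          rw [habs]; nlinarith
end Aux4
section Aux5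
variable {n : ℕ} {f : ℝ → ℝ}

set_option maxHeartbeats 1600000 in
private lemma aux_exists (hn : 3 ≤ n)
    (h1 : ∀ x : ℝ, 1 ≤ x → x ≤ n - 1 → f x = x + 1)
    (h2 : ∀ x : ℝ, (n : ℝ) - 1 ≤ x → x ≤ n →
      f x = -((n : ℝ) - 1) * x + n ^ 2 - n + 1)
    (s : ℕ → Bool) {k : ℕ} (hk1 : 1 ≤ k) (hkn : k ≤ n - 1)
    {i : ℕ} (hik : i < k) (hi : s i = true) :
    ∃ x : ℝ, 1 ≤ x ∧ x ≤ n ∧ f^[k] x = x ∧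
      ∀ t < k, (s t = true ↔ ¬ f^[t] x ≤ (n:ℝ) - 1) := by
  have hN : (3:ℝ) ≤ n := by exact_mod_cast hn
  obtain ⟨α, β, c, d, j, hα1, hαβ, hβn, hdom, haff, hor, hjk, htrail, hlast⟩ :=
    aux_interval hn h1 h2 s k hkn
  -- least index with s = true
  have hex : ∃ m, s m = true := ⟨i, hi⟩
  set i₀ := Nat.find hex with hi0_def
  have hi0 : s i₀ = true := Nat.find_spec hex
  have hi0le : i₀ ≤ i := Nat.find_min' hex hi
  have hi0k : i₀ < k := lt_of_le_of_lt hi0le hik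
  have hi0min : ∀ t < i₀, s t = false := by
    intro t ht
    have := Nat.find_min hex ht
    simpa using this
  -- i₀ + j ≤ k - 1
  have hij : i₀ + j + 2 ≤ n := by
    have : i₀ < k - j := by
      by_contra hcon
      have := htrail i₀ (by omega) hi0k
      rw [hi0] at this; simp at this
    omega
  have hijr : (i₀:ℝ) + (j:ℝ) + 2 ≤ n := by exact_mod_cast hij
  -- α ≥ n - 1 - i₀ ≥ 1 + j
  have hkey : ∀ x, α ≤ x → x ≤ β → (n:ℝ) - 1 - i₀ ≤ x := by
    intro x hx1 hx2
    have hplus : f^[i₀] x = x + i₀ := by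
      apply aux_plusk hn h1 h2 (by linarith) (by linarith)
      intro t ht
      exact ((hdom x hx1 hx2 t (ht.trans hi0k)).1 (hi0min t ht)).2
    have := ((hdom x hx1 hx2 i₀ hi0k).2 hi0).1
    rw [hplus] at this
    linarith
  have hαj : 1 + (j:ℝ) ≤ α := by
    have := hkey α le_rfl hαβ
    linarith
  -- the slope is big
  have hcbig : (n:ℝ) - 1 ≤ |c| := by
    rcases hlast with hall | h
    · have := hall i₀ hi0k; rw [hi0] at this; simp at this
    · exact h
  -- fixed point of the affine map
  have hcne : (1:ℝ) - c ≠ 0 := by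
    intro h
    have : c = 1 := by linarith
    rw [this] at hcbig; simp at hcbig; linarith
  set x₀ : ℝ := d / (1 - c) with hx0_def
  have hfix0 : c * x₀ + d = x₀ := by
    rw [hx0_def]; field_simp; ring
  have hdx : d = x₀ * (1 - c) := by linear_combination hfix0
  have hx0mem : α ≤ x₀ ∧ x₀ ≤ β := by
    rcases hor with ⟨hc1, hgα, hgβ⟩ | ⟨hc1, hgα, hgβ⟩
    · have hc1' : (1:ℝ) < c := by
        rcases abs_cases c with ⟨h, _⟩ | ⟨h, _⟩ <;> linarith
      have h1c : 1 - c < 0 := by linarith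
      constructor
      · have hd : d ≤ (1 - c) * α := by nlinarith [hgα, hαj]
        nlinarith [hd, hdx, h1c]
      · have hd : (1 - c) * β ≤ d := by nlinarith [hgβ, hβn]
        nlinarith [hd, hdx, h1c]
    · have h1c : (0:ℝ) < 1 - c := by linarith
      constructor
      · have hd : (1 - c) * α ≤ d := by nlinarith [hgα, hβn]
        nlinarith [hd, hdx, h1c]
      · have hd : d ≤ (1 - c) * β := by nlinarith [hgβ, hαj]
        nlinarith [hd, hdx, h1c]
  have hx01 : 1 ≤ x₀ := by linarith [hx0mem.1]
  have hx0n : x₀ ≤ n := by linarith [hx0mem.2]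
  have hfix : f^[k] x₀ = x₀ := by
    rw [haff x₀ hx0mem.1 hx0mem.2]; exact hfix0
  refine ⟨x₀, hx01, hx0n, hfix, ?_⟩
  intro t ht
  have hnb := aux_noboundary hn h1 h2 hk1 hkn hx01 hx0n hfix ht
  constructor
  · intro hst hle
    have := ((hdom x₀ hx0mem.1 hx0mem.2 t ht).2 hst).1
    exact hnb (le_antisymm hle this)
  · intro hgt
    cases hst : s t with
    | false =>
      have := ((hdom x₀ hx0mem.1 hx0mem.2 t ht).1 hst).2
      exact absurd this hgt
    | true => rfl
end Aux5
theorem stmt_8 (n : ℕ) (hn : 3 ≤ n) (f : ℝ → ℝ)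
    (h1 : ∀ x : ℝ, 1 ≤ x → x ≤ n - 1 → f x = x + 1)
    (h2 : ∀ x : ℝ, (n : ℝ) - 1 ≤ x → x ≤ n →
      f x = -((n : ℝ) - 1) * x + n ^ 2 - n + 1) :
    ∀ k : ℕ, 1 ≤ k → k ≤ n - 1 →
      {x : ℝ | x ∈ Set.Icc 1 (n : ℝ) ∧ f^[k] x = x}.ncard = 2 ^ k - 1 := by
  intro k hk1 hkn
  classical
  have hN : (3:ℝ) ≤ n := by exact_mod_cast hn
  set S : Set ℝ := {x : ℝ | x ∈ Set.Icc 1 (n : ℝ) ∧ f^[k] x = x} with hS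
  set Φ : ℝ → (Fin k → Bool) :=
    fun x t => if f^[t.1] x ≤ (n:ℝ) - 1 then false else true with hΦ
  set T : Set (Fin k → Bool) := {(fun _ => false)}ᶜ with hT
  have hkr : (1:ℝ) ≤ k := by exact_mod_cast hk1
  -- maps to
  have hmaps : Set.MapsTo Φ S T := by
    intro x hx hcon
    simp only [hT, Set.mem_compl_iff, Set.mem_singleton_iff, not_not] at hcon
    obtain ⟨⟨hx1, hxn⟩, hfix⟩ := hx
    have hall : ∀ t < k, f^[t] x ≤ (n:ℝ) - 1 := by
      intro t ht
      have := congrFun hcon ⟨t, ht⟩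
      simp only [hΦ] at this
      by_contra hc
      rw [if_neg hc] at this
      simp at this
    have := aux_plusk hn h1 h2 hx1 hxn k hall
    rw [hfix] at this
    linarith
  -- injective
  have hinj : Set.InjOn Φ S := by
    intro x hx y hy hxy
    obtain ⟨⟨hx1, hxn⟩, hfx⟩ := hx
    obtain ⟨⟨hy1, hyn⟩, hfy⟩ := hy
    have hmatch : ∀ t < k, (f^[t] x ≤ (n:ℝ) - 1 ↔ f^[t] y ≤ (n:ℝ) - 1) := by
      intro t ht
      have := congrFun hxy ⟨t, ht⟩
      simp only [hΦ] at this
      by_cases hbx : f^[t] x ≤ (n:ℝ) - 1 <;> by_cases hby : f^[t] y ≤ (n:ℝ) - 1 <;>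
        simp [hbx, hby] at this ⊢
    obtain ⟨c, hc, hc1, hc2⟩ := aux_diff hn h1 h2 hx1 hxn hy1 hyn k hmatch
    rw [hfx, hfy] at hc
    by_cases hall : ∀ t < k, f^[t] x ≤ (n:ℝ) - 1
    · have := aux_plusk hn h1 h2 hx1 hxn k hall
      rw [hfx] at this
      linarith
    · push_neg at hall
      obtain ⟨t, ht, hts⟩ := hall
      have hcb := hc2 ⟨t, ht, not_le.2 hts⟩
      have hcne : c ≠ 1 := by
        intro h; rw [h] at hcb; simp at hcb; linarith
      by_contra hne
      have : (1 - c) * (x - y) = 0 := by linarith [hc]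
      rcases mul_eq_zero.1 this with h | h
      · exact hcne (by linarith)
      · exact hne (by linarith)
  -- surjective
  have hsurj : Set.SurjOn Φ S T := by
    intro s hs
    simp only [hT, Set.mem_compl_iff, Set.mem_singleton_iff] at hs
    have : ∃ i : Fin k, s i = true := by
      by_contra hc
      push_neg at hc
      exact hs (funext fun i => by simpa using hc i)
    obtain ⟨i, hi⟩ := this
    set s' : ℕ → Bool := fun t => if h : t < k then s ⟨t, h⟩ else false with hs'
    have hi' : s' i.1 = true := by simp [hs', i.2, hi]
    obtain ⟨x, hx1, hxn, hfix, hit⟩ := aux_exists hn h1 h2 s' hk1 hkn i.2 hi'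
    refine ⟨x, ⟨⟨hx1, hxn⟩, hfix⟩, ?_⟩
    funext t
    have h := hit t.1 t.2
    have hst : s' t.1 = s t := by simp [hs', t.2]
    rw [hst] at h
    simp only [hΦ]
    by_cases hb : f^[t.1] x ≤ (n:ℝ) - 1
    · rw [if_pos hb]
      cases hc : s t
      · rfl
      · exact absurd hb (h.1 hc)
    · rw [if_neg hb]
      cases hc : s t
      · rw [hc] at h
        simp only [Bool.false_eq_true, false_iff, not_not] at h
        exact absurd h hb
      · rfl
  have hbij : Set.BijOn Φ S T := ⟨hmaps, hinj, hsurj⟩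
  have hcard : S.ncard = T.ncard := by
    rw [← hbij.image_eq, Set.ncard_image_of_injOn hinj]
  rw [hcard, hT]
  rw [show ({(fun _ => false)} : Set (Fin k → Bool))ᶜ = Set.univ \ {(fun _ => false)} by
        rw [Set.compl_eq_univ_diff],
    Set.ncard_diff (Set.subset_univ _) (Set.finite_singleton _),
    Set.ncard_univ, Set.ncard_singleton, Nat.card_eq_fintype_card]
  simp
end

section
/- Fix n ≥ 3 and let fₙ : [1,n] → [1,n] be given by fₙ(x) = x + 1 for 1 ≤ x ≤ n−1 and fₙ(x) = −(n−1)x + n² − n + 1 for n−1 ≤ x ≤ n. Let c_{k,n} denote the number of solutions of fₙ^k(x) = x in [1, n]. Then c_{k,n} is finite for all k ≥ 1 and c_{k,n} = ∑_{i=1}^{n-1} c_{k−i,n} for all k ≥ n. -/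
open scoped NNReal

namespace Stmt9

/-- Admissible periodic itinerary words. -/
def IsWord (n k : ℕ) (w : ℕ → ℕ) : Prop :=
  (∀ i, w (i + k) = w i) ∧ (∀ i, 1 ≤ w i ∧ w i ≤ n - 1) ∧
  (∀ i, w i = n - 1 ∨ w (i + 1) = w i + 1)

/-- Inverse branches. -/
noncomputable def g (n j : ℕ) (y : ℝ) : ℝ :=
  if j = n - 1 then ((n:ℝ)^2 - (n:ℝ) + 1 - y)/((n:ℝ)-1) else y - 1

/-- `comp n w i m = g (w i) ∘ ⋯ ∘ g (w (i+m-1))`. -/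
noncomputable def comp (n : ℕ) (w : ℕ → ℕ) : ℕ → ℕ → ℝ → ℝ
  | _, 0 => id
  | i, (m+1) => g n (w i) ∘ comp n w (i+1) m

lemma comp_zero (n : ℕ) (w : ℕ → ℕ) (i : ℕ) : comp n w i 0 = id := rfl

lemma comp_succ (n : ℕ) (w : ℕ → ℕ) (i m : ℕ) :
    comp n w i (m+1) = g n (w i) ∘ comp n w (i+1) m := rfl

lemma comp_succ_right (n : ℕ) (w : ℕ → ℕ) (i m : ℕ) :
    comp n w i (m+1) = comp n w i m ∘ g n (w (i+m)) := by
  induction m generalizing i with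
  | zero => simp [comp_succ, comp_zero]
  | succ m ih =>
      rw [comp_succ, ih (i+1), comp_succ, show i + (m+1) = i+1+m from by omega]
      rfl

lemma lip_g (n : ℕ) (hn : 3 ≤ n) (j : ℕ) : LipschitzWith 1 (g n j) := by
  have hr : (3:ℝ) ≤ (n:ℝ) := by exact_mod_cast hn
  apply LipschitzWith.of_dist_le_mul
  intro x y
  simp only [g]
  split
  · have h1 : (1:ℝ) ≤ (n:ℝ) - 1 := by linarith
    rw [Real.dist_eq, Real.dist_eq, div_sub_div_same, abs_div]
    rw [abs_of_pos (by linarith : (0:ℝ) < (n:ℝ)-1)]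
    have : |(n:ℝ)^2 - n + 1 - x - ((n:ℝ)^2 - n + 1 - y)| = |x - y| := by
      rw [show (n:ℝ)^2 - n + 1 - x - ((n:ℝ)^2 - n + 1 - y) = -(x - y) by ring, abs_neg]
    rw [this, NNReal.coe_one, one_mul]
    exact div_le_self (abs_nonneg _) h1
  · simp [Real.dist_eq]

lemma lip_g_half (n : ℕ) (hn : 3 ≤ n) : LipschitzWith 2⁻¹ (g n (n-1)) := by
  have hr : (3:ℝ) ≤ (n:ℝ) := by exact_mod_cast hn
  apply LipschitzWith.of_dist_le_mul
  intro x y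
  simp only [g, if_pos rfl, if_true]
  rw [Real.dist_eq, Real.dist_eq, div_sub_div_same, abs_div]
  rw [abs_of_pos (by linarith : (0:ℝ) < (n:ℝ)-1)]
  have heq : |(n:ℝ)^2 - n + 1 - x - ((n:ℝ)^2 - n + 1 - y)| = |x - y| := by
    rw [show (n:ℝ)^2 - n + 1 - x - ((n:ℝ)^2 - n + 1 - y) = -(x - y) by ring, abs_neg]
  rw [heq]
  have hc : ((2⁻¹ : ℝ≥0) : ℝ) = 2⁻¹ := by norm_num
  rw [hc]
  have hxy := abs_nonneg (x-y)
  rw [div_le_iff₀ (by linarith : (0:ℝ) < (n:ℝ)-1)]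
  nlinarith

lemma lip_comp (n : ℕ) (hn : 3 ≤ n) (w : ℕ → ℕ) (i m : ℕ) :
    LipschitzWith 1 (comp n w i m) := by
  induction m generalizing i with
  | zero => exact LipschitzWith.id
  | succ m ih =>
      rw [comp_succ]
      simpa using (lip_g n hn (w i)).comp (ih (i+1))

lemma lip_comp_half (n : ℕ) (hn : 3 ≤ n) (w : ℕ → ℕ) (i m : ℕ)
    (h : ∃ t, t < m ∧ w (i+t) = n-1) : LipschitzWith 2⁻¹ (comp n w i m) := by
  induction m generalizing i with
  | zero => obtain ⟨t, ht, _⟩ := h; omega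
  | succ m ih =>
      rw [comp_succ]
      by_cases hwi : w i = n - 1
      · have := (lip_g_half n hn).comp (lip_comp n hn w (i+1) m)
        rw [hwi]
        simpa using this
      · obtain ⟨t, ht, hwt⟩ := h
        have ht0 : t ≠ 0 := by rintro rfl; simp at hwt; exact hwi hwt
        have : ∃ t', t' < m ∧ w ((i+1)+t') = n-1 := ⟨t-1, by omega, by
          have : (i+1) + (t-1) = i + t := by omega
          rw [this]; exact hwt⟩
        simpa using (lip_g n hn (w i)).comp (ih (i+1) this)

section
variable {n k : ℕ} {w : ℕ → ℕ} (hn : 3 ≤ n) (hw : IsWord n k w) (hk : 1 ≤ k)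

lemma word_ascend (hw : IsWord n k w) (i : ℕ) :
    ∀ t, (∀ s, s < t → w (i+s) ≠ n-1) → w (i+t) = w i + t := by
  intro t
  induction t with
  | zero => simp
  | succ t ih =>
      intro h
      have h1 : w (i+t) = w i + t := ih (fun s hs => h s (by omega))
      have h2 : w (i+t+1) = w (i+t) + 1 := by
        rcases hw.2.2 (i+t) with h' | h'
        · exact absurd h' (h t (by omega))
        · exact h'
      rw [show i + (t+1) = i + t + 1 from by omega, h2, h1]
      omega

lemma word_window (hw : IsWord n k w) (hk : 1 ≤ k) (i : ℕ) :
    ∃ t, t < k ∧ w (i+t) = n-1 := by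
  by_contra h
  push_neg at h
  have := word_ascend hw i k (fun s hs => h s hs)
  rw [hw.1 i] at this
  omega

lemma contr (hn : 3 ≤ n) (hw : IsWord n k w) (hk : 1 ≤ k) (i : ℕ) :
    ContractingWith 2⁻¹ (comp n w i k) :=
  ⟨by rw [← NNReal.coe_lt_coe]; norm_num, lip_comp_half n hn w i k (word_window hw hk i)⟩

/-- The periodic point with itinerary `w`, at time `i`. -/
noncomputable def pt (hn : 3 ≤ n) (hw : IsWord n k w) (hk : 1 ≤ k) (i : ℕ) : ℝ :=
  ContractingWith.fixedPoint (comp n w i k) (contr hn hw hk i)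

lemma comp_shift (hw : IsWord n k w) (m : ℕ) : ∀ i, comp n w (i+k) m = comp n w i m := by
  induction m with
  | zero => intro i; rfl
  | succ m ih =>
      intro i
      rw [comp_succ, comp_succ, hw.1 i, show i+k+1 = (i+1)+k from by omega, ih (i+1)]

lemma pt_fixed (hn : 3 ≤ n) (hw : IsWord n k w) (hk : 1 ≤ k) (i : ℕ) :
    comp n w i k (pt hn hw hk i) = pt hn hw hk i :=
  ContractingWith.fixedPoint_isFixedPt (contr hn hw hk i)

lemma pt_succ (hn : 3 ≤ n) (hw : IsWord n k w) (hk : 1 ≤ k) (i : ℕ) :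
    g n (w i) (pt hn hw hk (i+1)) = pt hn hw hk i := by
  apply ContractingWith.fixedPoint_unique
  have h1 : comp n w i k (g n (w i) (pt hn hw hk (i+1)))
      = g n (w i) (comp n w (i+1) k (pt hn hw hk (i+1))) := by
    have e1 : comp n w i (k+1) = comp n w i k ∘ g n (w (i+k)) := comp_succ_right n w i k
    have e2 : comp n w i (k+1) = g n (w i) ∘ comp n w (i+1) k := comp_succ n w i k
    rw [hw.1 i] at e1
    have := e1.symm.trans e2
    exact congrFun this (pt hn hw hk (i+1))
  rw [Function.IsFixedPt, h1, pt_fixed]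

lemma pt_period (hn : 3 ≤ n) (hw : IsWord n k w) (hk : 1 ≤ k) (i : ℕ) :
    pt hn hw hk (i+k) = pt hn hw hk i := by
  symm
  apply ContractingWith.fixedPoint_unique
  rw [Function.IsFixedPt, comp_shift hw k i, pt_fixed]

lemma cast_sub_one (hn : 3 ≤ n) : ((n-1 : ℕ) : ℝ) = (n:ℝ) - 1 := by
  rw [Nat.cast_sub (by omega : 1 ≤ n), Nat.cast_one]

section Dyn

variable {f : ℝ → ℝ}

lemma gtop_mem (hn : 3 ≤ n) {y : ℝ} (hy1 : 1 ≤ y) (hy2 : y ≤ n) :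
    (n:ℝ) - 1 ≤ g n (n-1) y ∧ g n (n-1) y ≤ n := by
  have hr : (3:ℝ) ≤ n := by exact_mod_cast hn
  have hpos : (0:ℝ) < (n:ℝ)-1 := by linarith
  constructor
  · rw [g, if_pos rfl, le_div_iff₀ hpos]; nlinarith
  · rw [g, if_pos rfl, div_le_iff₀ hpos]; nlinarith

lemma gtop_f (hn : 3 ≤ n)
    (h2 : ∀ x : ℝ, (n : ℝ) - 1 ≤ x → x ≤ n → f x = -((n : ℝ) - 1) * x + n ^ 2 - n + 1)
    {y : ℝ} (hy1 : 1 ≤ y) (hy2 : y ≤ n) : f (g n (n-1) y) = y := by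
  have hm := gtop_mem hn hy1 hy2
  have hr : (3:ℝ) ≤ n := by exact_mod_cast hn
  have hpos : ((n:ℝ)-1) ≠ 0 := by linarith
  rw [h2 _ hm.1 hm.2, g, if_pos rfl]
  field_simp
  ring

lemma g_step (hn : 3 ≤ n) (hw : IsWord n k w)
    (h1 : ∀ x : ℝ, 1 ≤ x → x ≤ (n:ℝ) - 1 → f x = x + 1)
    (h2 : ∀ x : ℝ, (n : ℝ) - 1 ≤ x → x ≤ n → f x = -((n : ℝ) - 1) * x + n ^ 2 - n + 1)
    (i : ℕ) {y : ℝ} (hy : y ∈ Set.Icc ((w (i+1)):ℝ) ((w (i+1) : ℝ) + 1)) :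
    g n (w i) y ∈ Set.Icc ((w i):ℝ) ((w i : ℝ) + 1) ∧ f (g n (w i) y) = y := by
  have hr : (3:ℝ) ≤ n := by exact_mod_cast hn
  have hlo : (1:ℝ) ≤ (w (i+1) : ℝ) := by exact_mod_cast (hw.2.1 (i+1)).1
  have hhi : ((w (i+1)) : ℝ) ≤ (n:ℝ) - 1 := by
    rw [← cast_sub_one hn]; exact_mod_cast (hw.2.1 (i+1)).2
  have hy1 : 1 ≤ y := le_trans hlo hy.1
  have hy2 : y ≤ (n:ℝ) := by have := hy.2; linarith
  rcases hw.2.2 i with hcase | hcase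
  · rw [hcase]
    rw [show ((n-1:ℕ):ℝ) = (n:ℝ)-1 from cast_sub_one hn]
    have hm := gtop_mem hn hy1 hy2
    exact ⟨⟨hm.1, by linarith [hm.2]⟩, gtop_f hn h2 hy1 hy2⟩
  · have hne : w i ≠ n - 1 := by
      have h2' := (hw.2.1 (i+1)).2
      omega
    have hgy : g n (w i) y = y - 1 := by rw [g, if_neg hne]
    have hc : ((w (i+1)) : ℝ) = (w i : ℝ) + 1 := by exact_mod_cast hcase
    rw [hc] at hy hhi
    have hlo0 : (1:ℝ) ≤ (w i : ℝ) := by exact_mod_cast (hw.2.1 i).1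
    have hf : f (y - 1) = y := by
      rw [h1 (y-1) (by linarith [hy.1, hlo0]) (by linarith [hy.2, hhi])]
      ring
    exact ⟨⟨by linarith [hy.1], by linarith [hy.2]⟩, by rw [hgy]; exact hf⟩

lemma comp_mapsTo (hn : 3 ≤ n) (hw : IsWord n k w)
    (h1 : ∀ x : ℝ, 1 ≤ x → x ≤ (n:ℝ) - 1 → f x = x + 1)
    (h2 : ∀ x : ℝ, (n : ℝ) - 1 ≤ x → x ≤ n → f x = -((n : ℝ) - 1) * x + n ^ 2 - n + 1) :
    ∀ m i, Set.MapsTo (comp n w i m) (Set.Icc ((w (i+m)):ℝ) ((w (i+m) : ℝ) + 1))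
      (Set.Icc ((w i):ℝ) ((w i : ℝ) + 1)) := by
  intro m
  induction m with
  | zero => intro i; simpa [comp_zero] using Set.mapsTo_id _
  | succ m ih =>
      intro i x hx
      rw [comp_succ]
      have hx' : comp n w (i+1) m x ∈ Set.Icc ((w (i+1)):ℝ) ((w (i+1) : ℝ) + 1) := by
        apply ih (i+1)
        rwa [show i+1+m = i+(m+1) from by omega]
      exact (g_step hn hw h1 h2 i hx').1

lemma pt_mem (hn : 3 ≤ n) (hw : IsWord n k w) (hk : 1 ≤ k)
    (h1 : ∀ x : ℝ, 1 ≤ x → x ≤ (n:ℝ) - 1 → f x = x + 1)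
    (h2 : ∀ x : ℝ, (n : ℝ) - 1 ≤ x → x ≤ n → f x = -((n : ℝ) - 1) * x + n ^ 2 - n + 1)
    (i : ℕ) : pt hn hw hk i ∈ Set.Icc ((w i):ℝ) ((w i : ℝ) + 1) := by
  have hmt : Set.MapsTo (comp n w i k) (Set.Icc ((w i):ℝ) ((w i : ℝ) + 1))
      (Set.Icc ((w i):ℝ) ((w i : ℝ) + 1)) := by
    have := comp_mapsTo hn hw h1 h2 k i
    rwa [hw.1 i] at this
  have hlim := ContractingWith.tendsto_iterate_fixedPoint (contr hn hw hk i) ((w i : ℝ))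
  refine isClosed_Icc.mem_of_tendsto hlim (Filter.Eventually.of_forall fun m => ?_)
  exact hmt.iterate m ⟨le_refl _, by linarith⟩

lemma f_pt (hn : 3 ≤ n) (hw : IsWord n k w) (hk : 1 ≤ k)
    (h1 : ∀ x : ℝ, 1 ≤ x → x ≤ (n:ℝ) - 1 → f x = x + 1)
    (h2 : ∀ x : ℝ, (n : ℝ) - 1 ≤ x → x ≤ n → f x = -((n : ℝ) - 1) * x + n ^ 2 - n + 1)
    (i : ℕ) : f (pt hn hw hk i) = pt hn hw hk (i+1) := by
  rw [← pt_succ hn hw hk i]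
  exact (g_step hn hw h1 h2 i (pt_mem hn hw hk h1 h2 (i+1))).2

lemma pt_iterate (hn : 3 ≤ n) (hw : IsWord n k w) (hk : 1 ≤ k)
    (h1 : ∀ x : ℝ, 1 ≤ x → x ≤ (n:ℝ) - 1 → f x = x + 1)
    (h2 : ∀ x : ℝ, (n : ℝ) - 1 ≤ x → x ≤ n → f x = -((n : ℝ) - 1) * x + n ^ 2 - n + 1)
    (m : ℕ) : f^[m] (pt hn hw hk 0) = pt hn hw hk m := by
  induction m with
  | zero => rfl
  | succ m ih => rw [Function.iterate_succ_apply', ih, f_pt hn hw hk h1 h2 m]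

end Dyn

/-- The symbolic letter of a point. -/
noncomputable def letter (n : ℕ) (y : ℝ) : ℕ := (⌊y⌋).toNat ⊓ (n-1)

lemma letter_natCast (n m : ℕ) : letter n (m:ℝ) = m ⊓ (n-1) := by
  simp [letter]

lemma letter_ge_one {n : ℕ} (hn : 3 ≤ n) {y : ℝ} (hy : 1 ≤ y) : 1 ≤ letter n y := by
  have h1 : (1:ℤ) ≤ ⌊y⌋ := Int.le_floor.mpr (by exact_mod_cast hy)
  have : 1 ≤ (⌊y⌋).toNat := by omega
  exact le_min this (by omega)

lemma letter_le {n : ℕ} (y : ℝ) : letter n y ≤ n - 1 := min_le_right _ _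

lemma letter_lt_facts {n : ℕ} {y : ℝ} (hy : 1 ≤ y) (h : letter n y ≠ n-1) :
    (letter n y : ℝ) ≤ y ∧ y < (letter n y : ℝ) + 1 ∧ letter n y + 1 ≤ n - 1 := by
  have h1' : (1:ℤ) ≤ ⌊y⌋ := Int.le_floor.mpr (by exact_mod_cast hy)
  have h0 : (0:ℤ) ≤ ⌊y⌋ := by omega
  have hmin : letter n y = (⌊y⌋).toNat := by
    rcases min_cases ((⌊y⌋).toNat) (n-1) with ⟨e, _⟩ | ⟨e, hlt⟩
    · exact e
    · exfalso; exact h e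
  have hcast : ((⌊y⌋).toNat : ℝ) = (⌊y⌋ : ℝ) := by exact_mod_cast Int.toNat_of_nonneg h0
  have hlt : (⌊y⌋).toNat < n - 1 := by
    have e : letter n y = (⌊y⌋).toNat ⊓ (n-1) := rfl
    omega
  refine ⟨?_, ?_, by omega⟩
  · rw [hmin, hcast]; exact Int.floor_le y
  · rw [hmin, hcast]; exact Int.lt_floor_add_one y

section Dyn2

variable {f : ℝ → ℝ}

lemma f_maps (hn : 3 ≤ n)
    (h1 : ∀ x : ℝ, 1 ≤ x → x ≤ (n:ℝ) - 1 → f x = x + 1)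
    (h2 : ∀ x : ℝ, (n : ℝ) - 1 ≤ x → x ≤ n → f x = -((n : ℝ) - 1) * x + n ^ 2 - n + 1)
    {x : ℝ} (hx : x ∈ Set.Icc (1:ℝ) n) : f x ∈ Set.Icc (1:ℝ) n := by
  have hr : (3:ℝ) ≤ n := by exact_mod_cast hn
  rcases le_or_gt x ((n:ℝ)-1) with hc | hc
  · rw [h1 x hx.1 hc]
    constructor <;> [linarith [hx.1]; linarith]
  · rw [h2 x (le_of_lt hc) hx.2]
    constructor <;> nlinarith [hx.1, hx.2]

lemma iter_maps (hn : 3 ≤ n)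
    (h1 : ∀ x : ℝ, 1 ≤ x → x ≤ (n:ℝ) - 1 → f x = x + 1)
    (h2 : ∀ x : ℝ, (n : ℝ) - 1 ≤ x → x ≤ n → f x = -((n : ℝ) - 1) * x + n ^ 2 - n + 1)
    {x : ℝ} (hx : x ∈ Set.Icc (1:ℝ) n) (m : ℕ) : f^[m] x ∈ Set.Icc (1:ℝ) n := by
  induction m with
  | zero => exact hx
  | succ m ih => rw [Function.iterate_succ_apply']; exact f_maps hn h1 h2 ih

lemma letter_step (hn : 3 ≤ n)
    (h1 : ∀ x : ℝ, 1 ≤ x → x ≤ (n:ℝ) - 1 → f x = x + 1)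
    {y : ℝ} (hy : y ∈ Set.Icc (1:ℝ) n) (h : letter n y ≠ n - 1) :
    letter n (f y) = letter n y + 1 := by
  obtain ⟨hA, hB, hC⟩ := letter_lt_facts hy.1 h
  have hcast : ((letter n y : ℕ) : ℝ) + 1 ≤ (n:ℝ) - 1 := by
    rw [show ((letter n y : ℕ):ℝ) + 1 = ((letter n y + 1 : ℕ) : ℝ) from by push_cast; ring,
      ← cast_sub_one hn]
    exact_mod_cast hC
  have hyn : y ≤ (n:ℝ) - 1 := by linarith
  rw [h1 y hy.1 hyn]
  have hfl : ⌊y + 1⌋ = ⌊y⌋ + 1 := by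
    rw [show y + 1 = y + (1:ℤ) from by push_cast; ring, Int.floor_add_intCast]
  have h0 : (1:ℤ) ≤ ⌊y⌋ := Int.le_floor.mpr (by exact_mod_cast hy.1)
  have hmin : letter n y = (⌊y⌋).toNat := by
    have := letter_le (n := n) y
    rcases min_cases ((⌊y⌋).toNat) (n-1) with ⟨e, _⟩ | ⟨e, _⟩
    · exact e
    · exact absurd e h
  rw [letter, hfl]
  rw [letter] at hmin hC ⊢
  omega

lemma letter_g (hn : 3 ≤ n)
    (h1 : ∀ x : ℝ, 1 ≤ x → x ≤ (n:ℝ) - 1 → f x = x + 1)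
    (h2 : ∀ x : ℝ, (n : ℝ) - 1 ≤ x → x ≤ n → f x = -((n : ℝ) - 1) * x + n ^ 2 - n + 1)
    {y : ℝ} (hy : y ∈ Set.Icc (1:ℝ) n) :
    g n (letter n y) (f y) = y := by
  have hr : (3:ℝ) ≤ n := by exact_mod_cast hn
  by_cases h : letter n y = n - 1
  · have hfloor : ((n:ℝ) - 1) ≤ y := by
      have h2' : (n - 1 : ℕ) ≤ (⌊y⌋).toNat := by
        rw [letter] at h; omega
      have h3' : ((n-1:ℕ) : ℤ) ≤ ⌊y⌋ := by omega
      calc ((n:ℝ) - 1) = ((n-1:ℕ):ℝ) := (cast_sub_one hn).symm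
        _ ≤ (⌊y⌋ : ℝ) := by exact_mod_cast h3'
        _ ≤ y := Int.floor_le y
    rw [h, h2 y hfloor hy.2, g, if_pos rfl]
    have hpos : ((n:ℝ)-1) ≠ 0 := by linarith
    field_simp
    ring
  · obtain ⟨hA, hB, hC⟩ := letter_lt_facts hy.1 h
    have hcast : ((letter n y : ℕ) : ℝ) + 1 ≤ (n:ℝ) - 1 := by
      rw [show ((letter n y : ℕ):ℝ) + 1 = ((letter n y + 1 : ℕ) : ℝ) from by push_cast; ring,
        ← cast_sub_one hn]
      exact_mod_cast hC
    rw [h1 y hy.1 (by linarith), g, if_neg h]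
    ring

/-- The itinerary of a point. -/
noncomputable def itin (n : ℕ) (f : ℝ → ℝ) (x : ℝ) : ℕ → ℕ := fun i => letter n (f^[i] x)

lemma itin_isWord (hn : 3 ≤ n) (hk : 1 ≤ k)
    (h1 : ∀ x : ℝ, 1 ≤ x → x ≤ (n:ℝ) - 1 → f x = x + 1)
    (h2 : ∀ x : ℝ, (n : ℝ) - 1 ≤ x → x ≤ n → f x = -((n : ℝ) - 1) * x + n ^ 2 - n + 1)
    {x : ℝ} (hx : x ∈ Set.Icc (1:ℝ) n) (hfix : f^[k] x = x) :
    IsWord n k (itin n f x) := by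
  refine ⟨fun i => ?_, fun i => ?_, fun i => ?_⟩
  · unfold itin
    rw [Function.iterate_add_apply, hfix]
  · exact ⟨letter_ge_one hn (iter_maps hn h1 h2 hx i).1, letter_le _⟩
  · by_cases h : letter n (f^[i] x) = n - 1
    · exact Or.inl h
    · right
      unfold itin
      rw [Function.iterate_succ_apply']
      exact letter_step hn h1 (iter_maps hn h1 h2 hx i) h

lemma comp_itin (hn : 3 ≤ n)
    (h1 : ∀ x : ℝ, 1 ≤ x → x ≤ (n:ℝ) - 1 → f x = x + 1)
    (h2 : ∀ x : ℝ, (n : ℝ) - 1 ≤ x → x ≤ n → f x = -((n : ℝ) - 1) * x + n ^ 2 - n + 1)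
    {x : ℝ} (hx : x ∈ Set.Icc (1:ℝ) n) :
    ∀ m i, comp n (itin n f x) i m (f^[i+m] x) = f^[i] x := by
  intro m
  induction m with
  | zero => intro i; rfl
  | succ m ih =>
      intro i
      rw [comp_succ]
      have e1 : f^[i + (m+1)] x = f^[(i+1)+m] x := by rw [show i+(m+1) = (i+1)+m from by omega]
      simp only [Function.comp_apply, e1, ih (i+1)]
      have : f^[i+1] x = f (f^[i] x) := Function.iterate_succ_apply' f i x
      rw [this]
      exact letter_g hn h1 h2 (iter_maps hn h1 h2 hx i)

lemma fix_eq_pt (hn : 3 ≤ n) (hk : 1 ≤ k)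
    (h1 : ∀ x : ℝ, 1 ≤ x → x ≤ (n:ℝ) - 1 → f x = x + 1)
    (h2 : ∀ x : ℝ, (n : ℝ) - 1 ≤ x → x ≤ n → f x = -((n : ℝ) - 1) * x + n ^ 2 - n + 1)
    {x : ℝ} (hx : x ∈ Set.Icc (1:ℝ) n) (hfix : f^[k] x = x) :
    x = pt hn (itin_isWord hn hk h1 h2 hx hfix) hk 0 := by
  apply ContractingWith.fixedPoint_unique
  have := comp_itin hn h1 h2 hx k 0
  rw [show 0 + k = k from by omega, hfix] at this
  exact this

end Dyn2

section Dyn3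

variable {f : ℝ → ℝ}

lemma word_period_mul (hw : IsWord n k w) : ∀ t i, w (i + k*t) = w i := by
  intro t
  induction t with
  | zero => intro i; simp
  | succ t ih =>
      intro i
      rw [show i + k*(t+1) = (i + k*t) + k from by ring, hw.1, ih]

lemma pt_period_mul (hn : 3 ≤ n) (hw : IsWord n k w) (hk : 1 ≤ k) :
    ∀ t i, pt hn hw hk (i + k*t) = pt hn hw hk i := by
  intro t
  induction t with
  | zero => intro i; simp
  | succ t ih =>
      intro i
      rw [show i + k*(t+1) = (i + k*t) + k from by ring, pt_period, ih]

lemma pt_in_unit (hn : 3 ≤ n) (hw : IsWord n k w) (hk : 1 ≤ k)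
    (h1 : ∀ x : ℝ, 1 ≤ x → x ≤ (n:ℝ) - 1 → f x = x + 1)
    (h2 : ∀ x : ℝ, (n : ℝ) - 1 ≤ x → x ≤ n → f x = -((n : ℝ) - 1) * x + n ^ 2 - n + 1)
    (i : ℕ) : pt hn hw hk i ∈ Set.Icc (1:ℝ) n := by
  have hm := pt_mem hn hw hk h1 h2 i
  have hlo : (1:ℝ) ≤ (w i : ℝ) := by exact_mod_cast (hw.2.1 i).1
  have hhi : ((w i) : ℝ) ≤ (n:ℝ) - 1 := by
    rw [← cast_sub_one hn]; exact_mod_cast (hw.2.1 i).2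
  exact ⟨le_trans hlo hm.1, by linarith [hm.2]⟩

lemma f_at_nat (hn : 3 ≤ n)
    (h1 : ∀ x : ℝ, 1 ≤ x → x ≤ (n:ℝ) - 1 → f x = x + 1)
    {m : ℕ} (hm1 : 1 ≤ m) (hm2 : m ≤ n - 1) : f (m:ℝ) = ((m+1:ℕ):ℝ) := by
  have : ((m:ℕ):ℝ) ≤ (n:ℝ) - 1 := by rw [← cast_sub_one hn]; exact_mod_cast hm2
  rw [h1 (m:ℝ) (by exact_mod_cast hm1) this]
  push_cast; ring

lemma f_at_n (hn : 3 ≤ n)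
    (h2 : ∀ x : ℝ, (n : ℝ) - 1 ≤ x → x ≤ n → f x = -((n : ℝ) - 1) * x + n ^ 2 - n + 1) :
    f (n:ℝ) = 1 := by
  rw [h2 (n:ℝ) (by linarith) le_rfl]; ring

lemma pt_int_step (hn : 3 ≤ n) (hw : IsWord n k w) (hk : 1 ≤ k)
    (h1 : ∀ x : ℝ, 1 ≤ x → x ≤ (n:ℝ) - 1 → f x = x + 1)
    (h2 : ∀ x : ℝ, (n : ℝ) - 1 ≤ x → x ≤ n → f x = -((n : ℝ) - 1) * x + n ^ 2 - n + 1)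
    (i : ℕ) (h : ∃ m:ℤ, pt hn hw hk i = (m:ℝ)) :
    ∃ m':ℤ, pt hn hw hk (i+1) = (m':ℝ) := by
  obtain ⟨m, hm⟩ := h
  have hu := pt_in_unit hn hw hk h1 h2 i
  rw [← f_pt hn hw hk h1 h2 i]
  rcases le_or_gt (pt hn hw hk i) ((n:ℝ)-1) with hc | hc
  · exact ⟨m + 1, by rw [h1 _ hu.1 hc, hm]; push_cast; ring⟩
  · refine ⟨-((n:ℤ)-1) * m + (n:ℤ)^2 - n + 1, ?_⟩
    rw [h2 _ (le_of_lt hc) hu.2, hm]; push_cast; ring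

lemma pt_int_all (hn : 3 ≤ n) (hw : IsWord n k w) (hk : 1 ≤ k)
    (h1 : ∀ x : ℝ, 1 ≤ x → x ≤ (n:ℝ) - 1 → f x = x + 1)
    (h2 : ∀ x : ℝ, (n : ℝ) - 1 ≤ x → x ≤ n → f x = -((n : ℝ) - 1) * x + n ^ 2 - n + 1)
    (i0 : ℕ) (h : ∃ m:ℤ, pt hn hw hk i0 = (m:ℝ)) (j : ℕ) :
    ∃ m:ℤ, pt hn hw hk j = (m:ℝ) := by
  have hstep : ∀ s, ∃ m:ℤ, pt hn hw hk (i0 + s) = (m:ℝ) := by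
    intro s
    induction s with
    | zero => exact h
    | succ s ih => exact pt_int_step hn hw hk h1 h2 (i0+s) ih
  have hT : i0 ≤ j + k * i0 := by nlinarith
  have := hstep (j + k * i0 - i0)
  rw [show i0 + (j + k*i0 - i0) = j + k*i0 from by omega, pt_period_mul hn hw hk] at this
  exact this

lemma succ_mod {n : ℕ} (hn : 3 ≤ n) (t : ℕ) :
    ((t+1) % n = t % n + 1 ∧ t % n + 1 < n) ∨ ((t+1) % n = 0 ∧ t % n = n - 1) := by
  have h1 : (t+1) % n = (t % n + 1) % n := by
    conv_lhs => rw [Nat.add_mod, Nat.mod_eq_of_lt (show 1 < n by omega)]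
  have hr : t % n < n := Nat.mod_lt _ (by omega)
  rcases lt_or_ge (t % n + 1) n with h | h
  · left; rw [h1, Nat.mod_eq_of_lt h]; exact ⟨rfl, h⟩
  · right
    have he : t % n + 1 = n := by omega
    rw [h1, he, Nat.mod_self]
    omega

lemma pattern_lemma (hn : 3 ≤ n) (hw : IsWord n k w) (hk : 1 ≤ k)
    (h1 : ∀ x : ℝ, 1 ≤ x → x ≤ (n:ℝ) - 1 → f x = x + 1)
    (h2 : ∀ x : ℝ, (n : ℝ) - 1 ≤ x → x ≤ n → f x = -((n : ℝ) - 1) * x + n ^ 2 - n + 1)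
    (i1 : ℕ) (hone : pt hn hw hk i1 = 1) :
    ∀ t, pt hn hw hk (i1 + t) = ((t % n + 1 : ℕ):ℝ) ∧ w (i1 + t) = (t % n + 1) ⊓ (n-1) := by
  have hwlow : ∀ j, 1 ≤ w j := fun j => (hw.2.1 j).1
  have hwhigh : ∀ j, w j ≤ n - 1 := fun j => (hw.2.1 j).2
  have wforce1 : ∀ j, pt hn hw hk j = ((1:ℕ):ℝ) → w j = 1 := by
    intro j hj
    have l1 : (w j : ℝ) ≤ ((1:ℕ):ℝ) := hj ▸ (pt_mem hn hw hk h1 h2 j).1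
    have l1' : w j ≤ 1 := by exact_mod_cast l1
    have := hwlow j; omega
  have wforcen : ∀ j, pt hn hw hk j = ((n:ℕ):ℝ) → w j = n - 1 := by
    intro j hj
    have l2 : ((n:ℕ):ℝ) ≤ (w j : ℝ) + 1 := hj ▸ (pt_mem hn hw hk h1 h2 j).2
    have l2' : (n:ℕ) ≤ w j + 1 := by exact_mod_cast l2
    have := hwhigh j; omega
  intro t
  induction t with
  | zero =>
      refine ⟨by simpa [Nat.zero_mod] using hone, ?_⟩
      have w1 : w (i1 + 0) = 1 := wforce1 _ (by simpa using hone)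
      rw [w1, Nat.zero_mod, min_eq_left (by omega)]
  | succ t ih =>
      obtain ⟨hpt, hwt⟩ := ih
      have hr : t % n < n := Nat.mod_lt _ (by omega)
      have hptnext : pt hn hw hk (i1 + (t+1)) = f (pt hn hw hk (i1 + t)) := by
        rw [show i1 + (t+1) = (i1+t)+1 from by omega, f_pt hn hw hk h1 h2]
      have hsm := succ_mod hn t
      rcases (by omega : t % n + 1 ≤ n - 2 ∨ t % n = n - 2 ∨ t % n = n - 1) with hc | hc | hc
      · have hmod : (t+1) % n = t % n + 1 := by rcases hsm with ⟨e,_⟩ | ⟨_,e⟩ <;> omega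
        have hptv : pt hn hw hk (i1 + (t+1)) = ((t % n + 2 : ℕ):ℝ) := by
          rw [hptnext, hpt, f_at_nat hn h1 (by omega) (by omega)]
        refine ⟨by rw [hptv, hmod], ?_⟩
        have hwcur : w (i1 + t) = t % n + 1 := by
          rw [hwt, min_eq_left (by omega)]
        rcases hw.2.2 (i1+t) with hstep | hstep
        · omega
        · rw [show i1 + (t+1) = (i1+t)+1 from by omega, hstep, hwcur, hmod,
            min_eq_left (by omega)]
      · have hmod : (t+1) % n = n - 1 := by rcases hsm with ⟨e1,e2⟩ | ⟨_,e⟩ <;> omega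
        have hptv : pt hn hw hk (i1 + (t+1)) = ((n:ℕ):ℝ) := by
          rw [hptnext, hpt, f_at_nat hn h1 (by omega) (by omega : t % n + 1 ≤ n - 1)]
          congr 1
          omega
        refine ⟨by rw [hptv, hmod]; exact_mod_cast Nat.cast_inj.mpr (by omega : (n:ℕ) = n - 1 + 1) , ?_⟩
        rw [wforcen _ hptv, hmod, min_eq_right (by omega)]
      · have hmod : (t+1) % n = 0 := by rcases hsm with ⟨e1,e2⟩ | ⟨e,_⟩ <;> omega
        have hptv : pt hn hw hk (i1 + (t+1)) = ((1:ℕ):ℝ) := by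
          rw [hptnext, hpt, show ((t % n + 1 : ℕ):ℝ) = ((n:ℕ):ℝ) from by congr 1; omega,
            f_at_n hn h2]
          norm_num
        refine ⟨by rw [hptv, hmod], ?_⟩
        rw [wforce1 _ hptv, hmod, min_eq_left (by omega)]

lemma reach_one (hn : 3 ≤ n) (hw : IsWord n k w) (hk : 1 ≤ k)
    (h1 : ∀ x : ℝ, 1 ≤ x → x ≤ (n:ℝ) - 1 → f x = x + 1)
    (h2 : ∀ x : ℝ, (n : ℝ) - 1 ≤ x → x ≤ n → f x = -((n : ℝ) - 1) * x + n ^ 2 - n + 1) :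
    ∀ d i (m:ℕ), pt hn hw hk i = (m:ℝ) → m + d = n → 1 ≤ m →
      pt hn hw hk (i + (d + 1)) = 1 := by
  intro d
  induction d with
  | zero =>
      intro i m hm hmn _
      have : pt hn hw hk (i+1) = f (pt hn hw hk i) := (f_pt hn hw hk h1 h2 i).symm
      rw [show i + (0+1) = i + 1 from by omega, this, hm,
        show ((m:ℕ):ℝ) = ((n:ℕ):ℝ) from Nat.cast_inj.mpr (by omega), f_at_n hn h2]
  | succ d ih =>
      intro i m hm hmn hm1
      have hnext : pt hn hw hk (i+1) = ((m+1:ℕ):ℝ) := by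
        rw [show i + 1 = i + 1 from rfl, ← f_pt hn hw hk h1 h2 i, hm,
          f_at_nat hn h1 hm1 (by omega)]
      have := ih (i+1) (m+1) hnext (by omega) (by omega)
      rw [show i + (d+1+1) = (i+1) + (d+1) from by omega]
      exact this

lemma itin_pt (hn : 3 ≤ n) (hw : IsWord n k w) (hk : 1 ≤ k)
    (h1 : ∀ x : ℝ, 1 ≤ x → x ≤ (n:ℝ) - 1 → f x = x + 1)
    (h2 : ∀ x : ℝ, (n : ℝ) - 1 ≤ x → x ≤ n → f x = -((n : ℝ) - 1) * x + n ^ 2 - n + 1)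
    (j : ℕ) : letter n (pt hn hw hk j) = w j := by
  by_cases hI : ∀ i, ∀ m:ℤ, pt hn hw hk i ≠ (m:ℝ)
  · have hm := pt_mem hn hw hk h1 h2 j
    have hne1 : pt hn hw hk j ≠ ((w j : ℕ):ℝ) := by
      have := hI j ((w j : ℕ):ℤ)
      intro hcon; apply this; rw [hcon]; push_cast; ring
    have hne2 : pt hn hw hk j ≠ ((w j : ℕ):ℝ) + 1 := by
      have := hI j (((w j : ℕ):ℤ) + 1)
      intro hcon; apply this; rw [hcon]; push_cast; ring
    have hflo : ⌊pt hn hw hk j⌋ = ((w j : ℕ) : ℤ) := by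
      rw [Int.floor_eq_iff]
      constructor
      · push_cast; exact lt_of_le_of_ne hm.1 (Ne.symm hne1) |>.le
      · push_cast; exact lt_of_le_of_ne hm.2 hne2
    rw [letter, hflo]
    have := (hw.2.1 j).2
    omega
  · push_neg at hI
    obtain ⟨i0, m0, hm0⟩ := hI
    obtain ⟨mz, hmz⟩ := pt_int_all hn hw hk h1 h2 i0 ⟨m0, hm0⟩ 0
    have hu := pt_in_unit hn hw hk h1 h2 0
    have hmz1 : (1:ℤ) ≤ mz := by
      have := hu.1; rw [hmz] at this; exact_mod_cast this
    have hmzn : mz ≤ (n:ℤ) := by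
      have := hu.2; rw [hmz] at this; exact_mod_cast this
    set m : ℕ := mz.toNat with hmdef
    have hmnat : pt hn hw hk 0 = ((m:ℕ):ℝ) := by
      rw [hmz]; congr 1; omega
    have hone : pt hn hw hk (0 + ((n - m) + 1)) = 1 :=
      reach_one hn hw hk h1 h2 (n-m) 0 m hmnat (by omega) (by omega)
    set i1 : ℕ := 0 + ((n - m) + 1) with hi1
    have hpat := pattern_lemma hn hw hk h1 h2 i1 hone
    have hT : i1 ≤ j + k * i1 := by nlinarith
    set t : ℕ := j + k * i1 - i1 with ht
    have hit : i1 + t = j + k * i1 := by omega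
    have h3 := hpat t
    rw [hit] at h3
    rw [pt_period_mul hn hw hk] at h3
    rw [word_period_mul hw] at h3
    rw [h3.1, h3.2, letter_natCast]

end Dyn3

section Count

variable {f : ℝ → ℝ}

lemma pt_congr (hn : 3 ≤ n) (hk : 1 ≤ k) {w w' : ℕ → ℕ} (h : w = w')
    (hw : IsWord n k w) (hw' : IsWord n k w') : pt hn hw hk 0 = pt hn hw' hk 0 := by
  subst h; rfl

lemma word_mod (hw : IsWord n k w) (j : ℕ) : w j = w (j % k) := by
  conv_lhs => rw [show j = j % k + k * (j / k) from (Nat.mod_add_div j k).symm, word_period_mul hw]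

lemma wordSet_finite (hn : 3 ≤ n) (hk : 1 ≤ k) : {w : ℕ → ℕ | IsWord n k w}.Finite := by
  have hn0 : 0 < n := by omega
  set F : (ℕ → ℕ) → (Fin k → Fin n) := fun w i => ⟨w i.1 % n, Nat.mod_lt _ hn0⟩ with hF
  apply Set.Finite.of_finite_image (f := F) (Set.toFinite _)
  intro u hu v hv huv
  funext j
  have h1 : u j = u (j % k) := word_mod hu j
  have h2 : v j = v (j % k) := word_mod hv j
  have hjk : j % k < k := Nat.mod_lt _ (by omega)
  have := congrFun huv ⟨j % k, hjk⟩
  rw [hF] at this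
  simp only [Fin.mk.injEq] at this
  have hu' : u (j % k) < n := by have := (hu.2.1 (j % k)).2; omega
  have hv' : v (j % k) < n := by have := (hv.2.1 (j % k)).2; omega
  rw [Nat.mod_eq_of_lt hu', Nat.mod_eq_of_lt hv'] at this
  rw [h1, h2, this]

lemma itin_image (hn : 3 ≤ n) (hk : 1 ≤ k)
    (h1 : ∀ x : ℝ, 1 ≤ x → x ≤ (n:ℝ) - 1 → f x = x + 1)
    (h2 : ∀ x : ℝ, (n : ℝ) - 1 ≤ x → x ≤ n → f x = -((n : ℝ) - 1) * x + n ^ 2 - n + 1) :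
    (itin n f) '' {x : ℝ | x ∈ Set.Icc 1 (n:ℝ) ∧ f^[k] x = x} = {w : ℕ → ℕ | IsWord n k w} := by
  apply Set.Subset.antisymm
  · rintro _ ⟨x, ⟨hx, hfix⟩, rfl⟩
    exact itin_isWord hn hk h1 h2 hx hfix
  · intro w hw
    refine ⟨pt hn hw hk 0, ⟨pt_in_unit hn hw hk h1 h2 0, ?_⟩, ?_⟩
    · rw [pt_iterate hn hw hk h1 h2 k]
      have := pt_period hn hw hk 0
      rwa [show 0 + k = k from by omega] at this
    · funext j
      show letter n (f^[j] (pt hn hw hk 0)) = w j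
      rw [pt_iterate hn hw hk h1 h2 j]
      exact itin_pt hn hw hk h1 h2 j

lemma itin_injOn (hn : 3 ≤ n) (hk : 1 ≤ k)
    (h1 : ∀ x : ℝ, 1 ≤ x → x ≤ (n:ℝ) - 1 → f x = x + 1)
    (h2 : ∀ x : ℝ, (n : ℝ) - 1 ≤ x → x ≤ n → f x = -((n : ℝ) - 1) * x + n ^ 2 - n + 1) :
    Set.InjOn (itin n f) {x : ℝ | x ∈ Set.Icc 1 (n:ℝ) ∧ f^[k] x = x} := by
  rintro x ⟨hx, hfx⟩ y ⟨hy, hfy⟩ hxy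
  rw [fix_eq_pt hn hk h1 h2 hx hfx, fix_eq_pt hn hk h1 h2 hy hfy]
  exact pt_congr hn hk hxy _ _

lemma fix_finite (hn : 3 ≤ n) (hk : 1 ≤ k)
    (h1 : ∀ x : ℝ, 1 ≤ x → x ≤ (n:ℝ) - 1 → f x = x + 1)
    (h2 : ∀ x : ℝ, (n : ℝ) - 1 ≤ x → x ≤ n → f x = -((n : ℝ) - 1) * x + n ^ 2 - n + 1) :
    {x : ℝ | x ∈ Set.Icc 1 (n:ℝ) ∧ f^[k] x = x}.Finite := by
  apply Set.Finite.of_finite_image (f := itin n f)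
  · rw [itin_image hn hk h1 h2]
    exact wordSet_finite hn hk
  · exact itin_injOn hn hk h1 h2

lemma fix_ncard (hn : 3 ≤ n) (hk : 1 ≤ k)
    (h1 : ∀ x : ℝ, 1 ≤ x → x ≤ (n:ℝ) - 1 → f x = x + 1)
    (h2 : ∀ x : ℝ, (n : ℝ) - 1 ≤ x → x ≤ n → f x = -((n : ℝ) - 1) * x + n ^ 2 - n + 1) :
    {x : ℝ | x ∈ Set.Icc 1 (n:ℝ) ∧ f^[k] x = x}.ncard = {w : ℕ → ℕ | IsWord n k w}.ncard := by
  rw [← itin_image hn hk h1 h2, Set.ncard_image_of_injOn (itin_injOn hn hk h1 h2)]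

end Count

section Comb
open scoped Classical

/-- first occurrence of the letter `n-1`. -/
noncomputable def sIdx (n : ℕ) (w : ℕ → ℕ) : ℕ :=
  if h : ∃ s, w s = n-1 then Nat.find h else 0

/-- distance from `sIdx` to the next occurrence of `n-1`. -/
noncomputable def blen (n : ℕ) (w : ℕ → ℕ) : ℕ :=
  if h : ∃ t, w (sIdx n w + 1 + t) = n-1 then Nat.find h + 1 else 0

lemma succ_mod' {m : ℕ} (hm : 1 ≤ m) (t : ℕ) :
    ((t+1) % m = t % m + 1 ∧ t % m + 1 < m) ∨ ((t+1) % m = 0 ∧ t % m = m - 1) := by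
  have h1 : (t+1) % m = (t % m + 1) % m := by
    conv_lhs => rw [Nat.add_mod]
    rcases (by omega : m = 1 ∨ 1 < m) with h | h
    · simp [h]
    · rw [Nat.mod_eq_of_lt h]
  have hr : t % m < m := Nat.mod_lt _ (by omega)
  rcases lt_or_ge (t % m + 1) m with h | h
  · left; rw [h1, Nat.mod_eq_of_lt h]; exact ⟨rfl, h⟩
  · right
    have he : t % m + 1 = m := by omega
    rw [h1, he, Nat.mod_self]
    omega

lemma sIdx_eq_of {n : ℕ} {u : ℕ → ℕ} {s : ℕ} (h1 : u s = n-1) (h2 : ∀ j, j < s → u j ≠ n-1) :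
    sIdx n u = s := by
  rw [sIdx, dif_pos ⟨s, h1⟩]
  exact (Nat.find_eq_iff _).mpr ⟨h1, fun j hj => h2 j hj⟩

lemma blen_eq_of {n : ℕ} {u : ℕ → ℕ} {i : ℕ} (hi : 1 ≤ i)
    (hb : u (sIdx n u + i) = n-1) (hmid : ∀ t, 0 < t → t < i → u (sIdx n u + t) ≠ n-1) :
    blen n u = i := by
  have hex : ∃ t, u (sIdx n u + 1 + t) = n-1 :=
    ⟨i - 1, by rw [show sIdx n u + 1 + (i-1) = sIdx n u + i from by omega]; exact hb⟩
  rw [blen, dif_pos hex]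
  have : Nat.find hex = i - 1 := by
    refine (Nat.find_eq_iff _).mpr ⟨?_, ?_⟩
    · rw [show sIdx n u + 1 + (i-1) = sIdx n u + i from by omega]; exact hb
    · intro t ht
      have := hmid (t+1) (by omega) (by omega)
      rwa [show sIdx n u + (t+1) = sIdx n u + 1 + t from by omega] at this
  omega

section WordStruct

variable {n k : ℕ} {w : ℕ → ℕ}

lemma sIdx_spec (hw : IsWord n k w) (hk : 1 ≤ k) :
    w (sIdx n w) = n-1 ∧ ∀ j, j < sIdx n w → w j ≠ n-1 := by
  have hex : ∃ s, w s = n-1 := by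
    obtain ⟨t, _, ht⟩ := word_window hw hk 0
    exact ⟨t, by simpa using ht⟩
  rw [sIdx, dif_pos hex]
  exact ⟨Nat.find_spec hex, fun j hj => Nat.find_min hex hj⟩

lemma sIdx_ascent (hw : IsWord n k w) (hk : 1 ≤ k) :
    ∀ j, j ≤ sIdx n w → w j = w 0 + j := by
  intro j hj
  have := word_ascend hw 0 j (fun u hu => by
    simpa using (sIdx_spec hw hk).2 u (by omega))
  simpa using this

lemma sIdx_le (hn : 3 ≤ n) (hw : IsWord n k w) (hk : 1 ≤ k) : sIdx n w ≤ n - 2 := by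
  have h1 := (sIdx_spec hw hk).1
  have h2 := sIdx_ascent hw hk (sIdx n w) le_rfl
  have h3 := (hw.2.1 0).1
  omega

lemma sIdx_lt_k (hw : IsWord n k w) (hk : 1 ≤ k) : sIdx n w ≤ k - 1 := by
  obtain ⟨t, htk, ht⟩ := word_window hw hk 0
  have hex : ∃ s, w s = n-1 := ⟨t, by simpa using ht⟩
  rw [sIdx, dif_pos hex]
  have := Nat.find_min' hex (show w t = n - 1 from by simpa using ht)
  omega

lemma blen_spec (hw : IsWord n k w) (hk : 1 ≤ k) :
    w (sIdx n w + blen n w) = n-1 ∧ 1 ≤ blen n w ∧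
      ∀ u, 0 < u → u < blen n w → w (sIdx n w + u) ≠ n-1 := by
  have hex : ∃ t, w (sIdx n w + 1 + t) = n-1 := by
    obtain ⟨t, _, ht⟩ := word_window hw hk (sIdx n w + 1)
    exact ⟨t, ht⟩
  rw [blen, dif_pos hex]
  refine ⟨?_, by omega, ?_⟩
  · have := Nat.find_spec hex
    rwa [show sIdx n w + 1 + Nat.find hex = sIdx n w + (Nat.find hex + 1) from by omega] at this
  · intro u hu0 hub
    have := Nat.find_min hex (show u - 1 < Nat.find hex from by omega)
    rwa [show sIdx n w + 1 + (u-1) = sIdx n w + u from by omega] at this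

lemma blen_content (hn : 3 ≤ n) (hw : IsWord n k w) (hk : 1 ≤ k) :
    blen n w ≤ n - 1 ∧ ∀ t, t < blen n w → w (sIdx n w + 1 + t) = n - blen n w + t := by
  obtain ⟨hb, hb1, hmid⟩ := blen_spec hw hk
  have hasc : ∀ t, t ≤ blen n w - 1 → w (sIdx n w + 1 + t) = w (sIdx n w + 1) + t := by
    intro t ht
    exact word_ascend hw (sIdx n w + 1) t (fun u hu => by
      have := hmid (u+1) (by omega) (by omega)
      rwa [show sIdx n w + (u+1) = sIdx n w + 1 + u from by omega] at this)
  have hlast := hasc (blen n w - 1) le_rfl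
  rw [show sIdx n w + 1 + (blen n w - 1) = sIdx n w + blen n w from by omega, hb] at hlast
  have hw1 := (hw.2.1 (sIdx n w + 1)).1
  refine ⟨by omega, fun t ht => ?_⟩
  rw [hasc t (by omega)]
  omega

lemma sblen_lt (hn : 3 ≤ n) (hw : IsWord n k w) (hkn : n ≤ k) :
    sIdx n w + blen n w < k := by
  have hk : 1 ≤ k := by omega
  by_contra hcon
  push_neg at hcon
  obtain ⟨hb, hb1, hmid⟩ := blen_spec hw hk
  have hs := sIdx_le hn hw hk
  have hslt : sIdx n w < k := by omega
  have hasc : w (sIdx n w + 1 + (k - sIdx n w - 1)) = w (sIdx n w + 1) + (k - sIdx n w - 1) := by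
    apply word_ascend hw (sIdx n w + 1) _ (fun u hu => by
      have := hmid (u+1) (by omega) (by omega)
      rwa [show sIdx n w + (u+1) = sIdx n w + 1 + u from by omega] at this)
  rw [show sIdx n w + 1 + (k - sIdx n w - 1) = 0 + k from by omega, hw.1 0] at hasc
  have e0 := sIdx_ascent hw hk (sIdx n w) le_rfl
  have e1 := (sIdx_spec hw hk).1
  have e2 := (hw.2.1 (sIdx n w + 1)).1
  have e3 := (hw.2.1 0).1
  omega

end WordStruct
section Maps
open scoped Classical

noncomputable def dmap (n k : ℕ) (w : ℕ → ℕ) : ℕ → ℕ :=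
  fun j => if j % (k - blen n w) ≤ sIdx n w then w (j % (k - blen n w))
           else w (j % (k - blen n w) + blen n w)

noncomputable def imap (n k i : ℕ) (u : ℕ → ℕ) : ℕ → ℕ :=
  fun j => if j % k ≤ sIdx n u then u (j % k)
           else if j % k ≤ sIdx n u + i then n - i + (j % k - sIdx n u - 1)
           else u (j % k - i)

variable {n k : ℕ} {w : ℕ → ℕ}

lemma dmap_isWord (hn : 3 ≤ n) (hw : IsWord n k w) (hkn : n ≤ k) :
    IsWord n (k - blen n w) (dmap n k w) := by
  have hk1 : 1 ≤ k := by omega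
  obtain ⟨hs1, hsmin⟩ := sIdx_spec hw hk1
  obtain ⟨hb, hi1, hmid⟩ := blen_spec hw hk1
  obtain ⟨hi2, hcont⟩ := blen_content hn hw hk1
  have hsb := sblen_lt hn hw hkn
  set s := sIdx n w with hsdef
  set i := blen n w with hidef
  set m := k - i with hmdef
  have hm1 : 1 ≤ m := by omega
  have hsm : s < m := by omega
  have hda : ∀ j, dmap n k w j = if j % m ≤ s then w (j % m) else w (j % m + i) :=
    fun j => rfl
  refine ⟨fun j => ?_, fun j => ?_, fun j => ?_⟩
  · rw [hda, hda, Nat.add_mod_right]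
  · rw [hda]; split <;> exact hw.2.1 _
  · rw [hda, hda]
    have hj'lt : j % m < m := Nat.mod_lt _ (by omega)
    rcases succ_mod' hm1 j with ⟨e1, e2⟩ | ⟨e1, e2⟩
    · rw [e1]
      rcases lt_trichotomy (j % m) s with hc | hc | hc
      · rw [if_pos (by omega), if_pos (by omega)]
        rcases hw.2.2 (j % m) with h' | h'
        · exact absurd h' (hsmin _ hc)
        · right; exact h'
      · left; rw [if_pos (by omega), hc]; exact hs1
      · rw [if_neg (by omega), if_neg (by omega)]
        rcases hw.2.2 (j % m + i) with h' | h'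
        · left; exact h'
        · right; rw [show j % m + 1 + i = j % m + i + 1 from by omega]; exact h'
    · rw [e1, e2]
      rcases (by omega : m - 1 = s ∨ s < m - 1) with hc | hc
      · left; rw [if_pos (by omega), hc]; exact hs1
      · rw [if_neg (by omega), if_pos (by omega)]
        rcases hw.2.2 (m - 1 + i) with h' | h'
        · left; exact h'
        · right
          have h0 : w 0 = w (m - 1 + i) + 1 := by
            rw [← h', show m - 1 + i + 1 = 0 + k from by omega, hw.1 0]
          exact h0

lemma dmap_eq_low (hn : 3 ≤ n) (hw : IsWord n k w) (hkn : n ≤ k) :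
    ∀ j, j ≤ sIdx n w → dmap n k w j = w j := by
  intro j hj
  have hk1 : 1 ≤ k := by omega
  obtain ⟨_, hi1, _⟩ := blen_spec hw hk1
  have hsb := sblen_lt hn hw hkn
  have hjm : j % (k - blen n w) = j := Nat.mod_eq_of_lt (by omega)
  rw [dmap, hjm, if_pos hj]

lemma dmap_sIdx (hn : 3 ≤ n) (hw : IsWord n k w) (hkn : n ≤ k) :
    sIdx n (dmap n k w) = sIdx n w := by
  have hk1 : 1 ≤ k := by omega
  obtain ⟨hs1, hsmin⟩ := sIdx_spec hw hk1
  apply sIdx_eq_of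
  · rw [dmap_eq_low hn hw hkn _ le_rfl]; exact hs1
  · intro j hj
    rw [dmap_eq_low hn hw hkn _ (by omega)]
    exact hsmin j hj

lemma imap_dmap (hn : 3 ≤ n) (hw : IsWord n k w) (hkn : n ≤ k) :
    imap n k (blen n w) (dmap n k w) = w := by
  have hk1 : 1 ≤ k := by omega
  obtain ⟨hs1, hsmin⟩ := sIdx_spec hw hk1
  obtain ⟨hb, hi1, hmid⟩ := blen_spec hw hk1
  obtain ⟨hi2, hcont⟩ := blen_content hn hw hk1
  have hsb := sblen_lt hn hw hkn
  have hsu := dmap_sIdx hn hw hkn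
  funext j
  have hwj : w j = w (j % k) := word_mod hw j
  have hjk : j % k < k := Nat.mod_lt _ (by omega)
  rw [imap, hsu]
  set s := sIdx n w with hsdef
  set i := blen n w with hidef
  rcases (by omega : j % k ≤ s ∨ (s < j % k ∧ j % k ≤ s + i) ∨ s + i < j % k)
    with hc | ⟨hc1, hc2⟩ | hc
  · rw [if_pos hc, dmap_eq_low hn hw hkn _ hc, hwj]
  · rw [if_neg (by omega), if_pos hc2, hwj,
      show j % k = s + 1 + (j % k - s - 1) from by omega,
      hcont (j % k - s - 1) (by omega)]
    congr 1
    omega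
  · rw [if_neg (by omega), if_neg (by omega), hwj]
    have h1 : (j % k - i) % (k - i) = j % k - i := Nat.mod_eq_of_lt (by omega)
    rw [dmap, h1, if_neg (by omega), show j % k - i + i = j % k from by omega]

end Maps

section Maps2

variable {n m i : ℕ} {u : ℕ → ℕ}

lemma imap_isWord (hn : 3 ≤ n) (hu : IsWord n m u) (hm1 : 1 ≤ m)
    (hi1 : 1 ≤ i) (hi2 : i ≤ n-1) : IsWord n (m+i) (imap n (m+i) i u) := by
  obtain ⟨hs1, hsmin⟩ := sIdx_spec hu hm1
  have hsm := sIdx_lt_k hu hm1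
  set s := sIdx n u with hsdef
  set k := m + i with hkdef
  have hk1 : 1 ≤ k := by omega
  have hia : ∀ j, imap n k i u j = if j % k ≤ s then u (j % k)
      else if j % k ≤ s + i then n - i + (j % k - s - 1) else u (j % k - i) :=
    fun j => rfl
  refine ⟨fun j => ?_, fun j => ?_, fun j => ?_⟩
  · rw [hia, hia, Nat.add_mod_right]
  · rw [hia]
    split_ifs with hA hB
    · exact hu.2.1 _
    · constructor <;> omega
    · exact hu.2.1 _
  · rw [hia, hia]
    have hj'lt : j % k < k := Nat.mod_lt _ (by omega)
    rcases succ_mod' hk1 j with ⟨e1, e2⟩ | ⟨e1, e2⟩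
    · rw [e1]
      rcases (by omega : j % k < s ∨ j % k = s ∨ (s < j % k ∧ j % k < s + i) ∨ j % k = s + i
          ∨ s + i < j % k) with hc | hc | ⟨hcl, hcr⟩ | hc | hc
      · rw [if_pos (by omega), if_pos (by omega)]
        rcases hu.2.2 (j % k) with h' | h'
        · exact absurd h' (hsmin _ hc)
        · right; exact h'
      · left; rw [if_pos (by omega), hc]; exact hs1
      · right
        rw [if_neg (by omega), if_pos (by omega), if_neg (by omega), if_pos (by omega)]
        omega
      · left
        rw [if_neg (by omega), if_pos (by omega)]
        omega
      · rw [if_neg (by omega), if_neg (by omega), if_neg (by omega), if_neg (by omega)]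
        rcases hu.2.2 (j % k - i) with h' | h'
        · left; exact h'
        · right; rw [show j % k + 1 - i = (j % k - i) + 1 from by omega]; exact h'
    · rw [e1, e2]
      rcases (by omega : k - 1 = s + i ∨ s + i < k - 1) with hc | hc
      · left
        rw [if_neg (by omega), if_pos (by omega)]
        omega
      · rw [if_neg (by omega), if_neg (by omega), if_pos (by omega)]
        rcases hu.2.2 (m - 1) with h' | h'
        · left; rw [show k - 1 - i = m - 1 from by omega]; exact h'
        · right
          rw [show k - 1 - i = m - 1 from by omega, ← hu.1 0,
            show 0 + m = m - 1 + 1 from by omega]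
          exact h'

lemma imap_low (hu : IsWord n m u) (hm1 : 1 ≤ m) (hi1 : 1 ≤ i) :
    ∀ j, j ≤ sIdx n u → imap n (m+i) i u j = u j := by
  intro j hj
  have hsm := sIdx_lt_k hu hm1
  have hjm : j % (m+i) = j := Nat.mod_eq_of_lt (by omega)
  rw [imap, hjm, if_pos hj]

lemma imap_sIdx (hu : IsWord n m u) (hm1 : 1 ≤ m) (hi1 : 1 ≤ i) :
    sIdx n (imap n (m+i) i u) = sIdx n u := by
  obtain ⟨hs1, hsmin⟩ := sIdx_spec hu hm1
  apply sIdx_eq_of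
  · rw [imap_low hu hm1 hi1 _ le_rfl]; exact hs1
  · intro j hj
    rw [imap_low hu hm1 hi1 _ (by omega)]
    exact hsmin j hj

lemma imap_blen (hn : 3 ≤ n) (hu : IsWord n m u) (hm1 : 1 ≤ m)
    (hi1 : 1 ≤ i) (hi2 : i ≤ n-1) : blen n (imap n (m+i) i u) = i := by
  obtain ⟨hs1, hsmin⟩ := sIdx_spec hu hm1
  have hsm := sIdx_lt_k hu hm1
  have hsi := imap_sIdx (i := i) hu hm1 hi1
  apply blen_eq_of hi1
  · rw [hsi, imap, Nat.mod_eq_of_lt (by omega : sIdx n u + i < m + i),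
      if_neg (by omega), if_pos (by omega)]
    omega
  · intro t ht0 hti
    rw [hsi, imap, Nat.mod_eq_of_lt (by omega : sIdx n u + t < m + i),
      if_neg (by omega), if_pos (by omega)]
    omega

lemma dmap_imap (hn : 3 ≤ n) (hu : IsWord n m u) (hm1 : 1 ≤ m)
    (hi1 : 1 ≤ i) (hi2 : i ≤ n-1) : dmap n (m+i) (imap n (m+i) i u) = u := by
  obtain ⟨hs1, hsmin⟩ := sIdx_spec hu hm1
  have hsm := sIdx_lt_k hu hm1
  have hsi := imap_sIdx (i := i) hu hm1 hi1
  have hbl := imap_blen hn hu hm1 hi1 hi2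
  funext j
  have hjm : j % m < m := Nat.mod_lt _ (by omega)
  have huj : u j = u (j % m) := word_mod hu j
  rw [dmap, hbl, hsi, show m + i - i = m from by omega]
  rcases le_or_gt (j % m) (sIdx n u) with hc | hc
  · rw [if_pos hc, imap, Nat.mod_eq_of_lt (by omega : j % m < m + i), if_pos hc, huj]
  · rw [if_neg (by omega), imap, Nat.mod_eq_of_lt (by omega : j % m + i < m + i),
      if_neg (by omega), if_neg (by omega), show j % m + i - i = j % m from by omega, huj]

end Maps2

lemma ncard_partition {α β : Type*} (I : Finset β) (S : Set α) (hS : S.Finite) (c : α → β)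
    (hc : ∀ a ∈ S, c a ∈ I) :
    S.ncard = ∑ i ∈ I, {a | a ∈ S ∧ c a = i}.ncard := by
  classical
  induction I using Finset.induction generalizing S with
  | empty =>
      have he : S = ∅ := Set.eq_empty_iff_forall_notMem.mpr (fun a ha => by simpa using hc a ha)
      simp [he]
  | @insert j I hj ih =>
      have hsplit : S = {a | a ∈ S ∧ c a = j} ∪ {a | a ∈ S ∧ c a ≠ j} := by
        ext a; by_cases h : c a = j <;> simp [h]
      have hdisj : Disjoint {a | a ∈ S ∧ c a = j} {a | a ∈ S ∧ c a ≠ j} :=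
        Set.disjoint_left.mpr (by rintro a ⟨_, e⟩ ⟨_, e'⟩; exact e' e)
      have hf1 : {a | a ∈ S ∧ c a = j}.Finite := hS.subset (fun a ha => ha.1)
      have hf2 : {a | a ∈ S ∧ c a ≠ j}.Finite := hS.subset (fun a ha => ha.1)
      rw [Finset.sum_insert hj]
      conv_lhs => rw [hsplit]
      rw [Set.ncard_union_eq hdisj hf1 hf2]
      congr 1
      rw [ih _ hf2 (fun a ha => by
        have := hc a ha.1
        simp only [Finset.mem_insert] at this
        rcases this with h | h
        · exact absurd h ha.2
        · exact h)]
      apply Finset.sum_congr rfl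
      intro i hi
      congr 1
      ext a
      constructor
      · rintro ⟨⟨ha, _⟩, he⟩; exact ⟨ha, he⟩
      · rintro ⟨ha, he⟩
        exact ⟨⟨ha, fun hcon => hj (by rw [← he, hcon] at hi; exact hi)⟩, he⟩

lemma word_rec {n k : ℕ} (hn : 3 ≤ n) (hkn : n ≤ k) :
    {w : ℕ → ℕ | IsWord n k w}.ncard
      = ∑ i ∈ Finset.Icc 1 (n-1), {u : ℕ → ℕ | IsWord n (k-i) u}.ncard := by
  have hk1 : 1 ≤ k := by omega
  rw [ncard_partition (Finset.Icc 1 (n-1)) _ (wordSet_finite hn hk1) (blen n)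
    (fun w hw => by
      obtain ⟨_, h1, _⟩ := blen_spec hw hk1
      obtain ⟨h2, _⟩ := blen_content hn hw hk1
      exact Finset.mem_Icc.mpr ⟨h1, h2⟩)]
  apply Finset.sum_congr rfl
  intro i hi
  obtain ⟨hi1, hi2⟩ := Finset.mem_Icc.mp hi
  have hik : i < k := by omega
  have himg : dmap n k '' {w | IsWord n k w ∧ blen n w = i} = {u | IsWord n (k-i) u} := by
    apply Set.Subset.antisymm
    · rintro _ ⟨x, ⟨hx, hbx⟩, rfl⟩
      have := dmap_isWord hn hx hkn
      rwa [hbx] at this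
    · intro u hu
      have hm1 : 1 ≤ k - i := by omega
      have hmi : (k - i) + i = k := by omega
      refine ⟨imap n k i u, ⟨?_, ?_⟩, ?_⟩
      · have := imap_isWord hn hu hm1 hi1 hi2
        rwa [hmi] at this
      · have := imap_blen hn hu hm1 hi1 hi2
        rwa [hmi] at this
      · have := dmap_imap hn hu hm1 hi1 hi2
        rwa [hmi] at this
  have hinj : Set.InjOn (dmap n k) {w | IsWord n k w ∧ blen n w = i} := by
    rintro x ⟨hx, hbx⟩ y ⟨hy, hby⟩ hxy
    have e1 := imap_dmap hn hx hkn
    have e2 := imap_dmap hn hy hkn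
    rw [hbx] at e1
    rw [hby] at e2
    rw [← e1, ← e2, hxy]
  show {w | IsWord n k w ∧ blen n w = i}.ncard = _
  rw [← himg, Set.ncard_image_of_injOn hinj]

end Comb

end
end Stmt9



theorem stmt_9 (n : ℕ) (hn : 3 ≤ n) (f : ℝ → ℝ)
    (h1 : ∀ x : ℝ, 1 ≤ x → x ≤ n - 1 → f x = x + 1)
    (h2 : ∀ x : ℝ, (n : ℝ) - 1 ≤ x → x ≤ n →
      f x = -((n : ℝ) - 1) * x + n ^ 2 - n + 1) :
    (∀ k : ℕ, 1 ≤ k → {x : ℝ | x ∈ Set.Icc 1 (n : ℝ) ∧ f^[k] x = x}.Finite) ∧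
    (∀ k : ℕ, n ≤ k →
      {x : ℝ | x ∈ Set.Icc 1 (n : ℝ) ∧ f^[k] x = x}.ncard
        = ∑ i ∈ Finset.Icc 1 (n - 1),
            {x : ℝ | x ∈ Set.Icc 1 (n : ℝ) ∧ f^[k - i] x = x}.ncard) := by
  constructor
  · intro k hk
    exact Stmt9.fix_finite hn hk h1 h2
  · intro k hkn
    have hk1 : 1 ≤ k := by omega
    rw [Stmt9.fix_ncard hn hk1 h1 h2, Stmt9.word_rec hn hkn]
    apply Finset.sum_congr rfl
    intro i hi
    obtain ⟨hi1, hi2⟩ := Finset.mem_Icc.mp hi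
    rw [Stmt9.fix_ncard hn (by omega : 1 ≤ k - i) h1 h2]
end

section
/- Fix n ≥ 3 and define φₙ(m) = 2^m − 1 for 1 ≤ m ≤ n−1 and φₙ(m) = ∑_{j=1}^{n-1} φₙ(m−j) for m ≥ n. Then lim_{m→∞} (log ∑_{d|m} μ(m/d) φₙ(d))/m = log αₙ, where αₙ is the unique positive root of x^{n-1} − ∑_{k=0}^{n-2} x^k and μ is the Möbius function. -/
open Filter Finset

private theorem div_le_div_of_nonneg_right_aux {a b c : ℝ} (h : a ≤ b) (hc : 0 < c) :
    a / c ≤ b / c := by gcongr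


theorem stmt_13 (n : ℕ) (hn : 3 ≤ n) (φ : ℕ → ℤ)
    (hinit : ∀ m : ℕ, 1 ≤ m → m ≤ n - 1 → φ m = 2 ^ m - 1)
    (hrec : ∀ m : ℕ, n ≤ m → φ m = ∑ j ∈ Finset.Icc 1 (n - 1), φ (m - j))
    (α : ℝ) (hα : 0 < α)
    (hαroot : α ^ (n - 1) - ∑ k ∈ Finset.range (n - 1), α ^ k = 0) :
    Filter.Tendsto
      (fun m : ℕ => Real.log
        ((∑ d ∈ m.divisors, (ArithmeticFunction.moebius (m / d)) * φ d : ℤ)) / m)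
      Filter.atTop (nhds (Real.log α)) := by
  have hn1 : 2 ≤ n - 1 := by omega
  have hroot' : α ^ (n - 1) = ∑ k ∈ Finset.range (n - 1), α ^ k := by linarith [hαroot]
  -- α > 1
  have hα1 : 1 < α := by
    by_contra h
    push_neg at h
    have hsum : (1 : ℝ) + α ≤ ∑ k ∈ Finset.range (n - 1), α ^ k := by
      have hsub : ∑ k ∈ Finset.range 2, α ^ k ≤ ∑ k ∈ Finset.range (n - 1), α ^ k := by
        apply Finset.sum_le_sum_of_subset_of_nonneg (Finset.range_subset_range.mpr hn1)
        intro i _ _; positivity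
      simpa [Finset.sum_range_succ] using hsub
    have hle : α ^ (n - 1) ≤ 1 := pow_le_one₀ hα.le h
    linarith
  -- geometric identity
  have hgeom : ∀ m : ℕ, n ≤ m → ∑ j ∈ Finset.Icc 1 (n - 1), α ^ (m - j) = α ^ m := by
    intro m hm
    have h1 : ∀ j ∈ Finset.Icc 1 (n - 1), α ^ (m - j) = α ^ (m - (n - 1)) * α ^ (n - 1 - j) := by
      intro j hj
      rw [Finset.mem_Icc] at hj
      rw [← pow_add]
      congr 1; omega
    rw [Finset.sum_congr rfl h1, ← Finset.mul_sum]
    have h2 : ∑ j ∈ Finset.Icc 1 (n - 1), α ^ (n - 1 - j)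
        = ∑ k ∈ Finset.range (n - 1), α ^ k := by
      refine Finset.sum_nbij' (fun j => n - 1 - j) (fun k => n - 1 - k) ?_ ?_ ?_ ?_ ?_ <;>
        intro a ha <;> simp only [Finset.mem_Icc, Finset.mem_range] at * <;>
        first
          | omega
          | (congr 1; omega)
    rw [h2, ← hroot', ← pow_add]
    congr 1; omega
  set c1 : ℝ := (α ^ (n - 1))⁻¹ with hc1def
  set c2 : ℝ := 2 ^ n with hc2def
  have hc1pos : 0 < c1 := by positivity
  have hc2pos : 0 < c2 := by positivity
  have hc1le1 : c1 ≤ 1 := by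
    rw [hc1def]
    exact inv_le_one_of_one_le₀ (one_le_pow₀ hα1.le)
  have hc2ge1 : 1 ≤ c2 := one_le_pow₀ (by norm_num)
  -- growth bounds
  have hbound : ∀ m : ℕ, 1 ≤ m → c1 * α ^ m ≤ (φ m : ℝ) ∧ (φ m : ℝ) ≤ c2 * α ^ m := by
    intro m
    induction m using Nat.strong_induction_on with
    | _ m ih =>
      intro hm1
      by_cases hcase : m ≤ n - 1
      · have hφ : (φ m : ℝ) = 2 ^ m - 1 := by rw [hinit m hm1 hcase]; push_cast; ring
        have h2m : (2 : ℝ) ≤ 2 ^ m := by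
          calc (2 : ℝ) = 2 ^ 1 := by norm_num
          _ ≤ 2 ^ m := pow_le_pow_right₀ one_le_two hm1
        have h2n : (2 : ℝ) ^ m ≤ c2 := by
          rw [hc2def]; exact pow_le_pow_right₀ one_le_two (by omega)
        have hαm1 : 1 ≤ α ^ m := one_le_pow₀ hα1.le
        constructor
        · have hle : α ^ m ≤ α ^ (n - 1) := pow_le_pow_right₀ hα1.le hcase
          have : c1 * α ^ m ≤ 1 := by
            rw [hc1def, inv_mul_le_iff₀ (by positivity), mul_one]
            exact hle
          rw [hφ]; linarith
        · rw [hφ]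
          nlinarith
      · have hm : n ≤ m := by omega
        have hcast : (φ m : ℝ) = ∑ j ∈ Finset.Icc 1 (n - 1), (φ (m - j) : ℝ) := by
          rw [hrec m hm]; push_cast; rfl
        constructor
        · rw [hcast, ← hgeom m hm, Finset.mul_sum]
          apply Finset.sum_le_sum
          intro j hj
          rw [Finset.mem_Icc] at hj
          exact (ih (m - j) (by omega) (by omega)).1
        · rw [hcast, ← hgeom m hm, Finset.mul_sum]
          apply Finset.sum_le_sum
          intro j hj
          rw [Finset.mem_Icc] at hj
          exact (ih (m - j) (by omega) (by omega)).2
  -- split off the d = m term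
  have hsplit : ∀ m : ℕ, 1 ≤ m →
      ((∑ d ∈ m.divisors, (ArithmeticFunction.moebius (m / d)) * φ d : ℤ) : ℝ)
        = (φ m : ℝ) + ∑ d ∈ m.properDivisors,
            ((ArithmeticFunction.moebius (m / d) : ℤ) : ℝ) * (φ d : ℝ) := by
    intro m hm
    rw [← Nat.insert_self_properDivisors (by omega : m ≠ 0),
      Finset.sum_insert Nat.self_notMem_properDivisors]
    push_cast
    rw [Nat.div_self (by omega : 0 < m)]
    simp [ArithmeticFunction.moebius_apply_one]
  -- bound the proper-divisors part
  have hproper : ∀ m : ℕ, 1 ≤ m →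
      |∑ d ∈ m.properDivisors, ((ArithmeticFunction.moebius (m / d) : ℤ) : ℝ) * (φ d : ℝ)|
        ≤ c2 * m * α ^ (m / 2) := by
    intro m hm
    have hterm : ∀ d ∈ m.properDivisors,
        |((ArithmeticFunction.moebius (m / d) : ℤ) : ℝ) * (φ d : ℝ)| ≤ c2 * α ^ (m / 2) := by
      intro d hd
      rw [Nat.mem_properDivisors] at hd
      have hd1 : 1 ≤ d := Nat.pos_of_dvd_of_pos hd.1 (by omega)
      have hd2 : d ≤ m / 2 := by
        obtain ⟨k, rfl⟩ := hd.1
        have hk2 : 2 ≤ k := by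
          rcases Nat.lt_or_ge k 2 with h | h
          · interval_cases k <;> omega
          · exact h
        have : d * 2 ≤ d * k := Nat.mul_le_mul_left d hk2
        omega
      have hb := hbound d hd1
      have hφpos : 0 ≤ (φ d : ℝ) := le_trans (by positivity) hb.1
      have hμ : |((ArithmeticFunction.moebius (m / d) : ℤ) : ℝ)| ≤ 1 := by
        have h := ArithmeticFunction.abs_moebius_le_one (n := m / d)
        calc |((ArithmeticFunction.moebius (m / d) : ℤ) : ℝ)|
            = ((|ArithmeticFunction.moebius (m / d)| : ℤ) : ℝ) := by push_cast; rfl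
        _ ≤ 1 := by exact_mod_cast h
      have hφd : |(φ d : ℝ)| ≤ c2 * α ^ (m / 2) := by
        rw [abs_of_nonneg hφpos]
        calc (φ d : ℝ) ≤ c2 * α ^ d := hb.2
        _ ≤ c2 * α ^ (m / 2) := by
            gcongr
            · exact hα1.le
      calc |((ArithmeticFunction.moebius (m / d) : ℤ) : ℝ) * (φ d : ℝ)|
          = |((ArithmeticFunction.moebius (m / d) : ℤ) : ℝ)| * |(φ d : ℝ)| := abs_mul _ _
      _ ≤ 1 * (c2 * α ^ (m / 2)) := by
          apply mul_le_mul hμ hφd (abs_nonneg _) zero_le_one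
      _ = c2 * α ^ (m / 2) := one_mul _
    calc |∑ d ∈ m.properDivisors, ((ArithmeticFunction.moebius (m / d) : ℤ) : ℝ) * (φ d : ℝ)|
        ≤ ∑ d ∈ m.properDivisors,
            |((ArithmeticFunction.moebius (m / d) : ℤ) : ℝ) * (φ d : ℝ)| :=
          Finset.abs_sum_le_sum_abs _ _
    _ ≤ ∑ _d ∈ m.properDivisors, c2 * α ^ (m / 2) := Finset.sum_le_sum hterm
    _ = (m.properDivisors.card : ℝ) * (c2 * α ^ (m / 2)) := by
          rw [Finset.sum_const, nsmul_eq_mul]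
    _ ≤ (m : ℝ) * (c2 * α ^ (m / 2)) := by
          have hcard : m.properDivisors.card ≤ m := by
            have hsub : m.properDivisors ⊆ Finset.range m := by
              intro d hd
              rw [Finset.mem_range]
              exact (Nat.mem_properDivisors.mp hd).2
            simpa using Finset.card_le_card hsub
          have : (m.properDivisors.card : ℝ) ≤ (m : ℝ) := by exact_mod_cast hcard
          have hpos : (0:ℝ) ≤ c2 * α ^ (m / 2) := by positivity
          nlinarith
    _ = c2 * m * α ^ (m / 2) := by ring
  -- eventual domination of the error term
  have hβ0 : (0:ℝ) ≤ α⁻¹ := by positivity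
  have hβ1 : α⁻¹ < 1 := inv_lt_one_of_one_lt₀ hα1
  have htend := tendsto_self_mul_const_pow_of_lt_one hβ0 hβ1
  have hev : ∀ᶠ k : ℕ in atTop, (k : ℝ) * α⁻¹ ^ k < c1 / (8 * c2) :=
    htend.eventually (gt_mem_nhds (by positivity))
  obtain ⟨K, hK⟩ := eventually_atTop.mp hev
  set N : ℕ := max (max (2 * K + 2) n) 4 with hNdef
  have hmain : ∀ m : ℕ, N ≤ m → c2 * m * α ^ (m / 2) ≤ c1 / 2 * α ^ m := by
    intro m hmN
    have hmN' : 2 * K + 2 ≤ m ∧ n ≤ m ∧ 4 ≤ m := by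
      refine ⟨le_trans (le_trans (le_max_left _ _) (le_max_left _ _)) hmN,
        le_trans (le_trans (le_max_right _ _) (le_max_left _ _)) hmN,
        le_trans (le_max_right _ _) hmN⟩
    set k : ℕ := m / 2 with hkdef
    have hkK : K ≤ k := by omega
    have hk1 : 1 ≤ k := by omega
    have hAk : (0:ℝ) < α ^ k := by positivity
    have hk := hK k hkK
    have hkA : (k : ℝ) < c1 / (8 * c2) * α ^ k := by
      rw [inv_pow] at hk
      calc (k : ℝ) = (k : ℝ) * (α ^ k)⁻¹ * α ^ k := by field_simp
      _ < c1 / (8 * c2) * α ^ k := by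
          apply mul_lt_mul_of_pos_right hk hAk
    have hm3k : (m : ℝ) ≤ 3 * k := by
      have : m ≤ 3 * k := by omega
      exact_mod_cast this
    have h2km : α ^ k * α ^ k ≤ α ^ m := by
      rw [← pow_add]
      exact pow_le_pow_right₀ hα1.le (by omega)
    have h1 : c2 * (k : ℝ) ≤ c1 / 8 * α ^ k := by
      have h := mul_le_mul_of_nonneg_left hkA.le hc2pos.le
      have heq : c2 * (c1 / (8 * c2) * α ^ k) = c1 / 8 * α ^ k := by
        field_simp
      linarith [heq ▸ h]
    have h2 : c2 * (m : ℝ) ≤ c2 * (3 * (k : ℝ)) := mul_le_mul_of_nonneg_left hm3k hc2pos.le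
    have hstep : c2 * (m : ℝ) ≤ c1 / 2 * α ^ k := by
      nlinarith [hAk, hc1pos]
    calc c2 * m * α ^ k ≤ c1 / 2 * α ^ k * α ^ k :=
      mul_le_mul_of_nonneg_right hstep hAk.le
    _ = c1 / 2 * (α ^ k * α ^ k) := by ring
    _ ≤ c1 / 2 * α ^ m := mul_le_mul_of_nonneg_left h2km (by positivity)
  -- sandwich for Φ
  have hsandwich : ∀ m : ℕ, N ≤ m →
      c1 / 2 * α ^ m
        ≤ ((∑ d ∈ m.divisors, (ArithmeticFunction.moebius (m / d)) * φ d : ℤ) : ℝ) ∧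
      ((∑ d ∈ m.divisors, (ArithmeticFunction.moebius (m / d)) * φ d : ℤ) : ℝ)
        ≤ 2 * c2 * α ^ m := by
    intro m hmN
    have hm1 : 1 ≤ m := by
      have : 4 ≤ N := le_max_right _ _
      omega
    have hs := hsplit m hm1
    have hp := hproper m hm1
    have hb := hbound m hm1
    have herr := hmain m hmN
    have hpa := abs_le.mp hp
    constructor
    · rw [hs]; nlinarith [hb.1]
    · rw [hs]
      have hc12 : c1 / 2 ≤ c2 := by linarith
      nlinarith [hb.2]
  -- final squeeze
  have hNα : ∀ m : ℕ, N ≤ m →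
      Real.log (c1 / 2) / m + Real.log α
        ≤ Real.log ((∑ d ∈ m.divisors, (ArithmeticFunction.moebius (m / d)) * φ d : ℤ) : ℝ) / m
      ∧ Real.log ((∑ d ∈ m.divisors, (ArithmeticFunction.moebius (m / d)) * φ d : ℤ) : ℝ) / m
        ≤ Real.log (2 * c2) / m + Real.log α := by
    intro m hmN
    have hm1 : 1 ≤ m := by
      have : 4 ≤ N := le_max_right _ _
      omega
    have hmpos : (0:ℝ) < m := by exact_mod_cast hm1
    obtain ⟨hlow, hhigh⟩ := hsandwich m hmN
    set Φm : ℝ := ((∑ d ∈ m.divisors, (ArithmeticFunction.moebius (m / d)) * φ d : ℤ) : ℝ)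
      with hΦdef
    have hΦpos : (0:ℝ) < Φm := lt_of_lt_of_le (by positivity) hlow
    have hloglow : Real.log (c1 / 2) + m * Real.log α ≤ Real.log Φm := by
      have h := Real.log_le_log (by positivity : (0:ℝ) < c1 / 2 * α ^ m) hlow
      rwa [Real.log_mul (by positivity) (by positivity), Real.log_pow] at h
    have hloghigh : Real.log Φm ≤ Real.log (2 * c2) + m * Real.log α := by
      have h := Real.log_le_log hΦpos hhigh
      rwa [Real.log_mul (by positivity) (by positivity), Real.log_pow] at h
    have heq1 : Real.log (c1 / 2) / m + Real.log α
        = (Real.log (c1 / 2) + m * Real.log α) / m := by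
      field_simp
    have heq2 : Real.log (2 * c2) / m + Real.log α
        = (Real.log (2 * c2) + m * Real.log α) / m := by
      field_simp
    constructor
    · rw [heq1]
      exact div_le_div_of_nonneg_right_aux hloglow hmpos
    · rw [heq2]
      exact div_le_div_of_nonneg_right_aux hloghigh hmpos
  have hlowt : Tendsto (fun m : ℕ => Real.log (c1 / 2) / m + Real.log α) atTop
      (nhds (Real.log α)) := by
    have h2 : Tendsto (fun _ : ℕ => Real.log α) atTop (nhds (Real.log α)) :=
      tendsto_const_nhds
    have := (tendsto_const_div_atTop_nhds_zero_nat (Real.log (c1 / 2))).add h2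
    simpa only [zero_add] using this
  have hhight : Tendsto (fun m : ℕ => Real.log (2 * c2) / m + Real.log α) atTop
      (nhds (Real.log α)) := by
    have h2 : Tendsto (fun _ : ℕ => Real.log α) atTop (nhds (Real.log α)) :=
      tendsto_const_nhds
    have := (tendsto_const_div_atTop_nhds_zero_nat (Real.log (2 * c2))).add h2
    simpa only [zero_add] using this
  refine tendsto_of_tendsto_of_tendsto_of_le_of_le' hlowt hhight ?_ ?_
  · filter_upwards [eventually_ge_atTop N] with m hm
    exact (hNα m hm).1
  · filter_upwards [eventually_ge_atTop N] with m hm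
    exact (hNα m hm).2
end
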